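/- arXiv:math/0501364 — 14 statements merged into one kernel-verified Lean document; each statement's English description precedes it below -/
import Mathlib

section
/- Every finite lattice L admits an embedding into a finite, atomistic, biatomic lattice M that preserves joins, meets, zero, one, and the property of being an atom. -/
def IsBiatomicLat (L : Type*) [Lattice L] [OrderBot L] : Prop :=
  (∀ x : L, x ≠ ⊥ → ∃ p : L, IsAtom p ∧ p ≤ x) ∧
  ∀ p a b : L, IsAtom p → a ≠ ⊥ → b ≠ ⊥ → p ≤ a ⊔ b →
    ∃ x y : L, IsAtom x ∧ x ≤ a ∧ IsAtom y ∧ y ≤ b ∧ p ≤ x ⊔ y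

/-- Atomistic: every element is a join of atoms. -/
def AtomisticLat (L : Type*) [Lattice L] [OrderBot L] : Prop :=
  ∀ x : L, ∃ s : Set L, (∀ p ∈ s, IsAtom p) ∧ IsLUB s x

set_option linter.unusedSectionVars false
set_option linter.unusedVariables false

section BiatomicExt

variable {L : Type} [Lattice L] [Fintype L] [BoundedOrder L]

/-- Closed sets: empty, singletons of nonzero elements, or principal ideals minus bottom. -/
def Cld (S : Set L) : Prop :=
  S = ∅ ∨ (∃ y : L, y ≠ ⊥ ∧ S = {y}) ∨ ∃ v : L, v ≠ ⊥ ∧ S = {z : L | z ≠ ⊥ ∧ z ≤ v}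

lemma Cld.ne_bot {S : Set L} (h : Cld S) {z : L} (hz : z ∈ S) : z ≠ ⊥ := by
  rcases h with rfl | ⟨y, hy, rfl⟩ | ⟨v, hv, rfl⟩
  · exact absurd hz (Set.notMem_empty z)
  · rwa [Set.mem_singleton_iff.mp hz]
  · exact hz.1

lemma cld_of_subsingleton {S : Set L} (h : S.Subsingleton) (h2 : ∀ z ∈ S, z ≠ ⊥) : Cld S := by
  rcases Set.eq_empty_or_nonempty S with rfl | ⟨y, hy⟩
  · exact Or.inl rfl
  · exact Or.inr (Or.inl ⟨y, h2 y hy, h.eq_singleton_of_mem hy⟩)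

lemma Cld.inter {S T : Set L} (hS : Cld S) (hT : Cld T) : Cld (S ∩ T) := by
  have hsub : ∀ z ∈ S ∩ T, z ≠ ⊥ := fun z hz => hS.ne_bot hz.1
  rcases hS with rfl | ⟨y, hy, rfl⟩ | ⟨v, hv, rfl⟩
  · rw [Set.empty_inter]; exact Or.inl rfl
  · exact cld_of_subsingleton (Set.subsingleton_singleton.anti Set.inter_subset_left) hsub
  · rcases hT with rfl | ⟨y, hy, rfl⟩ | ⟨w, hw, rfl⟩
    · rw [Set.inter_empty]; exact Or.inl rfl
    · exact cld_of_subsingleton (Set.subsingleton_singleton.anti Set.inter_subset_right) hsub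
    · by_cases hvw : v ⊓ w = ⊥
      · refine Or.inl ?_
        ext z
        constructor
        · rintro ⟨⟨hz1, hz2⟩, ⟨_, hz3⟩⟩
          exact absurd (le_bot_iff.mp (hvw ▸ le_inf hz2 hz3)) hz1
        · exact fun h => absurd h (Set.notMem_empty z)
      · refine Or.inr (Or.inr ⟨v ⊓ w, hvw, ?_⟩)
        ext z
        simp only [Set.mem_inter_iff, Set.mem_setOf_eq, le_inf_iff]
        tauto

open Classical in
noncomputable def sSupL (U : Set L) : L :=
  Finset.univ.sup fun z => if z ∈ U then z else ⊥

lemma le_sSupL {U : Set L} {z : L} (hz : z ∈ U) : z ≤ sSupL U := by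
  classical
  have := Finset.le_sup (f := fun z => if z ∈ U then z else (⊥ : L)) (Finset.mem_univ z)
  simpa [sSupL, hz] using this

lemma sSupL_le {U : Set L} {w : L} (h : ∀ z ∈ U, z ≤ w) : sSupL U ≤ w := by
  classical
  refine Finset.sup_le fun z _ => ?_
  by_cases hz : z ∈ U <;> simp [hz]
  exact h z hz

open Classical in
noncomputable def clo (U : Set L) : Set L :=
  if U.Subsingleton then U else {z : L | z ≠ ⊥ ∧ z ≤ sSupL U}

lemma subset_clo {U : Set L} (h : ∀ z ∈ U, z ≠ ⊥) : U ⊆ clo U := by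
  intro z hz
  unfold clo
  split_ifs with hs
  · exact hz
  · exact ⟨h z hz, le_sSupL hz⟩

lemma clo_cld {U : Set L} (h : ∀ z ∈ U, z ≠ ⊥) : Cld (clo U) := by
  unfold clo
  split_ifs with hs
  · exact cld_of_subsingleton hs h
  · obtain ⟨a, ha, b, hb, hab⟩ := Set.not_subsingleton_iff.mp hs
    refine Or.inr (Or.inr ⟨sSupL U, fun hbot => h a ha (le_bot_iff.mp (hbot ▸ le_sSupL ha)), rfl⟩)

lemma clo_min {U W : Set L} (hW : Cld W) (hUW : U ⊆ W) : clo U ⊆ W := by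
  unfold clo
  split_ifs with hs
  · exact hUW
  · obtain ⟨a, ha, b, hb, hab⟩ := Set.not_subsingleton_iff.mp hs
    rcases hW with rfl | ⟨y, hy, rfl⟩ | ⟨v, hv, rfl⟩
    · exact absurd (hUW ha) (Set.notMem_empty a)
    · exact absurd ((Set.mem_singleton_iff.mp (hUW ha)).trans
        (Set.mem_singleton_iff.mp (hUW hb)).symm) hab
    · intro z hz
      exact ⟨hz.1, hz.2.trans (sSupL_le fun u hu => (hUW hu).2)⟩

lemma clo_self {S : Set L} (hS : Cld S) : clo S = S :=
  (clo_min hS subset_rfl).antisymm (subset_clo fun z hz => hS.ne_bot hz)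

lemma Cld.peak {S : Set L} (hS : Cld S) (hne : S.Nonempty) :
    ∃ m ∈ S, (∀ z ∈ S, z ≤ m) ∧ (S = {m} ∨ S = {z : L | z ≠ ⊥ ∧ z ≤ m}) := by
  rcases hS with rfl | ⟨y, hy, rfl⟩ | ⟨v, hv, rfl⟩
  · exact absurd hne (by simp)
  · exact ⟨y, rfl, fun z hz => le_of_eq (Set.mem_singleton_iff.mp hz), Or.inl rfl⟩
  · exact ⟨v, ⟨hv, le_rfl⟩, fun z hz => hz.2, Or.inr rfl⟩

abbrev Mt (L : Type) [Lattice L] [Fintype L] [BoundedOrder L] : Type := {S : Set L // Cld S}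

noncomputable instance : Lattice (Mt L) :=
  { (inferInstance : PartialOrder {S : Set L // Cld S}) with
    sup := fun A B => ⟨clo (A.1 ∪ B.1),
      clo_cld fun z hz => hz.elim (fun h => A.2.ne_bot h) (fun h => B.2.ne_bot h)⟩
    inf := fun A B => ⟨A.1 ∩ B.1, A.2.inter B.2⟩
    le_sup_left := fun A B =>
      Set.subset_union_left.trans (subset_clo fun z hz =>
        hz.elim (fun h => A.2.ne_bot h) (fun h => B.2.ne_bot h))
    le_sup_right := fun A B =>
      Set.subset_union_right.trans (subset_clo fun z hz =>
        hz.elim (fun h => A.2.ne_bot h) (fun h => B.2.ne_bot h))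
    sup_le := fun A B C hA hB => clo_min C.2 (Set.union_subset hA hB)
    inf_le_left := fun A B => Set.inter_subset_left
    inf_le_right := fun A B => Set.inter_subset_right
    le_inf := fun A B C hB hC => Set.subset_inter hB hC }

lemma topCld : Cld {z : L | z ≠ ⊥} := by
  by_cases h : (⊤ : L) = ⊥
  · refine Or.inl ?_
    ext z
    simp only [Set.mem_setOf_eq, Set.mem_empty_iff_false, iff_false, not_not]
    exact le_bot_iff.mp (h ▸ le_top)
  · exact Or.inr (Or.inr ⟨⊤, h, by ext z; simp [le_top]⟩)

noncomputable instance : BoundedOrder (Mt L) where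
  top := ⟨{z : L | z ≠ ⊥}, topCld⟩
  le_top := fun A z hz => A.2.ne_bot hz
  bot := ⟨∅, Or.inl rfl⟩
  bot_le := fun A => Set.empty_subset _

instance : Finite (Mt L) := by unfold Mt; infer_instance

noncomputable instance : Fintype (Mt L) := Fintype.ofFinite _

lemma bot_val : ((⊥ : Mt L) : Set L) = ∅ := rfl
lemma top_val : ((⊤ : Mt L) : Set L) = {z : L | z ≠ ⊥} := rfl
lemma sup_val (A B : Mt L) : ((A ⊔ B : Mt L) : Set L) = clo (A.1 ∪ B.1) := rfl
lemma inf_val (A B : Mt L) : ((A ⊓ B : Mt L) : Set L) = A.1 ∩ B.1 := rfl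
lemma le_iff {A B : Mt L} : A ≤ B ↔ A.1 ⊆ B.1 := Iff.rfl

lemma ne_bot_iff {A : Mt L} : A ≠ ⊥ ↔ A.1.Nonempty := by
  rw [Set.nonempty_iff_ne_empty, ← bot_val, ne_eq, ne_eq, Subtype.ext_iff]

lemma isAtom_iff {A : Mt L} : IsAtom A ↔ ∃ t : L, t ≠ ⊥ ∧ A.1 = {t} := by
  constructor
  · rintro ⟨hA, hmin⟩
    obtain ⟨t, ht⟩ := ne_bot_iff.mp hA
    have htb : t ≠ ⊥ := A.2.ne_bot ht
    set B : Mt L := ⟨{t}, Or.inr (Or.inl ⟨t, htb, rfl⟩)⟩ with hB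
    have hBA : B ≤ A := le_iff.mpr (Set.singleton_subset_iff.mpr ht)
    by_cases hE : B = A
    · exact ⟨t, htb, by rw [← hE]⟩
    · have := hmin B (lt_of_le_of_ne hBA hE)
      exact absurd (congrArg Subtype.val this) (by simp [hB, bot_val])
  · rintro ⟨t, ht, hAt⟩
    constructor
    · rw [ne_eq, Subtype.ext_iff, bot_val, hAt]
      simp
    · intro B hB
      have hsub : B.1 ⊆ {t} := hAt ▸ le_iff.mp hB.le
      rcases Set.subset_singleton_iff_eq.mp hsub with h | h
      · exact Subtype.ext h
      · exact absurd (Subtype.ext (h.trans hAt.symm)) hB.ne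

noncomputable def fEmb (x : L) : Mt L :=
  ⟨{z : L | z ≠ ⊥ ∧ z ≤ x}, by
    by_cases hx : x = ⊥
    · refine Or.inl ?_
      ext z
      simp [hx, le_bot_iff]
    · exact Or.inr (Or.inr ⟨x, hx, rfl⟩)⟩

lemma fEmb_val (x : L) : (fEmb x : Set L) = {z : L | z ≠ ⊥ ∧ z ≤ x} := rfl

lemma fEmb_inj : Function.Injective (fEmb (L := L)) := by
  intro x y h
  have h' : {z : L | z ≠ ⊥ ∧ z ≤ x} = {z : L | z ≠ ⊥ ∧ z ≤ y} := congrArg Subtype.val h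
  have hxy : ∀ a b : L, {z : L | z ≠ ⊥ ∧ z ≤ a} = {z : L | z ≠ ⊥ ∧ z ≤ b} → a ≤ b := by
    intro a b hab
    by_cases ha : a = ⊥
    · exact ha ▸ bot_le
    · have ha2 : a ∈ {z : L | z ≠ ⊥ ∧ z ≤ a} := ⟨ha, le_rfl⟩
      rw [hab] at ha2
      exact ha2.2
  exact le_antisymm (hxy x y h') (hxy y x h'.symm)

lemma fEmb_sup (x y : L) : fEmb (x ⊔ y) = fEmb x ⊔ fEmb y := by
  apply Subtype.ext
  rw [sup_val, fEmb_val, fEmb_val, fEmb_val]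
  by_cases hx : x = ⊥
  · have : {z : L | z ≠ ⊥ ∧ z ≤ x} = ∅ := by ext z; simp [hx, le_bot_iff]
    rw [this, Set.empty_union, hx, bot_sup_eq, ← fEmb_val, clo_self (fEmb y).2]
  by_cases hy : y = ⊥
  · have : {z : L | z ≠ ⊥ ∧ z ≤ y} = ∅ := by ext z; simp [hy, le_bot_iff]
    rw [this, Set.union_empty, hy, sup_bot_eq, ← fEmb_val, clo_self (fEmb x).2]
  by_cases hxy : x = y
  · subst hxy
    rw [Set.union_self, sup_idem, ← fEmb_val, clo_self (fEmb x).2]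
  · apply le_antisymm
    · intro z hz
      unfold clo
      have hns : ¬ ({z : L | z ≠ ⊥ ∧ z ≤ x} ∪ {z : L | z ≠ ⊥ ∧ z ≤ y}).Subsingleton := by
        rw [Set.not_subsingleton_iff]
        exact ⟨x, Or.inl ⟨hx, le_rfl⟩, y, Or.inr ⟨hy, le_rfl⟩, hxy⟩
      rw [if_neg hns]
      refine ⟨hz.1, hz.2.trans (sup_le ?_ ?_)⟩
      · exact le_sSupL (Or.inl ⟨hx, le_rfl⟩)
      · exact le_sSupL (Or.inr ⟨hy, le_rfl⟩)
    · refine clo_min (fEmb (x ⊔ y)).2 ?_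
      rintro z (⟨h1, h2⟩ | ⟨h1, h2⟩)
      · exact ⟨h1, h2.trans le_sup_left⟩
      · exact ⟨h1, h2.trans le_sup_right⟩

lemma fEmb_inf (x y : L) : fEmb (x ⊓ y) = fEmb x ⊓ fEmb y := by
  apply Subtype.ext
  rw [inf_val, fEmb_val, fEmb_val, fEmb_val]
  ext z
  simp only [Set.mem_setOf_eq, Set.mem_inter_iff, le_inf_iff]
  tauto

lemma fEmb_bot : fEmb (⊥ : L) = ⊥ := by
  apply Subtype.ext
  rw [fEmb_val, bot_val]
  ext z
  simp [le_bot_iff]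

lemma fEmb_top : fEmb (⊤ : L) = ⊤ := by
  apply Subtype.ext
  rw [fEmb_val, top_val]
  ext z
  simp [le_top]

lemma fEmb_atom (x : L) : IsAtom (fEmb x) ↔ IsAtom x := by
  rw [isAtom_iff]
  constructor
  · rintro ⟨t, ht, hset⟩
    have hx : x ≠ ⊥ := by
      intro h
      have : ({} : Set L) = {t} := by
        rw [← hset, fEmb_val]; ext z; simp [h, le_bot_iff]
      exact absurd this.symm (Set.singleton_ne_empty t)
    have hxt : x = t := by
      have : x ∈ ({t} : Set L) := hset ▸ (⟨hx, le_rfl⟩ : x ∈ (fEmb x : Set L))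
      exact this
    refine ⟨hx, fun b hb => ?_⟩
    by_contra hbne
    have : b ∈ ({t} : Set L) := hset ▸ (⟨hbne, hb.le⟩ : b ∈ (fEmb x : Set L))
    exact absurd (hxt ▸ this : b = x) hb.ne
  · intro hx
    refine ⟨x, hx.1, ?_⟩
    rw [fEmb_val]
    ext z
    simp only [Set.mem_setOf_eq, Set.mem_singleton_iff]
    constructor
    · rintro ⟨h1, h2⟩
      rcases lt_or_eq_of_le h2 with h | h
      · exact absurd (hx.2 z h) h1
      · exact h
    · rintro rfl
      exact ⟨hx.1, le_rfl⟩

lemma Mt_atomistic : AtomisticLat (Mt L) := by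
  intro A
  refine ⟨{B : Mt L | IsAtom B ∧ B ≤ A}, fun p hp => hp.1, ?_, ?_⟩
  · exact fun B hB => hB.2
  · intro W hW
    intro t ht
    have htb : t ≠ ⊥ := A.2.ne_bot ht
    have : (⟨{t}, Or.inr (Or.inl ⟨t, htb, rfl⟩)⟩ : Mt L) ≤ W := by
      refine hW ⟨isAtom_iff.mpr ⟨t, htb, rfl⟩, ?_⟩
      exact le_iff.mpr (Set.singleton_subset_iff.mpr ht)
    exact this (Set.mem_singleton t)

def sgl (u : L) (hu : u ≠ ⊥) : Mt L := ⟨{u}, Or.inr (Or.inl ⟨u, hu, rfl⟩)⟩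

lemma sgl_val (u : L) (hu : u ≠ ⊥) : (sgl u hu).1 = {u} := rfl

lemma sgl_atom (u : L) (hu : u ≠ ⊥) : IsAtom (sgl u hu) := isAtom_iff.mpr ⟨u, hu, rfl⟩

lemma sgl_le (u : L) (hu : u ≠ ⊥) (A : Mt L) (h : u ∈ A.1) : sgl u hu ≤ A :=
  le_iff.mpr (by rw [sgl_val]; exact Set.singleton_subset_iff.mpr h)

lemma Mt_biatomic : IsBiatomicLat (Mt L) := by
  classical
  constructor
  · intro A hA
    obtain ⟨t, ht⟩ := ne_bot_iff.mp hA
    have htb : t ≠ ⊥ := A.2.ne_bot ht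
    exact ⟨sgl t htb, sgl_atom t htb, sgl_le t htb A ht⟩
  · intro P A B hP hA hB hle
    obtain ⟨t, htb, hPt⟩ := isAtom_iff.mp hP
    have htAB : t ∈ clo (A.1 ∪ B.1) := by
      have := le_iff.mp hle
      rw [hPt] at this
      exact this (Set.mem_singleton t)
    have finish : ∀ (C D : Mt L), t ∈ C.1 → D.1.Nonempty →
        (∃ x y : Mt L, IsAtom x ∧ x ≤ C ∧ IsAtom y ∧ y ≤ D ∧ P ≤ x ⊔ y) := by
      rintro C D htC ⟨d, hd⟩
      have hdb : d ≠ ⊥ := D.2.ne_bot hd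
      refine ⟨sgl t htb, sgl d hdb, sgl_atom t htb, sgl_le t htb C htC,
        sgl_atom d hdb, sgl_le d hdb D hd, ?_⟩
      rw [le_iff, hPt, sup_val, sgl_val, sgl_val]
      refine Set.singleton_subset_iff.mpr ?_
      refine subset_clo (fun z hz => ?_) (Or.inl rfl)
      rcases hz with h | h
      · exact (Set.mem_singleton_iff.mp h) ▸ htb
      · exact (Set.mem_singleton_iff.mp h) ▸ hdb
    by_cases htA : t ∈ A.1
    · exact finish A B htA (ne_bot_iff.mp hB)
    by_cases htB : t ∈ B.1
    · obtain ⟨x, y, hx1, hx2, hy1, hy2, hxy⟩ := finish B A htB (ne_bot_iff.mp hA)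
      exact ⟨y, x, hy1, hy2, hx1, hx2, hxy.trans (le_of_eq (sup_comm x y))⟩
    · obtain ⟨a, haA, haM, haS⟩ := A.2.peak (ne_bot_iff.mp hA)
      obtain ⟨b, hbB, hbM, hbS⟩ := B.2.peak (ne_bot_iff.mp hB)
      have hab : a ≠ ⊥ := A.2.ne_bot haA
      have hbb : b ≠ ⊥ := B.2.ne_bot hbB
      have hns : ¬ (A.1 ∪ B.1).Subsingleton := by
        intro hs
        rw [clo, if_pos hs] at htAB
        exact htAB.elim htA htB
      rw [clo, if_neg hns] at htAB
      have htle : t ≤ a ⊔ b := htAB.2.trans (sSupL_le (by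
        rintro z (hz | hz)
        · exact (haM z hz).trans le_sup_left
        · exact (hbM z hz).trans le_sup_right))
      have habne : a ≠ b := by
        intro h
        subst h
        have hta : t ≤ a := by simpa using htle
        rcases haS with hS | hS
        · rcases hbS with hS' | hS'
          · refine hns ?_
            rw [hS, hS']
            simp
          · exact htB (by rw [hS']; exact ⟨htb, hta⟩)
        · exact htA (by rw [hS]; exact ⟨htb, hta⟩)
      refine ⟨sgl a hab, sgl b hbb, sgl_atom a hab, sgl_le a hab A haA,
        sgl_atom b hbb, sgl_le b hbb B hbB, ?_⟩
      rw [le_iff, hPt, sup_val, sgl_val, sgl_val]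
      refine Set.singleton_subset_iff.mpr ?_
      have hns2 : ¬ (({a} : Set L) ∪ {b}).Subsingleton := by
        rw [Set.not_subsingleton_iff]
        exact ⟨a, Or.inl rfl, b, Or.inr rfl, habne⟩
      rw [clo, if_neg hns2]
      refine ⟨htb, htle.trans (sup_le ?_ ?_)⟩
      · exact le_sSupL (Or.inl rfl)
      · exact le_sSupL (Or.inr rfl)

end BiatomicExt

theorem stmt_2 (L : Type) [Lattice L] [Fintype L] [BoundedOrder L] :
    ∃ (M : Type) (_ : Lattice M) (_ : Fintype M) (_ : BoundedOrder M)
      (f : L → M),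
      Function.Injective f ∧
      (∀ x y : L, f (x ⊔ y) = f x ⊔ f y) ∧
      (∀ x y : L, f (x ⊓ y) = f x ⊓ f y) ∧
      f ⊥ = ⊥ ∧ f ⊤ = ⊤ ∧
      (∀ x : L, IsAtom (f x) ↔ IsAtom x) ∧
      AtomisticLat M ∧ IsBiatomicLat M := by
  exact ⟨Mt L, inferInstance, inferInstance, inferInstance, fEmb,
    fEmb_inj, fEmb_sup, fEmb_inf, fEmb_bot, fEmb_top, fEmb_atom,
    Mt_atomistic, Mt_biatomic⟩
end

section
/- Let K be a join-semidistributive lattice with zero, let a ∈ K, and let X and Y be finite sets of atoms of K. If a ∨ ⋁X = a ∨ ⋁Y, then a ∨ ⋁X = a ∨ ⋁(X ∩ Y). -/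
/-- A lattice is join-semidistributive if `x ⊔ y = x ⊔ z` implies
`x ⊔ y = x ⊔ (y ⊓ z)`. -/
def JoinSemidistributive (L : Type*) [Lattice L] : Prop :=
  ∀ x y z : L, x ⊔ y = x ⊔ z → x ⊔ y = x ⊔ (y ⊓ z)

/-- In a join-semidistributive lattice, if `u ⊔ q = u ⊔ ⋁X` with `q` an atom
and `X` a finite set of atoms, then `q ≤ u` or `q ∈ X`. -/
lemma atom_le_or_mem {K : Type*} [Lattice K] [OrderBot K] [DecidableEq K]
    (hSD : JoinSemidistributive K) (q : K) (hq : IsAtom q) :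
    ∀ X : Finset K, (∀ p ∈ X, IsAtom p) → ∀ u : K,
      u ⊔ q = u ⊔ X.sup id → q ≤ u ∨ q ∈ X := by
  intro X
  induction X using Finset.induction_on with
  | empty =>
    intro _ u hu
    simp only [Finset.sup_empty, sup_bot_eq] at hu
    exact Or.inl (le_sup_right.trans hu.le)
  | @insert pK s hps ih =>
    intro hat u hu
    by_cases hqp : q = pK
    · right; simp [hqp]
    · have hpat : IsAtom pK := hat pK (Finset.mem_insert_self _ _)
      have hmeet : q ⊓ pK = ⊥ := by
        rcases hq.le_iff.mp (inf_le_left : q ⊓ pK ≤ q) with h0 | h1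
        · exact h0
        · exfalso
          apply hqp
          have hle : q ≤ pK := h1 ▸ inf_le_right
          rcases hpat.le_iff.mp hle with h2 | h3
          · exact absurd h2 hq.1
          · exact h3
      set u' := u ⊔ s.sup id with hu'
      have hsup : (insert pK s).sup id = pK ⊔ s.sup id := by simp
      have h1 : u' ⊔ pK = u ⊔ q := by
        rw [hu, hsup, hu']
        rw [sup_comm pK (s.sup id), ← sup_assoc]
      have h2 : u' ⊔ q = u' ⊔ pK := by
        apply le_antisymm
        · apply sup_le
          · exact le_sup_left
          · exact h1.symm ▸ le_sup_right
        · rw [h1]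
          exact sup_le (le_sup_left.trans le_sup_left) le_sup_right
      have h3 : u' ⊔ q = u' := by
        have := hSD u' q pK h2
        rwa [hmeet, sup_bot_eq] at this
      have hq_le : q ≤ u' := le_sup_right.trans h3.le
      have h4 : u ⊔ q = u ⊔ s.sup id := by
        apply le_antisymm
        · exact sup_le le_sup_left (hq_le.trans (by rw [hu']))
        · rw [hu, hsup]
          exact sup_le le_sup_left (le_sup_right.trans le_sup_right)
      rcases ih (fun p hps => hat p (Finset.mem_insert_of_mem hps)) u h4 with h5 | h5
      · exact Or.inl h5
      · exact Or.inr (Finset.mem_insert_of_mem h5)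

theorem stmt_4 (K : Type*) [Lattice K] [OrderBot K] [DecidableEq K]
    (hSD : JoinSemidistributive K) (a : K) (X Y : Finset K)
    (hX : ∀ p ∈ X, IsAtom p) (hY : ∀ p ∈ Y, IsAtom p)
    (h : a ⊔ X.sup id = a ⊔ Y.sup id) :
    a ⊔ X.sup id = a ⊔ (X ∩ Y).sup id := by
  induction X using Finset.strongInduction with
  | _ X ih =>
  by_cases hXY : ∀ p ∈ X, p ∈ Y
  · have : X ∩ Y = X := by
      apply Finset.inter_eq_left.mpr
      intro p hp; exact hXY p hp
    rw [this]
  · push_neg at hXY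
    obtain ⟨p, hpX, hpY⟩ := hXY
    set u := a ⊔ (X.erase p).sup id with hu
    have hsupX : X.sup id = p ⊔ (X.erase p).sup id := by
      conv_lhs => rw [← Finset.insert_erase hpX]
      simp
    have h1 : u ⊔ p = a ⊔ X.sup id := by
      rw [hu, hsupX, sup_comm p ((X.erase p).sup id), ← sup_assoc]
    have h2 : u ⊔ Y.sup id = a ⊔ Y.sup id := by
      apply le_antisymm
      · apply sup_le _ le_sup_right
        rw [← h]
        exact sup_le le_sup_left
          ((Finset.sup_mono (Finset.erase_subset _ _)).trans le_sup_right)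
      · exact sup_le (le_sup_left.trans le_sup_left) le_sup_right
    have h3 : u ⊔ p = u ⊔ Y.sup id := by rw [h1, h, h2]
    rcases atom_le_or_mem hSD p (hX p hpX) Y hY u h3 with h4 | h4
    · -- p is redundant: a ⊔ X.sup id = u
      have h5 : a ⊔ X.sup id = u := by
        rw [← h1]
        exact le_antisymm (sup_le le_rfl h4) le_sup_left
      have herase : ∀ q ∈ X.erase p, IsAtom q :=
        fun q hq => hX q (Finset.mem_of_mem_erase hq)
      have h6 : a ⊔ (X.erase p).sup id = a ⊔ Y.sup id := by
        rw [← hu, ← h5, h]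
      have h7 := ih (X.erase p) (Finset.erase_ssubset hpX) herase h6
      have hint : X.erase p ∩ Y = X ∩ Y := by
        ext q
        simp only [Finset.mem_inter, Finset.mem_erase]
        constructor
        · rintro ⟨⟨_, hq⟩, hqy⟩; exact ⟨hq, hqy⟩
        · rintro ⟨hq, hqy⟩
          refine ⟨⟨?_, hq⟩, hqy⟩
          rintro rfl; exact hpY hqy
      rw [h5, hu, h7, hint]
    · exact absurd h4 hpY
end

section
/- Let L be a noetherian, biatomic, join-semidistributive lattice with zero and let a ∈ L. Put S = {atoms of L below a} and let T be the set of all joins of finite (possibly empty) subsets of S, ordered as a subposet of L. Then T is a noetherian, biatomic, join-semidistributive, atomistic lattice whose atoms are exactly the elements of S. -/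
def NoetherianOrd (L : Type*) [Preorder L] : Prop :=
  ∀ s : Set L, s.Nonempty → ∃ m ∈ s, ∀ x ∈ s, ¬ m < x

section Aux

variable {L : Type} [Lattice L] [OrderBot L] {S : Set L}

def Pmem (S : Set L) (x : L) : Prop := ∃ F : Finset L, ↑F ⊆ S ∧ x = F.sup id

lemma Pmem_bot : Pmem S ⊥ := ⟨∅, by simp, by simp⟩

lemma Pmem_sup {x y : L} (hx : Pmem S x) (hy : Pmem S y) : Pmem S (x ⊔ y) := by
  classical
  obtain ⟨F, hF, rfl⟩ := hx
  obtain ⟨G, hG, rfl⟩ := hy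
  exact ⟨F ∪ G, by rw [Finset.coe_union]; exact Set.union_subset hF hG,
    (Finset.sup_union).symm⟩

lemma Pmem_of_mem {p : L} (hp : p ∈ S) : Pmem S p :=
  ⟨{p}, by simpa using hp, by simp⟩

abbrev TT (S : Set L) := {x : L // Pmem S x}

noncomputable def TSup (S : Set L) : SemilatticeSup (TT S) :=
  Subtype.semilatticeSup (fun _ _ hx hy => Pmem_sup hx hy)

noncomputable def TBot (S : Set L) : OrderBot (TT S) where
  bot := ⟨⊥, Pmem_bot⟩
  bot_le x := by exact bot_le (a := x.val)

lemma exists_glb (hN : NoetherianOrd L) (x y : TT S) :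
    ∃ m : TT S, m.val ≤ x.val ∧ m.val ≤ y.val ∧
      ∀ t : TT S, t.val ≤ x.val → t.val ≤ y.val → t.val ≤ m.val := by
  obtain ⟨m, hm, hmax⟩ := hN {u | Pmem S u ∧ u ≤ x.val ∧ u ≤ y.val}
    ⟨⊥, Pmem_bot, bot_le, bot_le⟩
  refine ⟨⟨m, hm.1⟩, hm.2.1, hm.2.2, ?_⟩
  intro t htx hty
  have hmem : m ⊔ t.val ∈ {u | Pmem S u ∧ u ≤ x.val ∧ u ≤ y.val} :=
    ⟨Pmem_sup hm.1 t.2, sup_le hm.2.1 htx, sup_le hm.2.2 hty⟩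
  have h2 := hmax _ hmem
  have heq : m ⊔ t.val = m := by
    by_contra h
    exact h2 (lt_of_le_of_ne le_sup_left (Ne.symm h))
  calc t.val ≤ m ⊔ t.val := le_sup_right
    _ = m := heq

noncomputable def TLattice (hN : NoetherianOrd L) (S : Set L) : Lattice (TT S) :=
  { TSup S with
    inf := fun x y => Classical.choose (exists_glb hN x y)
    inf_le_left := fun x y => (Classical.choose_spec (exists_glb hN x y)).1
    inf_le_right := fun x y => (Classical.choose_spec (exists_glb hN x y)).2.1
    le_inf := fun t x y htx hty =>
      (Classical.choose_spec (exists_glb hN x y)).2.2 t htx hty }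

end Aux

/-- for a noetherian, biatomic, join-semidistributive lattice `L`
with zero and `a ∈ L`, with `S` the set of atoms below `a`, the subposet `T`
of all joins of finite subsets of `S` is a noetherian, biatomic,
join-semidistributive, atomistic lattice whose atoms are exactly the elements
of `S`.  The subposet `T` is presented as a type `T'` together with an order
embedding `e` of `T'` onto `T ⊆ L`. -/
theorem stmt_5 (L : Type) [Lattice L] [OrderBot L]
    (hN : NoetherianOrd L) (hB : IsBiatomicLat L) (hSD : JoinSemidistributive L)
    (a : L) (S : Set L) (hS : S = {p : L | IsAtom p ∧ p ≤ a})
    (T : Set L) (hT : T = {x : L | ∃ F : Finset L, ↑F ⊆ S ∧ x = F.sup id}) :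
    ∃ (T' : Type) (_ : Lattice T') (_ : OrderBot T') (e : T' → L),
      (∀ x y : T', e x ≤ e y ↔ x ≤ y) ∧
      Set.range e = T ∧
      NoetherianOrd T' ∧ IsBiatomicLat T' ∧ JoinSemidistributive T' ∧
      AtomisticLat T' ∧
      (∀ p : T', IsAtom p ↔ e p ∈ S) := by
  have hatomS : ∀ p ∈ S, IsAtom p := fun p hp => by rw [hS] at hp; exact hp.1
  have hleaS : ∀ p ∈ S, p ≤ a := fun p hp => by rw [hS] at hp; exact hp.2
  have hmemS : ∀ p : L, IsAtom p → p ≤ a → p ∈ S := fun p h1 h2 => by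
    rw [hS]; exact ⟨h1, h2⟩
  letI lat : Lattice (TT S) := TLattice hN S
  letI bo : OrderBot (TT S) := TBot S
  have hlt : ∀ u v : TT S, u < v ↔ u.val < v.val := fun u v => by
    rw [lt_iff_le_not_ge, lt_iff_le_not_ge]; exact Iff.rfl
  have hbotne : ∀ u : TT S, u ≠ ⊥ → u.val ≠ ⊥ := fun u h hv => h (Subtype.ext hv)
  have hle_a : ∀ u : TT S, u.val ≤ a := by
    rintro ⟨u, F, hF, rfl⟩
    exact Finset.sup_le fun q hq => hleaS q (hF hq)
  have hexatom : ∀ u : TT S, u.val ≠ ⊥ → ∃ q ∈ S, q ≤ u.val := by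
    rintro ⟨u, F, hF, rfl⟩ hne
    rcases F.eq_empty_or_nonempty with h | ⟨q, hq⟩
    · simp [h] at hne
    · exact ⟨q, hF hq, Finset.le_sup (f := id) hq⟩
  have hatomTT : ∀ p : TT S, p.val ∈ S → IsAtom p := by
    intro p hp
    constructor
    · exact fun h => (hatomS _ hp).1 (congrArg Subtype.val h)
    · intro b hb
      exact Subtype.ext ((hatomS _ hp).2 b.val ((hlt _ _).1 hb))
  have hattos : ∀ p : TT S, IsAtom p → p.val ∈ S := by
    intro p hp
    obtain ⟨q, hqS, hq⟩ := hexatom p (hbotne p hp.1)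
    have hqne : (⟨q, Pmem_of_mem hqS⟩ : TT S) ≠ ⊥ :=
      fun h => (hatomS q hqS).1 (congrArg Subtype.val h)
    have h2 := hp.le_iff.mp (show (⟨q, Pmem_of_mem hqS⟩ : TT S) ≤ p from hq)
    rcases h2 with h | h
    · exact absurd h hqne
    · rw [← h]; exact hqS
  refine ⟨TT S, lat, bo, Subtype.val, fun x y => Iff.rfl, ?_, ?_, ⟨?_, ?_⟩, ?_, ?_, ?_⟩
  · rw [hT]
    exact Subtype.range_coe_subtype
  · -- Noetherian
    intro s hs
    obtain ⟨x, hx⟩ := hs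
    obtain ⟨m, ⟨m', hm's, hm'⟩, hmax⟩ := hN (Subtype.val '' s) ⟨x.val, x, hx, rfl⟩
    refine ⟨m', hm's, fun y hy hlt' => ?_⟩
    have h3 := (hlt m' y).1 hlt'
    rw [hm'] at h3
    exact hmax y.val ⟨y, hy, rfl⟩ h3
  · -- atomic
    intro x hx
    obtain ⟨q, hqS, hq⟩ := hexatom x (hbotne x hx)
    exact ⟨⟨q, Pmem_of_mem hqS⟩, hatomTT _ hqS, hq⟩
  · -- biatomic
    intro p x y hp hx hy hpxy
    obtain ⟨x₁, y₁, hx₁, hx₁le, hy₁, hy₁le, hple⟩ :=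
      hB.2 p.val x.val y.val (hatomS _ (hattos p hp)) (hbotne x hx) (hbotne y hy) hpxy
    have hx₁S : x₁ ∈ S := hmemS x₁ hx₁ (hx₁le.trans (hle_a x))
    have hy₁S : y₁ ∈ S := hmemS y₁ hy₁ (hy₁le.trans (hle_a y))
    exact ⟨⟨x₁, Pmem_of_mem hx₁S⟩, ⟨y₁, Pmem_of_mem hy₁S⟩, hatomTT _ hx₁S, hx₁le,
      hatomTT _ hy₁S, hy₁le, hple⟩
  · -- join semidistributive
    intro x y z h
    have hval : x.val ⊔ y.val = x.val ⊔ z.val := congrArg Subtype.val h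
    refine le_antisymm ?_ (sup_le_sup_left inf_le_left x)
    have hy : y ≤ x ⊔ (y ⊓ z) := by
      show y.val ≤ x.val ⊔ (y ⊓ z).val
      obtain ⟨F, hF, hyF⟩ := y.2
      conv_lhs => rw [hyF]
      refine Finset.sup_le fun q hq => ?_
      have hqS : q ∈ S := hF hq
      have hqy : q ≤ y.val := by rw [hyF]; exact Finset.le_sup (f := id) hq
      have hq1 : q ≤ x.val ⊔ (y.val ⊓ z.val) :=
        (hqy.trans le_sup_right).trans_eq (hSD x.val y.val z.val hval)
      by_cases hxb : x.val = ⊥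
      · rw [hxb, bot_sup_eq] at hq1
        have hmem : (⟨q, Pmem_of_mem hqS⟩ : TT S) ≤ y ⊓ z :=
          le_inf (show q ≤ y.val from hq1.trans inf_le_left)
            (show q ≤ z.val from hq1.trans inf_le_right)
        exact le_trans (show q ≤ (y ⊓ z).val from hmem) le_sup_right
      by_cases hwb : y.val ⊓ z.val = ⊥
      · rw [hwb, sup_bot_eq] at hq1
        exact hq1.trans le_sup_left
      obtain ⟨x₁, y₁, hx₁, hx₁le, hy₁, hy₁le, hple⟩ :=
        hB.2 q x.val (y.val ⊓ z.val) (hatomS q hqS) hxb hwb hq1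
      have hy₁S : y₁ ∈ S := hmemS y₁ hy₁ ((hy₁le.trans inf_le_left).trans (hle_a y))
      have hm : (⟨y₁, Pmem_of_mem hy₁S⟩ : TT S) ≤ y ⊓ z :=
        le_inf (show y₁ ≤ y.val from hy₁le.trans inf_le_left)
          (show y₁ ≤ z.val from hy₁le.trans inf_le_right)
      exact hple.trans (sup_le_sup hx₁le (show y₁ ≤ (y ⊓ z).val from hm))
    exact sup_le le_sup_left hy
  · -- atomistic
    intro x
    obtain ⟨F, hF, hxF⟩ := x.2
    refine ⟨{q : TT S | q.val ∈ F}, fun q hq => hatomTT q (hF hq), ?_, ?_⟩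
    · intro q hq
      show q.val ≤ x.val
      rw [hxF]
      exact Finset.le_sup (f := id) hq
    · intro u hu
      show x.val ≤ u.val
      rw [hxF]
      refine Finset.sup_le fun q hq => ?_
      exact hu (show (⟨q, Pmem_of_mem (hF hq)⟩ : TT S) ∈ {q : TT S | q.val ∈ F} from hq)
  · exact fun p => ⟨hattos p, hatomTT p⟩
end

section
/- Let L be a lattice. If there is a lattice embedding of L into some finite, join-semidistributive, biatomic lattice M such that the atoms of M separate the elements of L (i.e., for all x, y ∈ L with x ≰ y there is an atom p of M with p ≤ x and p ≰ y), then there is a lattice embedding of L into some finite, join-semidistributive, biatomic, atomistic lattice. -/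
section Aux
variable {M : Type} [Lattice M] [Fintype M] [OrderBot M]

open Classical in
noncomputable def atJoin (x : M) : M :=
  (Finset.univ.filter (fun p => IsAtom p ∧ p ≤ x)).sup id

lemma atJoin_le (x : M) : atJoin x ≤ x := by
  classical
  apply Finset.sup_le
  intro p hp
  simp only [Finset.mem_filter] at hp
  exact hp.2.2

lemma atom_le_atJoin {p x : M} (hp : IsAtom p) (hle : p ≤ x) : p ≤ atJoin x := by
  classical
  exact Finset.le_sup (f := id) (by simp [hp, hle])

lemma atJoin_mono {x y : M} (h : x ≤ y) : atJoin x ≤ atJoin y := by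
  classical
  apply Finset.sup_le
  intro p hp
  simp only [Finset.mem_filter] at hp
  exact atom_le_atJoin hp.2.1 (hp.2.2.trans h)

lemma atJoin_idem (x : M) : atJoin (atJoin x) = atJoin x := by
  classical
  refine le_antisymm (atJoin_le _) ?_
  apply Finset.sup_le
  intro p hp
  simp only [Finset.mem_filter] at hp
  exact atom_le_atJoin hp.2.1 (atom_le_atJoin hp.2.1 hp.2.2)

lemma atJoin_bot : atJoin (⊥ : M) = ⊥ := le_bot_iff.mp (atJoin_le ⊥)

lemma atJoin_fix_of_atom {p : M} (hp : IsAtom p) : atJoin p = p :=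
  le_antisymm (atJoin_le _) (atom_le_atJoin hp le_rfl)

lemma atJoin_sup (hbi : IsBiatomicLat M) (x y : M) :
    atJoin (x ⊔ y) = atJoin x ⊔ atJoin y := by
  classical
  refine le_antisymm ?_ (sup_le (atJoin_mono le_sup_left) (atJoin_mono le_sup_right))
  apply Finset.sup_le
  intro p hp
  simp only [Finset.mem_filter] at hp
  obtain ⟨-, hpa, hpxy⟩ := hp
  by_cases hx : x = ⊥
  · subst hx
    exact le_sup_right.trans' (atom_le_atJoin hpa (by simpa using hpxy))
  by_cases hy : y = ⊥
  · subst hy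
    exact le_sup_left.trans' (atom_le_atJoin hpa (by simpa using hpxy))
  obtain ⟨u, v, hu, hux, hv, hvy, hpuv⟩ := hbi.2 p x y hpa hx hy hpxy
  exact hpuv.trans (sup_le_sup (atom_le_atJoin hu hux) (atom_le_atJoin hv hvy))

lemma atJoin_inf_atJoin (x y : M) :
    atJoin (x ⊓ y) = atJoin (atJoin x ⊓ atJoin y) := by
  classical
  refine le_antisymm ?_ (atJoin_mono (inf_le_inf (atJoin_le _) (atJoin_le _)))
  apply Finset.sup_le
  intro p hp
  simp only [Finset.mem_filter] at hp
  obtain ⟨-, hpa, hpxy⟩ := hp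
  exact atom_le_atJoin hpa
    (le_inf (atom_le_atJoin hpa (hpxy.trans inf_le_left))
      (atom_le_atJoin hpa (hpxy.trans inf_le_right)))

end Aux

theorem stmt_6 (L : Type) [Lattice L]
    (h : ∃ (M : Type) (_ : Lattice M) (_ : Fintype M) (_ : OrderBot M)
      (f : L → M),
        Function.Injective f ∧
        (∀ x y : L, f (x ⊔ y) = f x ⊔ f y) ∧
        (∀ x y : L, f (x ⊓ y) = f x ⊓ f y) ∧
        JoinSemidistributive M ∧ IsBiatomicLat M ∧
        (∀ x y : L, ¬ x ≤ y → ∃ p : M, IsAtom p ∧ p ≤ f x ∧ ¬ p ≤ f y)) :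
    ∃ (M : Type) (_ : Lattice M) (_ : Fintype M) (_ : OrderBot M)
      (f : L → M),
        Function.Injective f ∧
        (∀ x y : L, f (x ⊔ y) = f x ⊔ f y) ∧
        (∀ x y : L, f (x ⊓ y) = f x ⊓ f y) ∧
        JoinSemidistributive M ∧ IsBiatomicLat M ∧ AtomisticLat M := by
  classical
  obtain ⟨M, _, _, _, f, hinj, hsup, hinf, hjsd, hbi, hsep⟩ := h
  set N := {x : M // atJoin x = x} with hN
  letI instLat : Lattice N :=
  { le := fun a b => a.1 ≤ b.1
    lt := fun a b => a.1 < b.1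
    le_refl := fun a => le_refl a.1
    le_trans := fun a b c h1 h2 => le_trans h1 h2
    lt_iff_le_not_ge := fun a b => lt_iff_le_not_ge
    le_antisymm := fun a b h1 h2 => Subtype.ext (le_antisymm h1 h2)
    sup := fun a b => ⟨a.1 ⊔ b.1, by rw [atJoin_sup hbi, a.2, b.2]⟩
    le_sup_left := fun a b => (le_sup_left : a.1 ≤ a.1 ⊔ b.1)
    le_sup_right := fun a b => (le_sup_right : b.1 ≤ a.1 ⊔ b.1)
    sup_le := fun a b c h1 h2 => (sup_le h1 h2 : a.1 ⊔ b.1 ≤ c.1)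
    inf := fun a b => ⟨atJoin (a.1 ⊓ b.1), atJoin_idem _⟩
    inf_le_left := fun a b => (atJoin_le _).trans inf_le_left
    inf_le_right := fun a b => (atJoin_le _).trans inf_le_right
    le_inf := fun a b c h1 h2 => by
      show a.1 ≤ atJoin (b.1 ⊓ c.1)
      calc a.1 = atJoin a.1 := a.2.symm
        _ ≤ atJoin (b.1 ⊓ c.1) := atJoin_mono (le_inf h1 h2) }
  letI : OrderBot N :=
  { bot := ⟨⊥, atJoin_bot⟩
    bot_le := fun a => (bot_le : (⊥ : M) ≤ a.1) }
  letI : Fintype N := Subtype.fintype _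
  -- atoms of N are exactly atoms of M
  have hbotval : ((⊥ : N) : M) = ⊥ := rfl
  have atomN_of : ∀ (p : M) (hp : IsAtom p) (hfix : atJoin p = p),
      IsAtom (⟨p, hfix⟩ : N) := by
    intro p hp hfix
    constructor
    · intro hc
      exact hp.1 (congrArg Subtype.val hc)
    · intro b hb
      exact Subtype.ext (hp.2 b.1 hb)
  have atomM_of : ∀ q : N, IsAtom q → IsAtom q.1 := by
    intro q hq
    have hqne : q.1 ≠ ⊥ := fun hc => hq.1 (Subtype.ext hc)
    obtain ⟨p, hp, hple⟩ := hbi.1 q.1 hqne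
    have hfix := atJoin_fix_of_atom hp
    rcases lt_or_eq_of_le hple with hlt | heq
    · exfalso
      have : (⟨p, hfix⟩ : N) < q := hlt
      have := hq.2 _ this
      exact hp.1 (congrArg Subtype.val this)
    · rwa [← heq]
  refine ⟨N, instLat, inferInstance, inferInstance,
    fun l => ⟨atJoin (f l), atJoin_idem _⟩, ?_, ?_, ?_, ?_, ?_, ?_⟩
  · -- injective
    intro a b hab
    have hval : atJoin (f a) = atJoin (f b) := congrArg Subtype.val hab
    by_contra hne
    have : ¬ a ≤ b ∨ ¬ b ≤ a := by
      by_contra hc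
      push_neg at hc
      exact hne (le_antisymm hc.1 hc.2)
    rcases this with hle | hle
    · obtain ⟨p, hp, hpa, hpb⟩ := hsep a b hle
      exact hpb (((atom_le_atJoin hp hpa).trans hval.le).trans (atJoin_le _))
    · obtain ⟨p, hp, hpa, hpb⟩ := hsep b a hle
      exact hpb (((atom_le_atJoin hp hpa).trans hval.symm.le).trans (atJoin_le _))
  · -- sup
    intro x y
    apply Subtype.ext
    show atJoin (f (x ⊔ y)) = atJoin (f x) ⊔ atJoin (f y)
    rw [hsup, atJoin_sup hbi]
  · -- inf
    intro x y
    apply Subtype.ext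
    show atJoin (f (x ⊓ y)) = atJoin (atJoin (f x) ⊓ atJoin (f y))
    rw [hinf]
    exact atJoin_inf_atJoin _ _
  · -- JSD
    intro x y z hxyz
    have hval : x.1 ⊔ y.1 = x.1 ⊔ z.1 := congrArg Subtype.val hxyz
    have h1 : x.1 ⊔ y.1 = x.1 ⊔ (y.1 ⊓ z.1) := hjsd _ _ _ hval
    apply Subtype.ext
    show x.1 ⊔ y.1 = x.1 ⊔ atJoin (y.1 ⊓ z.1)
    calc x.1 ⊔ y.1 = atJoin (x.1 ⊔ y.1) := by
            rw [atJoin_sup hbi, x.2, y.2]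
      _ = atJoin (x.1 ⊔ (y.1 ⊓ z.1)) := by rw [h1]
      _ = x.1 ⊔ atJoin (y.1 ⊓ z.1) := by rw [atJoin_sup hbi, x.2]
  · -- biatomic
    constructor
    · intro x hx
      have hxne : x.1 ≠ ⊥ := fun hc => hx (Subtype.ext hc)
      obtain ⟨p, hp, hple⟩ := hbi.1 x.1 hxne
      exact ⟨⟨p, atJoin_fix_of_atom hp⟩, atomN_of p hp _, hple⟩
    · intro p a b hp ha hb hpab
      have hpa := atomM_of p hp
      have hane : a.1 ≠ ⊥ := fun hc => ha (Subtype.ext hc)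
      have hbne : b.1 ≠ ⊥ := fun hc => hb (Subtype.ext hc)
      obtain ⟨x, y, hx, hxa, hy, hyb, hpxy⟩ :=
        hbi.2 p.1 a.1 b.1 hpa hane hbne hpab
      exact ⟨⟨x, atJoin_fix_of_atom hx⟩, ⟨y, atJoin_fix_of_atom hy⟩,
        atomN_of x hx _, hxa, atomN_of y hy _, hyb, hpxy⟩
  · -- atomistic
    intro x
    refine ⟨{q : N | IsAtom q ∧ q ≤ x}, fun q hq => hq.1, ?_, ?_⟩
    · intro q hq
      exact hq.2
    · intro u hu
      show x.1 ≤ u.1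
      calc x.1 = atJoin x.1 := x.2.symm
        _ ≤ u.1 := by
            apply Finset.sup_le
            intro q hq
            simp only [Finset.mem_filter] at hq
            exact hu ⟨atomN_of q hq.2.1 (atJoin_fix_of_atom hq.2.1), hq.2.2⟩
end

section
/- Let L be an atomistic lattice. If L has a lattice embedding preserving join, meet, and zero into some finite join-semidistributive biatomic lattice, then L has such an embedding into some finite join-semidistributive biatomic atomistic lattice. -/
theorem stmt_7 (L : Type) [Lattice L] [OrderBot L] (hA : AtomisticLat L)
    (h : ∃ (M : Type) (_ : Lattice M) (_ : Fintype M) (_ : OrderBot M)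
      (f : L → M),
        Function.Injective f ∧
        (∀ x y : L, f (x ⊔ y) = f x ⊔ f y) ∧
        (∀ x y : L, f (x ⊓ y) = f x ⊓ f y) ∧
        f ⊥ = ⊥ ∧
        JoinSemidistributive M ∧ IsBiatomicLat M) :
    ∃ (M : Type) (_ : Lattice M) (_ : Fintype M) (_ : OrderBot M)
      (f : L → M),
        Function.Injective f ∧
        (∀ x y : L, f (x ⊔ y) = f x ⊔ f y) ∧
        (∀ x y : L, f (x ⊓ y) = f x ⊓ f y) ∧
        f ⊥ = ⊥ ∧
        JoinSemidistributive M ∧ IsBiatomicLat M ∧ AtomisticLat M := by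
  classical
  obtain ⟨M, _, _, _, f, hinj, hsup, hinf, hfbot, hjsd, hAtomic, hBi⟩ := h
  -- d a = join of all atoms below a
  set d : M → M := fun a => (Finset.univ.filter (fun p => IsAtom p ∧ p ≤ a)).sup id with hd
  have hdle : ∀ a, d a ≤ a := by
    intro a
    apply Finset.sup_le
    intro p hp
    simpa using (Finset.mem_filter.mp hp).2.2
  have hatom_le : ∀ {p a : M}, IsAtom p → p ≤ a → p ≤ d a := by
    intro p a hp hpa
    exact Finset.le_sup (f := id) (by simp [hp, hpa])
  have hdmono : ∀ {a b : M}, a ≤ b → d a ≤ d b := by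
    intro a b hab
    apply Finset.sup_le
    intro p hp
    obtain ⟨-, hp1, hp2⟩ := Finset.mem_filter.mp hp
    exact hatom_le hp1 (hp2.trans hab)
  have hdd : ∀ a, d (d a) = d a := by
    intro a
    refine le_antisymm (hdle _) ?_
    apply Finset.sup_le
    intro p hp
    obtain ⟨-, hp1, hp2⟩ := Finset.mem_filter.mp hp
    exact hatom_le hp1 (hatom_le hp1 hp2)
  have hdbot : d ⊥ = ⊥ := le_bot_iff.mp (hdle ⊥)
  have hdsup : ∀ a b : M, d (a ⊔ b) = d a ⊔ d b := by
    intro a b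
    refine le_antisymm ?_ (sup_le (hdmono le_sup_left) (hdmono le_sup_right))
    apply Finset.sup_le
    intro p hp
    obtain ⟨-, hp1, hp2⟩ := Finset.mem_filter.mp hp
    by_cases ha : a = ⊥
    · subst ha
      exact le_sup_of_le_right (hatom_le hp1 (by simpa using hp2))
    by_cases hb : b = ⊥
    · subst hb
      exact le_sup_of_le_left (hatom_le hp1 (by simpa using hp2))
    obtain ⟨x, y, hx, hxa, hy, hyb, hpxy⟩ := hBi p a b hp1 ha hb hp2
    exact hpxy.trans (sup_le_sup (hatom_le hx hxa) (hatom_le hy hyb))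
  have hdinf : ∀ a b : M, d (d a ⊓ d b) = d (a ⊓ b) := by
    intro a b
    refine le_antisymm (hdmono (inf_le_inf (hdle a) (hdle b))) ?_
    apply Finset.sup_le
    intro p hp
    obtain ⟨-, hp1, hp2⟩ := Finset.mem_filter.mp hp
    exact hatom_le hp1 (le_inf (hatom_le hp1 (hp2.trans inf_le_left))
      (hatom_le hp1 (hp2.trans inf_le_right)))
  -- the sublattice of joins of atoms
  let J := {x : M // d x = x}
  letI instJ : Lattice J :=
    { le := fun x y => x.1 ≤ y.1
      lt := fun x y => x.1 < y.1
      le_refl := fun x => le_refl x.1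
      le_trans := fun x y z h1 h2 => le_trans h1 h2
      lt_iff_le_not_ge := fun x y => lt_iff_le_not_ge
      le_antisymm := fun x y h1 h2 => Subtype.ext (le_antisymm h1 h2)
      sup := fun x y => ⟨x.1 ⊔ y.1, by rw [hdsup, x.2, y.2]⟩
      le_sup_left := fun x y => le_sup_left (a := x.1) (b := y.1)
      le_sup_right := fun x y => le_sup_right (a := x.1) (b := y.1)
      sup_le := fun x y z h1 h2 => sup_le (α := M) h1 h2
      inf := fun x y => ⟨d (x.1 ⊓ y.1), hdd _⟩
      inf_le_left := fun x y => (hdle _).trans inf_le_left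
      inf_le_right := fun x y => (hdle _).trans inf_le_right
      le_inf := fun x y z h1 h2 => by
        show x.1 ≤ d (y.1 ⊓ z.1)
        calc x.1 = d x.1 := x.2.symm
        _ ≤ d (y.1 ⊓ z.1) := hdmono (le_inf h1 h2) }
  letI instJB : OrderBot J :=
    { bot := ⟨⊥, hdbot⟩
      bot_le := fun x => bot_le (a := x.1) }
  letI instJF : Fintype J := Subtype.fintype _
  have hleJ : ∀ x y : J, x ≤ y ↔ x.1 ≤ y.1 := fun _ _ => Iff.rfl
  have hltJ : ∀ x y : J, x < y ↔ x.1 < y.1 := fun _ _ => Iff.rfl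
  have hsupJ : ∀ x y : J, (x ⊔ y).1 = x.1 ⊔ y.1 := fun _ _ => rfl
  have hinfJ : ∀ x y : J, (x ⊓ y).1 = d (x.1 ⊓ y.1) := fun _ _ => rfl
  have hbotJ : (⊥ : J).1 = ⊥ := rfl
  have hneJ : ∀ x : J, x ≠ ⊥ ↔ x.1 ≠ ⊥ := by
    intro x
    constructor
    · intro hx h; exact hx (Subtype.ext h)
    · intro hx h; exact hx (congrArg Subtype.val h)
  -- atoms of J are exactly atoms of M lying in J
  have hatomJ : ∀ p : J, IsAtom p ↔ IsAtom p.1 := by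
    intro p
    constructor
    · intro hp
      obtain ⟨q, hq, hqp⟩ := hAtomic p.1 ((hneJ p).mp hp.1)
      have hqfix : d q = q := le_antisymm (hdle q) (hatom_le hq le_rfl)
      have hqle : (⟨q, hqfix⟩ : J) ≤ p := hqp
      rcases lt_or_eq_of_le hqle with hlt | heq
      · exact absurd (congrArg Subtype.val (hp.2 _ hlt)) hq.1
      · rw [← heq]; exact hq
    · intro hp
      refine ⟨(hneJ p).mpr hp.1, fun b hb => Subtype.ext (hp.2 _ ((hltJ b p).mp hb))⟩
  -- monotonicity of f
  have hfmono : ∀ {a b : L}, a ≤ b → f a ≤ f b := by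
    intro a b hab
    have : f a ⊔ f b = f b := by rw [← hsup, sup_eq_right.mpr hab]
    exact le_sup_left.trans this.le
  -- the embedding
  refine ⟨J, instJ, instJF, instJB, fun x => ⟨d (f x), hdd _⟩, ?_, ?_, ?_, ?_, ?_, ⟨?_, ?_⟩, ?_⟩
  · -- injectivity
    have key : ∀ a b : L, d (f a) = d (f b) → a ≤ b := by
      intro a b hab
      by_contra hnle
      obtain ⟨s, hs, hlub⟩ := hA a
      have : ∃ p ∈ s, ¬ p ≤ b := by
        by_contra hc
        push_neg at hc
        exact hnle (hlub.2 hc)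
      obtain ⟨p, hps, hpb⟩ := this
      have hp := hs p hps
      have hpa : p ≤ a := hlub.1 hps
      have hpbinf : p ⊓ b = ⊥ := by
        rcases lt_or_eq_of_le (inf_le_left (a := p) (b := b)) with hlt | heq
        · exact hp.2 _ hlt
        · exact absurd (inf_eq_left.mp heq) hpb
      have hfp : f p ≠ ⊥ := by
        intro hc
        exact hp.1 (hinj (hc.trans hfbot.symm))
      obtain ⟨q, hq, hqfp⟩ := hAtomic (f p) hfp
      have hq1 : q ≤ d (f a) := hatom_le hq (hqfp.trans (hfmono hpa))
      have hq2 : q ≤ f b := (hab ▸ hq1).trans (hdle _)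
      have : q ≤ (⊥ : M) := by
        have : q ≤ f p ⊓ f b := le_inf hqfp hq2
        rwa [← hinf, hpbinf, hfbot] at this
      exact hq.1 (le_bot_iff.mp this)
    intro a b hab
    have h' : d (f a) = d (f b) := congrArg Subtype.val hab
    exact le_antisymm (key a b h') (key b a h'.symm)
  · -- sup preservation
    intro x y
    apply Subtype.ext
    show d (f (x ⊔ y)) = d (f x) ⊔ d (f y)
    rw [hsup, hdsup]
  · -- inf preservation
    intro x y
    apply Subtype.ext
    show d (f (x ⊓ y)) = d (d (f x) ⊓ d (f y))
    rw [hinf, hdinf]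
  · -- bot preservation
    refine Subtype.ext ?_
    show d (f ⊥) = ⊥
    rw [hfbot, hdbot]
  · -- join semidistributivity
    intro x y z hxyz
    have h1 : x.1 ⊔ y.1 = x.1 ⊔ z.1 := congrArg Subtype.val hxyz
    have h2 : x.1 ⊔ y.1 = x.1 ⊔ (y.1 ⊓ z.1) := hjsd _ _ _ h1
    apply Subtype.ext
    show x.1 ⊔ y.1 = x.1 ⊔ d (y.1 ⊓ z.1)
    calc x.1 ⊔ y.1 = d (x.1 ⊔ y.1) := by rw [hdsup, x.2, y.2]
    _ = d (x.1 ⊔ (y.1 ⊓ z.1)) := by rw [h2]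
    _ = d x.1 ⊔ d (y.1 ⊓ z.1) := hdsup _ _
    _ = x.1 ⊔ d (y.1 ⊓ z.1) := by rw [x.2]
  · -- atomicity of J
    intro x hx
    obtain ⟨p, hp, hpx⟩ := hAtomic x.1 ((hneJ x).mp hx)
    have hpfix : d p = p := le_antisymm (hdle p) (hatom_le hp le_rfl)
    exact ⟨⟨p, hpfix⟩, (hatomJ _).mpr hp, hpx⟩
  · -- biatomicity of J
    intro p a b hp ha hb hpab
    have hp' : IsAtom p.1 := (hatomJ p).mp hp
    obtain ⟨x, y, hx, hxa, hy, hyb, hpxy⟩ :=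
      hBi p.1 a.1 b.1 hp' ((hneJ a).mp ha) ((hneJ b).mp hb) hpab
    have hxfix : d x = x := le_antisymm (hdle x) (hatom_le hx le_rfl)
    have hyfix : d y = y := le_antisymm (hdle y) (hatom_le hy le_rfl)
    exact ⟨⟨x, hxfix⟩, ⟨y, hyfix⟩, (hatomJ _).mpr hx, hxa, (hatomJ _).mpr hy, hyb, hpxy⟩
  · -- atomisticity of J
    intro x
    refine ⟨{p : J | IsAtom p ∧ p ≤ x}, fun p hp => hp.1, ?_, ?_⟩
    · intro p hp
      exact hp.2
    · intro b hb
      show x.1 ≤ b.1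
      calc x.1 = d x.1 := x.2.symm
      _ ≤ b.1 := by
        apply Finset.sup_le
        intro p hp
        obtain ⟨-, hp1, hp2⟩ := Finset.mem_filter.mp hp
        have hpfix : d p = p := le_antisymm (hdle p) (hatom_le hp1 le_rfl)
        exact hb ⟨(hatomJ ⟨p, hpfix⟩).mpr hp1, hp2⟩
end

section
/- Let L be a finite atomistic lattice and let (a; M) be an extension pair of L, i.e., a ∈ L is neither 0 nor an atom, and M is a meet-subsemilattice of L containing {0} ∪ [a,1]. Put L_a = L \ [a,1] and L(a;M) = (L_a × {0}) ∪ (M × {1}), ordered componentwise inside L × 2. Then L(a;M) is a finite atomistic lattice, the map j : L → L(a;M) sending x to the least element of L(a;M) above (x,0) is an embedding preserving join, meet, 0, 1 and atoms, and the atoms of L(a;M) are exactly the pairs (p,0) for p an atom of L, together with (0,1). -/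
/-- `(a; M)` is an extension pair of `L`: `a` is neither `⊥` nor an atom, and
`M` is a meet-subsemilattice of `L` containing `⊥` and the interval `[a, ⊤]`. -/
def ExtensionPair (L : Type*) [Lattice L] [BoundedOrder L]
    (a : L) (M : Set L) : Prop :=
  a ≠ ⊥ ∧ ¬ IsAtom a ∧ (∀ x ∈ M, ∀ y ∈ M, x ⊓ y ∈ M) ∧
    (⊥ : L) ∈ M ∧ ∀ x : L, a ≤ x → x ∈ M

/-- The underlying set of `L(a;M) = (L_a × {0}) ∪ (M × {1}) ⊆ L × 2`, where
`L_a = L \ [a, ⊤]` and `2 = {0 < 1}` is modelled by `Bool`. -/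
def LaMSet (L : Type*) [Lattice L] [BoundedOrder L]
    (a : L) (M : Set L) : Set (L × Bool) :=
  {p | (p.2 = false ∧ ¬ a ≤ p.1) ∨ (p.2 = true ∧ p.1 ∈ M)}

section Aux

variable {L : Type} [Lattice L] [BoundedOrder L] {a : L} {M : Set L}

abbrev Kt (L : Type) [Lattice L] [BoundedOrder L] (a : L) (M : Set L) : Type :=
  {z : L × Bool // z ∈ LaMSet L a M}

lemma bool_inf_and : ∀ b c : Bool, b ⊓ c = (b && c) := by decide

lemma bool_false_le : ∀ b : Bool, false ≤ b := by decide

lemma bool_true_le : ∀ b : Bool, (true ≤ b) ↔ b = true := by decide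

lemma bool_le_false : ∀ b : Bool, (b ≤ false) ↔ b = false := by decide

lemma bool_le_true : ∀ b : Bool, b ≤ true := by decide

lemma inf_mem_laM (h : ExtensionPair L a M) {p q : L × Bool}
    (hp : p ∈ LaMSet L a M) (hq : q ∈ LaMSet L a M) : p ⊓ q ∈ LaMSet L a M := by
  obtain ⟨-, -, hM, -, -⟩ := h
  have h2 : (p ⊓ q).2 = p.2 ⊓ q.2 := rfl
  rcases hp with ⟨hb, h1⟩ | ⟨hb, h1⟩
  · exact Or.inl ⟨by rw [h2, bool_inf_and, hb]; rfl,
      fun hle => h1 (hle.trans inf_le_left)⟩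
  · rcases hq with ⟨gb, g1⟩ | ⟨gb, g1⟩
    · exact Or.inl ⟨by rw [h2, bool_inf_and, gb]; simp,
        fun hle => g1 (hle.trans inf_le_right)⟩
    · exact Or.inr ⟨by rw [h2, bool_inf_and, hb, gb]; rfl, hM _ h1 _ g1⟩

lemma top_mem_laM (h : ExtensionPair L a M) : ((⊤, true) : L × Bool) ∈ LaMSet L a M :=
  Or.inr ⟨rfl, h.2.2.2.2 ⊤ le_top⟩

lemma bot_mem_laM (h : ExtensionPair L a M) : ((⊥, false) : L × Bool) ∈ LaMSet L a M :=
  Or.inl ⟨rfl, fun hle => h.1 (le_bot_iff.mp hle)⟩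

variable [Fintype L]

/-- The least element of `LaMSet L a M` above `z`, with its specification. -/
noncomputable def upAux (h : ExtensionPair L a M) (z : L × Bool) :
    {v : L × Bool // v ∈ LaMSet L a M ∧ z ≤ v ∧
      ∀ w ∈ LaMSet L a M, z ≤ w → v ≤ w} := by
  classical
  have hne : (Finset.univ.filter
      fun w : L × Bool => w ∈ LaMSet L a M ∧ z ≤ w).Nonempty := by
    refine ⟨(⊤, true), ?_⟩
    simp only [Finset.mem_filter, Finset.mem_univ, true_and]
    exact ⟨top_mem_laM h, le_top, bool_le_true _⟩
  refine ⟨_root_.Finset.inf' _ hne id, ?_, ?_, ?_⟩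
  · refine Finset.inf'_mem (LaMSet L a M) (fun x hx y hy => inf_mem_laM h hx hy) _ hne id
      (fun w hw => ?_)
    exact ((Finset.mem_filter.mp hw).2).1
  · exact Finset.le_inf' hne id (fun w hw => ((Finset.mem_filter.mp hw).2).2)
  · intro w hw hzw
    exact Finset.inf'_le id (by
      simp only [Finset.mem_filter, Finset.mem_univ, true_and]; exact ⟨hw, hzw⟩)

@[reducible] noncomputable def KLat (h : ExtensionPair L a M) : Lattice (Kt L a M) :=
  { (inferInstance : PartialOrder (Kt L a M)) with
    inf := fun p q => ⟨p.val ⊓ q.val, inf_mem_laM h p.2 q.2⟩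
    inf_le_left := fun p q => inf_le_left (a := p.val) (b := q.val)
    inf_le_right := fun p q => inf_le_right (a := p.val) (b := q.val)
    le_inf := fun p q r h1 h2 => le_inf (a := q.val) (b := r.val) (c := p.val) h1 h2
    sup := fun p q => ⟨(upAux h (p.val ⊔ q.val)).val, (upAux h (p.val ⊔ q.val)).2.1⟩
    le_sup_left := fun p q =>
      (le_sup_left (a := p.val) (b := q.val)).trans (upAux h (p.val ⊔ q.val)).2.2.1
    le_sup_right := fun p q =>
      (le_sup_right (a := p.val) (b := q.val)).trans (upAux h (p.val ⊔ q.val)).2.2.1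
    sup_le := fun p q r h1 h2 =>
      (upAux h (p.val ⊔ q.val)).2.2.2 r.val r.2
        (sup_le (a := p.val) (b := q.val) (c := r.val) h1 h2) }

def KBdd (h : ExtensionPair L a M) : BoundedOrder (Kt L a M) where
  top := ⟨(⊤, true), top_mem_laM h⟩
  le_top p := ⟨le_top, by
    rcases p.2 with ⟨hb, -⟩ | ⟨hb, -⟩ <;> rw [hb]
    · exact bool_false_le true⟩
  bot := ⟨(⊥, false), bot_mem_laM h⟩
  bot_le p := ⟨bot_le, bool_false_le _⟩

end Aux

/-- `L(a;M)` (presented as a type `K` order-isomorphic to the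
subposet `LaMSet L a M` of `L × 2`) is a finite atomistic lattice, the map
`j` sending `x` to the least element above `(x, 0)` is a
`⟨∨,∧,0,1,at⟩`-embedding, and the atoms of `L(a;M)` are the `(p,0)` for `p`
an atom of `L`, together with `(⊥,1)`. -/
theorem stmt_8 (L : Type) [Lattice L] [Fintype L] [BoundedOrder L]
    (hA : AtomisticLat L) (a : L) (M : Set L) (h : ExtensionPair L a M) :
    ∃ (K : Type) (_ : Lattice K) (_ : Fintype K) (_ : BoundedOrder K)
      (e : K → L × Bool),
      Function.Injective e ∧
      Set.range e = LaMSet L a M ∧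
      (∀ x y : K, x ≤ y ↔ e x ≤ e y) ∧
      AtomisticLat K ∧
      ∃ j : L → K,
        (∀ x : L, IsLeast {z : K | ((x, false) : L × Bool) ≤ e z} (j x)) ∧
        Function.Injective j ∧
        (∀ x y : L, j (x ⊔ y) = j x ⊔ j y) ∧
        (∀ x y : L, j (x ⊓ y) = j x ⊓ j y) ∧
        j ⊥ = ⊥ ∧ j ⊤ = ⊤ ∧
        (∀ x : L, IsAtom (j x) ↔ IsAtom x) ∧
        (∀ p : K, IsAtom p ↔
          ((∃ q : L, IsAtom q ∧ e p = (q, false)) ∨ e p = ((⊥ : L), true))) := by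
  classical
  obtain ⟨habot, haAt, hMinf, hbotM, hIM⟩ := h
  have h' : ExtensionPair L a M := ⟨habot, haAt, hMinf, hbotM, hIM⟩
  letI latK : Lattice (Kt L a M) := KLat h'
  letI finK : Fintype (Kt L a M) := Fintype.ofFinite _
  letI bdK : BoundedOrder (Kt L a M) := KBdd h'
  have hbotval : ((⊥ : Kt L a M)).val = ((⊥ : L), false) := rfl
  have hnal : ∀ {x : L}, IsAtom x → ¬ a ≤ x := by
    intro x hx hax
    rcases hx.le_iff.mp hax with h1 | h1
    · exact habot h1
    · exact haAt (h1 ▸ hx)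
  -- atoms of K
  have hatom : ∀ p : Kt L a M, IsAtom p ↔
      ((∃ q : L, IsAtom q ∧ p.val = (q, false)) ∨ p.val = ((⊥ : L), true)) := by
    intro p
    constructor
    · intro hp
      rcases p.2 with ⟨hb, h1⟩ | ⟨hb, h1⟩
      · left
        refine ⟨p.val.1, ?_, Prod.ext rfl hb⟩
        constructor
        · intro hq
          exact hp.1 (Subtype.ext (Prod.ext hq hb))
        · intro b hb'
          by_contra hbne
          have hmem : (b, false) ∈ LaMSet L a M :=
            Or.inl ⟨rfl, fun hab => h1 (hab.trans hb'.le)⟩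
          have hlt : (⟨(b, false), hmem⟩ : Kt L a M) < p := by
            refine lt_of_le_of_ne ⟨hb'.le, by rw [hb]⟩ ?_
            intro he
            exact (ne_of_lt hb') (congrArg (fun z => z.val.1) he)
          have := hp.2 _ hlt
          exact hbne (congrArg (fun z => z.val.1) this)
      · right
        by_contra hne
        have hq0 : ((⊥ : L), true) ∈ LaMSet L a M := Or.inr ⟨rfl, hbotM⟩
        have hlt : (⟨((⊥ : L), true), hq0⟩ : Kt L a M) < p := by
          refine lt_of_le_of_ne ⟨bot_le, by rw [hb]⟩ ?_
          intro he
          exact hne (congrArg Subtype.val he).symm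
        have := hp.2 _ hlt
        have : ((⊥ : L), true) = ((⊥ : L), false) := congrArg Subtype.val this
        exact Bool.noConfusion (congrArg Prod.snd this)
    · rintro (⟨q, hq, hval⟩ | hval)
      · constructor
        · intro he
          have : p.val = ((⊥ : L), false) := congrArg Subtype.val he
          rw [hval] at this
          exact hq.1 (congrArg Prod.fst this)
        · intro b hb
          have hble : b.val ≤ (q, false) := hval ▸ hb.le
          have hb2 : b.val.2 = false := (bool_le_false _).mp hble.2
          have hb1 : b.val.1 ≤ q := hble.1
          rcases (hq.le_iff).mp hb1 with h1 | h1
          · exact Subtype.ext (Prod.ext h1 hb2)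
          · exfalso
            exact hb.ne (Subtype.ext (hval ▸ (Prod.ext h1 hb2 : b.val = (q, false))))
      · constructor
        · intro he
          have : p.val = ((⊥ : L), false) := congrArg Subtype.val he
          rw [hval] at this
          exact Bool.noConfusion (congrArg Prod.snd this)
        · intro b hb
          have hble : b.val ≤ ((⊥ : L), true) := hval ▸ hb.le
          have hb1 : b.val.1 = ⊥ := le_bot_iff.mp hble.1
          have hb2 : b.val.2 = false := by
            cases hbv : b.val.2
            · rfl
            · exfalso
              exact hb.ne (Subtype.ext (hval ▸ (Prod.ext hb1 hbv : b.val = ((⊥:L), true))))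
          exact Subtype.ext (Prod.ext hb1 hb2)
  -- atomisticity of K
  have hatomistic : AtomisticLat (Kt L a M) := by
    intro p
    obtain ⟨s, hs_at, hs_lub⟩ := hA p.val.1
    have hsmem : ∀ q ∈ s, (q, false) ∈ LaMSet L a M := fun q hq =>
      Or.inl ⟨rfl, hnal (hs_at q hq)⟩
    rcases p.2 with ⟨hb, h1⟩ | ⟨hb, h1⟩
    · refine ⟨{w : Kt L a M | w.val.2 = false ∧ w.val.1 ∈ s}, ?_, ?_, ?_⟩
      · rintro w ⟨hw2, hw1⟩
        exact (hatom w).mpr (Or.inl ⟨w.val.1, hs_at _ hw1, (Prod.ext rfl hw2)⟩)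
      · rintro w ⟨hw2, hw1⟩
        exact ⟨hs_lub.1 hw1, by rw [hw2]; exact bool_false_le _⟩
      · intro u hu
        refine ⟨?_, by rw [hb]; exact bool_false_le _⟩
        refine hs_lub.2 (fun q hq => ?_)
        exact (hu (show (⟨(q, false), hsmem q hq⟩ : Kt L a M) ∈ _ from ⟨rfl, hq⟩)).1
    · have hq0 : ((⊥ : L), true) ∈ LaMSet L a M := Or.inr ⟨rfl, hbotM⟩
      refine ⟨insert (⟨((⊥ : L), true), hq0⟩ : Kt L a M)
        {w : Kt L a M | w.val.2 = false ∧ w.val.1 ∈ s}, ?_, ?_, ?_⟩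
      · rintro w (rfl | ⟨hw2, hw1⟩)
        · exact (hatom _).mpr (Or.inr rfl)
        · exact (hatom w).mpr (Or.inl ⟨w.val.1, hs_at _ hw1, (Prod.ext rfl hw2)⟩)
      · rintro w (rfl | ⟨hw2, hw1⟩)
        · exact ⟨bot_le, by rw [hb]⟩
        · exact ⟨hs_lub.1 hw1, by rw [hw2]; exact bool_false_le _⟩
      · intro u hu
        have hu2 : true ≤ u.val.2 := (hu (Set.mem_insert _ _)).2
        refine ⟨?_, by rw [hb]; exact hu2⟩
        refine hs_lub.2 (fun q hq => ?_)
        have hmem : (⟨(q, false), hsmem q hq⟩ : Kt L a M) ∈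
            insert (⟨((⊥ : L), true), hq0⟩ : Kt L a M)
              {w : Kt L a M | w.val.2 = false ∧ w.val.1 ∈ s} :=
          Set.mem_insert_iff.mpr (Or.inr ⟨rfl, hq⟩)
        exact (hu hmem).1
  -- the embedding j
  set j : L → Kt L a M := fun x =>
    if hx : a ≤ x then ⟨(x, true), Or.inr ⟨rfl, hIM x hx⟩⟩
    else ⟨(x, false), Or.inl ⟨rfl, hx⟩⟩ with hj
  have jval1 : ∀ x : L, (j x).val.1 = x := by
    intro x; rw [hj]; dsimp only; split <;> rfl
  have jval2 : ∀ x : L, (j x).val.2 = true ↔ a ≤ x := by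
    intro x; rw [hj]; dsimp only; split <;> simp_all
  have hjle : ∀ (x : L) (w : Kt L a M), j x ≤ w ↔ x ≤ w.val.1 := by
    intro x w
    constructor
    · intro hle
      have := (hle : (j x).val ≤ w.val).1
      rwa [jval1] at this
    · intro hle
      by_cases hax : a ≤ x
      · have hw2 : w.val.2 = true := by
          rcases w.2 with ⟨hwb, hw1⟩ | ⟨hwb, -⟩
          · exact absurd (hax.trans hle) hw1
          · exact hwb
        show (j x).val ≤ w.val
        rw [hj]; dsimp only; rw [dif_pos hax]
        exact ⟨hle, by rw [hw2]⟩
      · show (j x).val ≤ w.val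
        rw [hj]; dsimp only; rw [dif_neg hax]
        exact ⟨hle, bool_false_le _⟩
  have hleast : ∀ x : L, IsLeast {z : Kt L a M | ((x, false) : L × Bool) ≤ z.val} (j x) := by
    intro x
    constructor
    · exact ⟨(jval1 x).ge, bool_false_le _⟩
    · intro z hz
      exact (hjle x z).mpr hz.1
  refine ⟨Kt L a M, latK, finK, bdK, Subtype.val, Subtype.val_injective,
    Subtype.range_val, fun _ _ => Iff.rfl, hatomistic, j, hleast, ?_, ?_, ?_, ?_, ?_, ?_, hatom⟩
  · -- injective
    intro x y hxy
    simpa only [jval1] using congrArg (fun z : Kt L a M => (z.val).1) hxy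
  · -- join
    intro x y
    refine le_antisymm ?_ ?_
    · exact (hjle _ _).mpr (sup_le ((hjle x _).mp le_sup_left) ((hjle y _).mp le_sup_right))
    · refine sup_le ((hjle x (j (x ⊔ y))).mpr ?_) ((hjle y (j (x ⊔ y))).mpr ?_)
      · rw [jval1]; exact le_sup_left
      · rw [jval1]; exact le_sup_right
  · -- meet
    intro x y
    have hval : (j x ⊓ j y).val = (j x).val ⊓ (j y).val := rfl
    refine Subtype.ext (Prod.ext ?_ ?_)
    · rw [hval]
      show (j (x ⊓ y)).val.1 = (j x).val.1 ⊓ (j y).val.1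
      rw [jval1, jval1, jval1]
    · rw [hval]
      show (j (x ⊓ y)).val.2 = (j x).val.2 ⊓ (j y).val.2
      by_cases hx : a ≤ x <;> by_cases hy : a ≤ y
      · have hxy : a ≤ x ⊓ y := le_inf hx hy
        rw [(jval2 _).mpr hxy, (jval2 x).mpr hx, (jval2 y).mpr hy]; rfl
      · have hxy : ¬ a ≤ x ⊓ y := fun hc => hy (hc.trans inf_le_right)
        have e1 : (j (x ⊓ y)).val.2 = false := by
          cases hb : (j (x ⊓ y)).val.2
          · rfl
          · exact absurd ((jval2 _).mp hb) hxy
        have e2 : (j y).val.2 = false := by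
          cases hb : (j y).val.2
          · rfl
          · exact absurd ((jval2 _).mp hb) hy
        rw [e1, e2, bool_inf_and]; simp
      · have hxy : ¬ a ≤ x ⊓ y := fun hc => hx (hc.trans inf_le_left)
        have e1 : (j (x ⊓ y)).val.2 = false := by
          cases hb : (j (x ⊓ y)).val.2
          · rfl
          · exact absurd ((jval2 _).mp hb) hxy
        have e2 : (j x).val.2 = false := by
          cases hb : (j x).val.2
          · rfl
          · exact absurd ((jval2 _).mp hb) hx
        rw [e1, e2, bool_inf_and]; rfl
      · have hxy : ¬ a ≤ x ⊓ y := fun hc => hx (hc.trans inf_le_left)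
        have e1 : (j (x ⊓ y)).val.2 = false := by
          cases hb : (j (x ⊓ y)).val.2
          · rfl
          · exact absurd ((jval2 _).mp hb) hxy
        have e2 : (j x).val.2 = false := by
          cases hb : (j x).val.2
          · rfl
          · exact absurd ((jval2 _).mp hb) hx
        rw [e1, e2, bool_inf_and]; rfl
  · -- bot
    have hna : ¬ a ≤ (⊥ : L) := fun hc => habot (le_bot_iff.mp hc)
    apply Subtype.ext
    rw [hbotval, hj]; dsimp only; rw [dif_neg hna]
  · -- top
    apply Subtype.ext
    show (j ⊤).val = ((⊤ : L), true)
    rw [hj]; dsimp only; rw [dif_pos le_top]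
  · -- atoms preserved
    intro x
    rw [hatom (j x)]
    constructor
    · rintro (⟨q, hq, hval⟩ | hval)
      · have hxq : x = q := by
          have := congrArg Prod.fst hval
          rwa [jval1] at this
        exact hxq ▸ hq
      · exfalso
        have h2 : (j x).val.2 = true := congrArg Prod.snd hval
        have hax : a ≤ x := (jval2 x).mp h2
        have h1 : x = ⊥ := by
          have := congrArg Prod.fst hval
          rwa [jval1] at this
        exact habot (le_bot_iff.mp (h1 ▸ hax))
    · intro hx
      have hnax : ¬ a ≤ x := hnal hx
      left
      refine ⟨x, hx, ?_⟩
      rw [hj]; dsimp only; rw [dif_neg hnax]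
end

section
/- Let L be a finite, atomistic, join-semidistributive lattice, let (a;M) be an extension pair of L with associated closure operator f (f(x) = least element of M above x). Then L(a;M) is join-semidistributive if and only if (i) every maximal element of L \ [a,1] belongs to M, and (ii) for all x ∈ L and all distinct atoms u, v of L, f(x ∨ u) = f(x ∨ v) implies u ≤ f(x). -/
/-- In a finite lattice with enough "atoms" (in the sense of `H1`), if no element `p` and
distinct atoms `u ≠ v` satisfy `p ⊔ u = p ⊔ v > p`, then the lattice is
join-semidistributive. -/
lemma key_jsd {K : Type*} [Lattice K] [Finite K] (At : K → Prop)
    (H1 : ∀ y w : K, ¬ y ≤ w → ∃ u, At u ∧ u ≤ y ∧ ¬ u ≤ w)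
    (H2 : ∀ p u v : K, At u → At v → u ≠ v → p ⊔ u = p ⊔ v → p ⊔ u = p) :
    JoinSemidistributive K := by
  intro x y z hyz
  by_contra hne
  set d := x ⊔ y with hd
  set w := x ⊔ (y ⊓ z) with hw
  have hwd : w ≤ d := sup_le_sup_left inf_le_left x
  have hwlt : w < d := lt_of_le_of_ne hwd fun hc => hne hc.symm
  obtain ⟨w', hw'S, hmax⟩ := Set.Finite.exists_maximalFor id {t : K | w ≤ t ∧ t < d}
    (Set.toFinite _) ⟨w, le_refl w, hwlt⟩
  obtain ⟨hww', hw'd⟩ := hw'S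
  have hxw' : x ≤ w' := le_trans le_sup_left hww'
  have hy : ¬ y ≤ w' := fun hc => absurd (sup_le hxw' hc) (not_le_of_gt hw'd)
  have hz : ¬ z ≤ w' := fun hc => absurd (hyz ▸ sup_le hxw' hc : d ≤ w') (not_le_of_gt hw'd)
  obtain ⟨u, hAu, huy, huw⟩ := H1 y w' hy
  obtain ⟨v, hAv, hvz, hvw⟩ := H1 z w' hz
  have huv : u ≠ v := by
    rintro rfl
    exact huw (le_trans (le_trans (le_inf huy hvz) le_sup_right) hww')
  have hsup : ∀ t : K, t ≤ y ⊔ z → ¬ t ≤ w' → w' ⊔ t = d := by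
    intro t htyz htw
    have h1 : w' ⊔ t ≤ d := sup_le (le_of_lt hw'd) (le_trans htyz (sup_le le_sup_right
      (by rw [hyz]; exact le_sup_right)))
    rcases lt_or_eq_of_le h1 with hlt | heq
    · have heq' : w' = w' ⊔ t := le_antisymm le_sup_left (hmax (j := w' ⊔ t) ⟨le_trans hww' le_sup_left, hlt⟩ le_sup_left)
      exact absurd (heq' ▸ le_sup_right : t ≤ w') htw
    · exact heq
  have hu' : w' ⊔ u = d := hsup u (le_trans huy le_sup_left) huw
  have hv' : w' ⊔ v = d := hsup v (le_trans hvz le_sup_right) hvw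
  have := H2 w' u v hAu hAv huv (hu'.trans hv'.symm)
  rw [hu'] at this
  exact absurd this.le (not_le_of_gt hw'd)

/-- `L(a;M)` (presented as a lattice `K` order-isomorphic to the
subposet `LaMSet L a M` of `L × 2`) is join-semidistributive iff (i) every
maximal element of `L \ [a,⊤]` belongs to `M`, and (ii) for all `x ∈ L` and
distinct atoms `u, v`, `f(x ⊔ u) = f(x ⊔ v)` implies `u ≤ f x`, where `f` is
the closure operator associated with `M`. -/
theorem stmt_9 (L : Type) [Lattice L] [Fintype L] [BoundedOrder L]
    (hA : AtomisticLat L) (hSD : JoinSemidistributive L)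
    (a : L) (M : Set L) (h : ExtensionPair L a M)
    (f : L → L) (hf : ∀ x : L, IsLeast {y : L | y ∈ M ∧ x ≤ y} (f x))
    (K : Type) [Lattice K] (e : K → L × Bool)
    (hrange : Set.range e = LaMSet L a M)
    (hmono : ∀ x y : K, x ≤ y ↔ e x ≤ e y) :
    JoinSemidistributive K ↔
      ((∀ x : L, ¬ a ≤ x → (∀ y : L, ¬ a ≤ y → x ≤ y → x = y) → x ∈ M) ∧
       ∀ x u v : L, IsAtom u → IsAtom v → u ≠ v →
         f (x ⊔ u) = f (x ⊔ v) → u ≤ f x) := by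
  obtain ⟨ha0, hana, hMeet, hbotM, haM⟩ := h
  have fm : ∀ x : L, f x ∈ M := fun x => (hf x).1.1
  have fle : ∀ x : L, x ≤ f x := fun x => (hf x).1.2
  have fmin : ∀ x y : L, y ∈ M → x ≤ y → f x ≤ y := fun x y hy hxy => (hf x).2 ⟨hy, hxy⟩
  have ffix : ∀ x : L, x ∈ M → f x = x := fun x hx => le_antisymm (fmin x x hx le_rfl) (fle x)
  have einj : Function.Injective e := fun p q hpq =>
    le_antisymm ((hmono p q).2 hpq.le) ((hmono q p).2 hpq.ge)
  have emem : ∀ k : K, e k ∈ LaMSet L a M := fun k => hrange ▸ Set.mem_range_self k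
  have esurj : ∀ p ∈ LaMSet L a M, ∃ k : K, e k = p := by
    intro p hp
    rw [← hrange] at hp
    exact hp
  have atom_na : ∀ u : L, IsAtom u → ¬ a ≤ u := by
    intro u hu hau
    rcases lt_or_eq_of_le hau with hlt | heq
    · exact ha0 (hu.2 a hlt)
    · rw [← heq] at hu; exact hana hu
  have hdisj : ∀ u v : L, IsAtom u → IsAtom v → u ≠ v → u ⊓ v = ⊥ := by
    intro u v hu hv huv
    rcases lt_or_eq_of_le (inf_le_left : u ⊓ v ≤ u) with hlt | heq
    · exact hu.2 _ hlt
    · exfalso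
      have hle : u ≤ v := heq ▸ inf_le_right
      rcases hv.le_iff.mp hle with hb | hb
      · exact hu.1 hb
      · exact huv hb
  have hatomL : ∀ y w : L, ¬ y ≤ w → ∃ u : L, IsAtom u ∧ u ≤ y ∧ ¬ u ≤ w := by
    intro y w hyw
    obtain ⟨s, hs, hlub⟩ := hA y
    by_contra hc
    push_neg at hc
    exact hyw (hlub.2 fun p hp => hc p (hs p hp) (hlub.1 hp))
  have hjoinT : ∀ P Q : K, ((e P).2 = true ∨ (e Q).2 = true ∨ a ≤ (e P).1 ⊔ (e Q).1) →
      e (P ⊔ Q) = (f ((e P).1 ⊔ (e Q).1), true) := by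
    intro P Q hcase
    obtain ⟨R, hR⟩ := esurj (f ((e P).1 ⊔ (e Q).1), true) (Or.inr ⟨rfl, fm _⟩)
    have hPR : P ≤ R := (hmono P R).2 (by
      rw [hR]
      exact Prod.le_def.mpr ⟨le_trans le_sup_left (fle _), Bool.le_true _⟩)
    have hQR : Q ≤ R := (hmono Q R).2 (by
      rw [hR]
      exact Prod.le_def.mpr ⟨le_trans le_sup_right (fle _), Bool.le_true _⟩)
    have h1 : e (P ⊔ Q) ≤ (f ((e P).1 ⊔ (e Q).1), true) :=
      hR ▸ (hmono (P ⊔ Q) R).1 (sup_le hPR hQR)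
    have hP2 := Prod.le_def.mp ((hmono P (P ⊔ Q)).1 le_sup_left)
    have hQ2 := Prod.le_def.mp ((hmono Q (P ⊔ Q)).1 le_sup_right)
    rcases emem (P ⊔ Q) with ⟨h2f, h2a⟩ | ⟨h2t, h2M⟩
    · exfalso
      rcases hcase with hc | hc | hc
      · have hb := hP2.2
        rw [hc, h2f] at hb
        exact absurd hb (by decide)
      · have hb := hQ2.2
        rw [hc, h2f] at hb
        exact absurd hb (by decide)
      · exact h2a (le_trans hc (sup_le hP2.1 hQ2.1))
    · refine le_antisymm h1 (Prod.le_def.mpr ⟨fmin _ _ h2M (sup_le hP2.1 hQ2.1), ?_⟩)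
      rw [h2t]
  have hjoinF : ∀ P Q : K, (e P).2 = false → (e Q).2 = false → ¬ a ≤ (e P).1 ⊔ (e Q).1 →
      e (P ⊔ Q) = ((e P).1 ⊔ (e Q).1, false) := by
    intro P Q hPf hQf hna
    obtain ⟨R, hR⟩ := esurj ((e P).1 ⊔ (e Q).1, false) (Or.inl ⟨rfl, hna⟩)
    have hPR : P ≤ R := (hmono P R).2 (by
      rw [hR]
      exact Prod.le_def.mpr ⟨le_sup_left, by rw [hPf]⟩)
    have hQR : Q ≤ R := (hmono Q R).2 (by
      rw [hR]
      exact Prod.le_def.mpr ⟨le_sup_right, by rw [hQf]⟩)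
    have h1 : e (P ⊔ Q) ≤ ((e P).1 ⊔ (e Q).1, false) :=
      hR ▸ (hmono (P ⊔ Q) R).1 (sup_le hPR hQR)
    have hP2 := Prod.le_def.mp ((hmono P (P ⊔ Q)).1 le_sup_left)
    have hQ2 := Prod.le_def.mp ((hmono Q (P ⊔ Q)).1 le_sup_right)
    exact le_antisymm h1 (Prod.le_def.mpr ⟨sup_le hP2.1 hQ2.1, Bool.false_le _⟩)
  have hmeet : ∀ U V : K, ((e U).2 = false ∨ (e V).2 = false) → (e U).1 ⊓ (e V).1 = ⊥ →
      ∀ P : K, P ⊔ (U ⊓ V) = P := by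
    intro U V hb hbot P
    have h1 := Prod.le_def.mp ((hmono (U ⊓ V) U).1 inf_le_left)
    have h2 := Prod.le_def.mp ((hmono (U ⊓ V) V).1 inf_le_right)
    have hfst : (e (U ⊓ V)).1 ≤ (e P).1 :=
      le_trans (le_trans (le_inf h1.1 h2.1) (le_of_eq hbot)) bot_le
    have hsnd : (e (U ⊓ V)).2 ≤ (e P).2 := by
      have hfalse : (e (U ⊓ V)).2 = false := by
        rcases hb with hb | hb
        · exact le_antisymm (hb ▸ h1.2) (Bool.false_le _)
        · exact le_antisymm (hb ▸ h2.2) (Bool.false_le _)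
      rw [hfalse]
      exact Bool.false_le _
    exact sup_eq_left.mpr ((hmono (U ⊓ V) P).2 (Prod.le_def.mpr ⟨hfst, hsnd⟩))
  constructor
  · intro hjsd
    constructor
    · -- (i)
      intro x hax hmaxx
      by_contra hxM
      have hlt : x < f x := lt_of_le_of_ne (fle x) fun hc => hxM (by rw [hc]; exact fm x)
      obtain ⟨u, hu, hufx, hux⟩ := hatomL (f x) x (not_le_of_gt hlt)
      obtain ⟨P, hP⟩ := esurj (x, false) (Or.inl ⟨rfl, hax⟩)
      obtain ⟨U, hU⟩ := esurj (u, false) (Or.inl ⟨rfl, atom_na u hu⟩)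
      obtain ⟨V, hV⟩ := esurj ((⊥ : L), true) (Or.inr ⟨rfl, hbotM⟩)
      have haxu : a ≤ x ⊔ u := by
        by_contra hc
        have heq := hmaxx (x ⊔ u) hc le_sup_left
        exact hux (by rw [heq]; exact le_sup_right)
      have hxua : x ⊔ u = f x :=
        le_antisymm (sup_le (fle x) hufx) (fmin x _ (haM _ haxu) le_sup_left)
      have h1 : e (P ⊔ U) = (f (x ⊔ u), true) := by
        simpa [hP, hU] using hjoinT P U (by rw [hP, hU]; exact Or.inr (Or.inr haxu))
      have h2 : e (P ⊔ V) = (f (x ⊔ ⊥), true) := by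
        simpa [hP, hV] using hjoinT P V (by rw [hV]; exact Or.inr (Or.inl rfl))
      have h12 : P ⊔ U = P ⊔ V := by
        apply einj
        rw [h1, h2, sup_bot_eq, hxua, ffix _ (fm x)]
      have hPUV := hjsd P U V h12
      rw [hmeet U V (Or.inl (by rw [hU])) (by rw [hU, hV]; simp) P] at hPUV
      rw [hPUV, hP] at h1
      simp at h1
    · -- (ii)
      intro x u v hu hv huv hff
      obtain ⟨P, hP⟩ := esurj (f x, true) (Or.inr ⟨rfl, fm x⟩)
      obtain ⟨U, hU⟩ := esurj (u, false) (Or.inl ⟨rfl, atom_na u hu⟩)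
      obtain ⟨V, hV⟩ := esurj (v, false) (Or.inl ⟨rfl, atom_na v hv⟩)
      have hkey : ∀ w : L, f (f x ⊔ w) = f (x ⊔ w) := by
        intro w
        apply le_antisymm
        · exact fmin _ _ (fm _) (sup_le (fmin x _ (fm _)
            (le_trans le_sup_left (fle _))) (le_trans le_sup_right (fle _)))
        · exact fmin _ _ (fm _) (le_trans (sup_le_sup_right (fle x) w) (fle _))
      have h1 : e (P ⊔ U) = (f (f x ⊔ u), true) := by
        simpa [hP, hU] using hjoinT P U (by rw [hP]; exact Or.inl rfl)
      have h2 : e (P ⊔ V) = (f (f x ⊔ v), true) := by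
        simpa [hP, hV] using hjoinT P V (by rw [hP]; exact Or.inl rfl)
      have h12 : P ⊔ U = P ⊔ V := by
        apply einj
        rw [h1, h2, hkey, hkey, hff]
      have hPUV := hjsd P U V h12
      rw [hmeet U V (Or.inl (by rw [hU]))
        (by rw [hU, hV]; simpa using hdisj u v hu hv huv) P] at hPUV
      rw [hPUV, hP] at h1
      have hfeq : f (f x ⊔ u) = f x := ((Prod.ext_iff.mp h1).1).symm
      rw [hkey] at hfeq
      exact le_trans (le_trans le_sup_right (fle (x ⊔ u))) hfeq.le
  · rintro ⟨hi, hii⟩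
    have hstar : ∀ x : L, ¬ a ≤ x → ¬ a ≤ f x := by
      intro x hax hafx
      obtain ⟨c, ⟨hxc, hac⟩, hcmax⟩ := Set.Finite.exists_maximalFor id
        {z : L | x ≤ z ∧ ¬ a ≤ z} (Set.toFinite _) ⟨x, le_rfl, hax⟩
      have hcM : c ∈ M := hi c hac fun y hy hcy => le_antisymm hcy (hcmax (j := y) ⟨le_trans hxc hcy, hy⟩ hcy)
      exact hac (le_trans hafx (fmin x c hcM hxc))
    have : Finite K := Finite.of_injective e einj
    apply key_jsd (fun U : K => (∃ u : L, IsAtom u ∧ e U = (u, false)) ∨ e U = ((⊥ : L), true))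
    · -- H1
      intro y w hyw
      have hyw' : ¬ e y ≤ e w := fun hc => hyw ((hmono y w).2 hc)
      by_cases h1 : (e y).1 ≤ (e w).1
      · have h2 : ¬ (e y).2 ≤ (e w).2 := fun hc => hyw' (Prod.le_def.mpr ⟨h1, hc⟩)
        obtain ⟨hyt, hwf⟩ : (e y).2 = true ∧ (e w).2 = false := by
          revert h2
          cases (e y).2 <;> cases (e w).2 <;> simp
        obtain ⟨U, hU⟩ := esurj ((⊥ : L), true) (Or.inr ⟨rfl, hbotM⟩)
        refine ⟨U, Or.inr hU, (hmono U y).2 ?_, fun hc => ?_⟩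
        · rw [hU]
          exact Prod.le_def.mpr ⟨bot_le, by rw [hyt]⟩
        · have hb := (Prod.le_def.mp ((hmono U w).1 hc)).2
          rw [hU, hwf] at hb
          exact (by decide : ¬ ((true : Bool) ≤ false)) hb
      · obtain ⟨u, hu, huy, huw⟩ := hatomL _ _ h1
        obtain ⟨U, hU⟩ := esurj (u, false) (Or.inl ⟨rfl, atom_na u hu⟩)
        refine ⟨U, Or.inl ⟨u, hu, hU⟩, (hmono U y).2 ?_, fun hc => ?_⟩
        · rw [hU]
          exact Prod.le_def.mpr ⟨huy, Bool.false_le _⟩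
        · refine huw ?_
          have hb := (Prod.le_def.mp ((hmono U w).1 hc)).1
          rwa [hU] at hb
    · -- H2
      intro P U V hAU hAV hUV hPUV
      apply einj
      have hePUV := congrArg e hPUV
      rcases emem P with ⟨hPf, hPa⟩ | ⟨hPt, hPM⟩
      · -- P of the form (x, false), ¬ a ≤ x
        rcases hAU with ⟨u, hu, hU⟩ | hU
        · by_cases hau : a ≤ (e P).1 ⊔ u
          · have h1 : e (P ⊔ U) = (f ((e P).1 ⊔ u), true) := by
              simpa [hU] using hjoinT P U (by rw [hU]; exact Or.inr (Or.inr hau))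
            rcases hAV with ⟨v, hv, hV⟩ | hV
            · by_cases hav : a ≤ (e P).1 ⊔ v
              · have h2 : e (P ⊔ V) = (f ((e P).1 ⊔ v), true) := by
                  simpa [hV] using hjoinT P V (by rw [hV]; exact Or.inr (Or.inr hav))
                rw [h1, h2] at hePUV
                have hfeq : f ((e P).1 ⊔ u) = f ((e P).1 ⊔ v) := (Prod.ext_iff.mp hePUV).1
                have hune : u ≠ v := fun hc => hUV (einj (by rw [hU, hV, hc]))
                have husub := hii (e P).1 u v hu hv hune hfeq
                exact ((hstar _ hPa) (le_trans hau (sup_le (fle _) husub))).elim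
              · have h2 : e (P ⊔ V) = ((e P).1 ⊔ v, false) := by
                  simpa [hV] using hjoinF P V hPf (by rw [hV]) (by rw [hV]; exact hav)
                rw [h1, h2] at hePUV
                simp at hePUV
            · have h2 : e (P ⊔ V) = (f ((e P).1 ⊔ ⊥), true) := by
                simpa [hV] using hjoinT P V (by rw [hV]; exact Or.inr (Or.inl rfl))
              rw [sup_bot_eq] at h2
              rw [h1, h2] at hePUV
              have hfeq : f ((e P).1 ⊔ u) = f (e P).1 := (Prod.ext_iff.mp hePUV).1
              exact ((hstar _ hPa) (le_trans (le_trans hau (fle _)) hfeq.le)).elim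
          · have h1 : e (P ⊔ U) = ((e P).1 ⊔ u, false) := by
              simpa [hU] using hjoinF P U hPf (by rw [hU]) (by rw [hU]; exact hau)
            rcases hAV with ⟨v, hv, hV⟩ | hV
            · by_cases hav : a ≤ (e P).1 ⊔ v
              · have h2 : e (P ⊔ V) = (f ((e P).1 ⊔ v), true) := by
                  simpa [hV] using hjoinT P V (by rw [hV]; exact Or.inr (Or.inr hav))
                rw [h1, h2] at hePUV
                simp at hePUV
              · have h2 : e (P ⊔ V) = ((e P).1 ⊔ v, false) := by
                  simpa [hV] using hjoinF P V hPf (by rw [hV]) (by rw [hV]; exact hav)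
                rw [h1, h2] at hePUV
                have hsupeq : (e P).1 ⊔ u = (e P).1 ⊔ v := (Prod.ext_iff.mp hePUV).1
                have hune : u ≠ v := fun hc => hUV (einj (by rw [hU, hV, hc]))
                have hx := hSD (e P).1 u v hsupeq
                rw [hdisj u v hu hv hune, sup_bot_eq] at hx
                rw [h1, hx]
                exact Prod.ext_iff.mpr ⟨rfl, hPf.symm⟩
            · have h2 : e (P ⊔ V) = (f ((e P).1 ⊔ ⊥), true) := by
                simpa [hV] using hjoinT P V (by rw [hV]; exact Or.inr (Or.inl rfl))
              rw [h1, h2] at hePUV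
              simp at hePUV
        · -- U = (⊥, true)
          have h1 : e (P ⊔ U) = (f ((e P).1 ⊔ ⊥), true) := by
            simpa [hU] using hjoinT P U (by rw [hU]; exact Or.inr (Or.inl rfl))
          rw [sup_bot_eq] at h1
          rcases hAV with ⟨v, hv, hV⟩ | hV
          · by_cases hav : a ≤ (e P).1 ⊔ v
            · have h2 : e (P ⊔ V) = (f ((e P).1 ⊔ v), true) := by
                simpa [hV] using hjoinT P V (by rw [hV]; exact Or.inr (Or.inr hav))
              rw [h1, h2] at hePUV
              have hfeq : f (e P).1 = f ((e P).1 ⊔ v) := (Prod.ext_iff.mp hePUV).1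
              exact ((hstar _ hPa) (le_trans (le_trans hav (fle _)) hfeq.symm.le)).elim
            · have h2 : e (P ⊔ V) = ((e P).1 ⊔ v, false) := by
                simpa [hV] using hjoinF P V hPf (by rw [hV]) (by rw [hV]; exact hav)
              rw [h1, h2] at hePUV
              simp at hePUV
          · exact absurd (einj (hU.trans hV.symm)) hUV
      · -- P of the form (x, true), x ∈ M
        have hfP : f (e P).1 = (e P).1 := ffix _ hPM
        rcases hAU with ⟨u, hu, hU⟩ | hU
        · have h1 : e (P ⊔ U) = (f ((e P).1 ⊔ u), true) := by
            simpa [hU] using hjoinT P U (Or.inl hPt)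
          rcases hAV with ⟨v, hv, hV⟩ | hV
          · have h2 : e (P ⊔ V) = (f ((e P).1 ⊔ v), true) := by
              simpa [hV] using hjoinT P V (Or.inl hPt)
            rw [h1, h2] at hePUV
            have hfeq : f ((e P).1 ⊔ u) = f ((e P).1 ⊔ v) := (Prod.ext_iff.mp hePUV).1
            have hune : u ≠ v := fun hc => hUV (einj (by rw [hU, hV, hc]))
            have husub := hii (e P).1 u v hu hv hune hfeq
            rw [hfP] at husub
            rw [h1, sup_eq_left.mpr husub, hfP]
            exact Prod.ext_iff.mpr ⟨rfl, hPt.symm⟩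
          · have h2 : e (P ⊔ V) = (f ((e P).1 ⊔ ⊥), true) := by
              simpa [hV] using hjoinT P V (Or.inl hPt)
            rw [sup_bot_eq, hfP] at h2
            rw [h1, h2] at hePUV
            have hfeq : f ((e P).1 ⊔ u) = (e P).1 := (Prod.ext_iff.mp hePUV).1
            rw [h1, hfeq]
            exact Prod.ext_iff.mpr ⟨rfl, hPt.symm⟩
        · have h1 : e (P ⊔ U) = (f ((e P).1 ⊔ ⊥), true) := by
            simpa [hU] using hjoinT P U (Or.inl hPt)
          rw [sup_bot_eq, hfP] at h1
          rw [h1]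
          exact Prod.ext_iff.mpr ⟨rfl, hPt.symm⟩
end

section
/- A finite atomistic lattice K is join-semidistributive if and only if there are no element x ∈ K and distinct atoms u, v of K such that x ∨ u = x ∨ v > x. -/
theorem stmt_10 (K : Type) [Lattice K] [Fintype K] [OrderBot K]
    (hA : AtomisticLat K) :
    JoinSemidistributive K ↔
      ¬ ∃ (x u v : K), IsAtom u ∧ IsAtom v ∧ u ≠ v ∧
        x ⊔ u = x ⊔ v ∧ x < x ⊔ u := by
  constructor
  · rintro hJ ⟨x, u, v, hu, hv, huv, hxy, hlt⟩
    have hinf : u ⊓ v = ⊥ := by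
      rcases (hv.le_iff.mp inf_le_right) with h | h
      · exact h
      · have hvu : v ≤ u := h ▸ inf_le_left
        rcases (hu.le_iff.mp hvu) with h2 | h2
        · exact absurd h2 hv.1
        · exact absurd h2.symm huv
    have := hJ x u v hxy
    rw [hinf, sup_bot_eq] at this
    rw [this] at hlt
    exact lt_irrefl x hlt
  · intro hC x y z hxyz
    by_contra hne
    have hlt : x ⊔ (y ⊓ z) < x ⊔ y :=
      lt_of_le_of_ne (sup_le le_sup_left (le_trans inf_le_left le_sup_right)) (Ne.symm hne)
    set S : Set K := {w | ∃ a c : K, w ⊔ a = w ⊔ c ∧ w ⊔ (a ⊓ c) < w ⊔ a} with hSdef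
    have hxS : x ∈ S := ⟨y, z, hxyz, hlt⟩
    obtain ⟨m, hmS, hmax0⟩ := Set.Finite.exists_maximalFor id S (Set.toFinite S) ⟨x, hxS⟩
    have hmax : ∀ a' ∈ S, id m ≤ id a' → id m = id a' := fun a' ha' h => le_antisymm h (hmax0 ha' h)
    obtain ⟨a, c, hac, haclt⟩ := hmS
    -- a ⊓ c ≤ m
    have hm1 : m ⊔ (a ⊓ c) = m := by
      have e1 : (a ⊓ c) ⊔ a = a := sup_of_le_right inf_le_left
      have e2 : (a ⊓ c) ⊔ c = c := sup_of_le_right inf_le_right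
      have hsup1 : (m ⊔ (a ⊓ c)) ⊔ a = m ⊔ a := by rw [sup_assoc, e1]
      have hsup2 : (m ⊔ (a ⊓ c)) ⊔ c = m ⊔ c := by rw [sup_assoc, e2]
      have hmem : m ⊔ (a ⊓ c) ∈ S := by
        refine ⟨a, c, ?_, ?_⟩
        · rw [hsup1, hsup2, hac]
        · rw [hsup1, sup_assoc, sup_idem]
          exact haclt
      exact (hmax _ hmem le_sup_left).symm
    have hacm : a ⊓ c ≤ m := le_trans le_sup_right (le_of_eq hm1)
    have hmlt : m < m ⊔ a := by rw [hm1] at haclt; exact haclt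
    have hmltc : m < m ⊔ c := by rwa [hac] at hmlt
    -- extract atoms not below m
    have hatom : ∀ w : K, m < m ⊔ w → ∃ u : K, IsAtom u ∧ u ≤ w ∧ ¬ u ≤ m := by
      intro w hw
      obtain ⟨s, hs_atoms, hs_lub⟩ := hA w
      by_contra h
      push_neg at h
      have hwm : w ≤ m := hs_lub.2 (fun p hp => h p (hs_atoms p hp) (hs_lub.1 hp))
      rw [sup_of_le_left hwm] at hw
      exact lt_irrefl m hw
    obtain ⟨u, hu, hua, hum⟩ := hatom a hmlt
    obtain ⟨v, hv, hvc, hvm⟩ := hatom c hmltc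
    -- key step: any atom t ≤ m ⊔ a with t ≰ m satisfies m ⊔ t = m ⊔ a
    have key : ∀ t : K, t ≤ m ⊔ a → ¬ t ≤ m → m ⊔ t = m ⊔ a := by
      intro t hta htm
      by_contra hne2
      have htle : m ⊔ t ≤ m ⊔ a := sup_le le_sup_left hta
      have htlt : m ⊔ t < m ⊔ a := lt_of_le_of_ne htle hne2
      have h1 : (m ⊔ t) ⊔ a = m ⊔ a :=
        le_antisymm (sup_le htle le_sup_right)
          (sup_le (le_trans le_sup_left le_sup_left) le_sup_right)
      have h2 : (m ⊔ t) ⊔ c = m ⊔ a := by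
        apply le_antisymm
        · exact sup_le htle (le_trans le_sup_right (le_of_eq hac.symm))
        · rw [hac]
          exact sup_le (le_trans le_sup_left le_sup_left) le_sup_right
      have h3 : (m ⊔ t) ⊔ (a ⊓ c) = m ⊔ t :=
        sup_of_le_left (le_trans hacm le_sup_left)
      have hmem : m ⊔ t ∈ S := ⟨a, c, by rw [h1, h2], by rw [h1, h3]; exact htlt⟩
      exact htm (le_trans le_sup_right (le_of_eq (hmax _ hmem le_sup_left).symm))
    have hu2 : m ⊔ u = m ⊔ a := key u (le_trans hua le_sup_right) hum
    have hv2 : m ⊔ v = m ⊔ a :=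
      key v (le_trans hvc (le_trans le_sup_right (le_of_eq hac.symm))) hvm
    have hne3 : u ≠ v := by
      intro h
      exact hum (le_trans (le_inf hua (h ▸ hvc)) hacm)
    exact hC ⟨m, u, v, hu, hv, hne3, hu2.trans hv2.symm, by rw [hu2]; exact hmlt⟩
end

section
/- Let L be a finite, atomistic, join-semidistributive lattice, let p, q be distinct atoms of L, let a ∈ L be neither 0 nor an atom, with p ≤ a ∨ q, p ≰ a, and p ≰ x ∨ q for all x < a. Define f : L → L by f(x) = x if q ≰ p ∨ x and f(x) = p ∨ x if q ≤ p ∨ x. Then f is a closure operator on L, and its range M together with a forms an extension pair (a;M) of L (i.e., M is a meet-subsemilattice of L containing {0} ∪ [a,1]). -/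
theorem stmt_11 (L : Type) [Lattice L] [Fintype L] [BoundedOrder L]
    (hA : AtomisticLat L) (hSD : JoinSemidistributive L)
    (p q a : L) (hp : IsAtom p) (hq : IsAtom q) (hpq : p ≠ q)
    (ha0 : a ≠ ⊥) (haAt : ¬ IsAtom a)
    (h1 : p ≤ a ⊔ q) (h2 : ¬ p ≤ a)
    (h3 : ∀ x : L, x < a → ¬ p ≤ x ⊔ q)
    (f : L → L)
    (hf1 : ∀ x : L, ¬ q ≤ p ⊔ x → f x = x)
    (hf2 : ∀ x : L, q ≤ p ⊔ x → f x = p ⊔ x) :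
    (∀ x : L, x ≤ f x) ∧
    (∀ x y : L, x ≤ y → f x ≤ f y) ∧
    (∀ x : L, f (f x) = f x) ∧
    ExtensionPair L a (Set.range f) := by
  have hext : ∀ x : L, x ≤ f x := by
    intro x
    by_cases h : q ≤ p ⊔ x
    · rw [hf2 x h]; exact le_sup_right
    · rw [hf1 x h]
  have hmono : ∀ x y : L, x ≤ y → f x ≤ f y := by
    intro x y hxy
    by_cases h : q ≤ p ⊔ x
    · have h' : q ≤ p ⊔ y := h.trans (sup_le_sup_left hxy p)
      rw [hf2 x h, hf2 y h']
      exact sup_le_sup_left hxy p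
    · rw [hf1 x h]; exact hxy.trans (hext y)
  have hidem : ∀ x : L, f (f x) = f x := by
    intro x
    by_cases h : q ≤ p ⊔ x
    · rw [hf2 x h]
      have h' : q ≤ p ⊔ (p ⊔ x) := h.trans (sup_le_sup_left le_sup_right p)
      rw [hf2 _ h', ← sup_assoc, sup_idem]
    · rw [hf1 x h, hf1 x h]
  have hpqbot : p ⊓ q = ⊥ := by
    rcases hp.le_iff.mp (inf_le_left : p ⊓ q ≤ p) with h | h
    · exact h
    · exfalso
      have hpq' : p ≤ q := h ▸ inf_le_right
      rcases hq.le_iff.mp hpq' with h' | h'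
      · exact hp.1 h'
      · exact hpq h'
  have hfix : ∀ x : L, q ≤ p ⊔ x → f x = x → p ≤ x := by
    intro x h hfx
    rw [hf2 x h] at hfx
    exact sup_eq_right.mp hfx
  refine ⟨hext, hmono, hidem, ha0, haAt, ?_, ?_, ?_⟩
  · rintro _ ⟨x, rfl⟩ _ ⟨y, rfl⟩
    have hu : f (f x) = f x := hidem x
    have hv : f (f y) = f y := hidem y
    by_cases h : q ≤ p ⊔ (f x ⊓ f y)
    · have hpu : p ≤ f x := hfix _ (h.trans (sup_le_sup_left inf_le_left p)) hu
      have hpv : p ≤ f y := hfix _ (h.trans (sup_le_sup_left inf_le_right p)) hv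
      refine ⟨f x ⊓ f y, ?_⟩
      rw [hf2 _ h, sup_eq_right.mpr (le_inf hpu hpv)]
    · exact ⟨f x ⊓ f y, hf1 _ h⟩
  · refine ⟨⊥, ?_⟩
    apply hf1
    intro hqp
    rw [sup_bot_eq] at hqp
    rcases hp.le_iff.mp hqp with h' | h'
    · exact hq.1 h'
    · exact hpq h'.symm
  · intro x hax
    refine ⟨x, ?_⟩
    by_cases h : q ≤ p ⊔ x
    · rw [hf2 x h]
      have hle1 : x ⊔ q ≤ x ⊔ p := sup_le le_sup_left (h.trans (sup_comm p x).le)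
      have hle2 : x ⊔ p ≤ x ⊔ q :=
        sup_le le_sup_left (h1.trans (sup_le (hax.trans le_sup_left) le_sup_right))
      have heq : x ⊔ p = x ⊔ q := le_antisymm hle2 hle1
      have := hSD x p q heq
      rw [hpqbot, sup_bot_eq] at this
      have hpx : p ≤ x := sup_eq_left.mp this
      rw [sup_comm]
      exact sup_eq_left.mpr hpx
    · exact hf1 x h
end

section
/- Let L be a finite, atomistic, join-semidistributive lattice, p, q distinct atoms, a ∈ L neither 0 nor an atom, with p ≤ a ∨ q, p ≰ a, and p ≰ x ∨ q for all x < a. Let f(x) = x if q ≰ p ∨ x, and f(x) = p ∨ x otherwise, and let M be the range of f. Then the one-atom extension L(a;M) is join-semidistributive, and its new atom p* satisfies p ≤ p* ∨ q (indeed p < p* ∨ q) and p* < a. -/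
section StmtAux

variable {L : Type} [Lattice L] [BoundedOrder L] {p q a : L} {f : L → L}

lemma stmt12_f_le (hf1 : ∀ x : L, ¬ q ≤ p ⊔ x → f x = x)
    (hf2 : ∀ x : L, q ≤ p ⊔ x → f x = p ⊔ x) (x : L) : x ≤ f x := by
  by_cases h : q ≤ p ⊔ x
  · rw [hf2 x h]; exact le_sup_right
  · rw [hf1 x h]

lemma stmt12_f_min (hf1 : ∀ x : L, ¬ q ≤ p ⊔ x → f x = x)
    (hf2 : ∀ x : L, q ≤ p ⊔ x → f x = p ⊔ x) {x v : L}
    (hv : v ∈ Set.range f) (hxv : x ≤ v) : f x ≤ v := by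
  obtain ⟨u, rfl⟩ := hv
  by_cases h : q ≤ p ⊔ x
  · by_cases h' : q ≤ p ⊔ u
    · rw [hf2 u h'] at hxv ⊢
      rw [hf2 x h]
      exact sup_le le_sup_left hxv
    · exfalso
      rw [hf1 u h'] at hxv
      exact h' (le_trans h (sup_le le_sup_left (hxv.trans le_sup_right)))
  · rw [hf1 x h]; exact hxv

lemma stmt12_p_le (hf1 : ∀ x : L, ¬ q ≤ p ⊔ x → f x = x)
    (hf2 : ∀ x : L, q ≤ p ⊔ x → f x = p ⊔ x) {v : L}
    (hv : v ∈ Set.range f) (h : q ≤ p ⊔ v) : p ≤ v := by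
  have h2 : f v ≤ v := stmt12_f_min hf1 hf2 hv le_rfl
  rw [hf2 v h] at h2
  exact le_trans le_sup_left h2

lemma stmt12_inf_closed (hf1 : ∀ x : L, ¬ q ≤ p ⊔ x → f x = x)
    (hf2 : ∀ x : L, q ≤ p ⊔ x → f x = p ⊔ x) {u v : L}
    (hu : u ∈ Set.range f) (hv : v ∈ Set.range f) :
    u ⊓ v ∈ Set.range f := by
  by_cases h : q ≤ p ⊔ (u ⊓ v)
  · have hpu : p ≤ u := stmt12_p_le hf1 hf2 hu (h.trans (sup_le_sup_left inf_le_left p))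
    have hpv : p ≤ v := stmt12_p_le hf1 hf2 hv (h.trans (sup_le_sup_left inf_le_right p))
    exact ⟨u ⊓ v, by rw [hf2 _ h, sup_eq_right.mpr (le_inf hpu hpv)]⟩
  · exact ⟨u ⊓ v, hf1 _ h⟩

lemma stmt12_atom_inf (hp : IsAtom p) (hq : IsAtom q) (hpq : p ≠ q) : p ⊓ q = ⊥ := by
  rcases hq.le_iff.mp inf_le_right with h | h
  · exact h
  · exfalso
    have hqp : q ≤ p := by rw [← h]; exact inf_le_left
    rcases hp.le_iff.mp hqp with h' | h'
    · exact hq.1 h'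
    · exact hpq h'.symm

lemma stmt12_key (hSD : JoinSemidistributive L) (hp : IsAtom p) (hq : IsAtom q)
    (hpq : p ≠ q) (h1 : p ≤ a ⊔ q) (h2 : ¬ p ≤ a)
    (hf1 : ∀ x : L, ¬ q ≤ p ⊔ x → f x = x)
    (hf2 : ∀ x : L, q ≤ p ⊔ x → f x = p ⊔ x) {m : L} (h : a ≤ f m) : a ≤ m := by
  by_cases hqm : q ≤ p ⊔ m
  · rw [hf2 m hqm] at h
    have hpa : p ⊓ a = ⊥ := by
      rcases hp.le_iff.mp inf_le_left with h' | h'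
      · exact h'
      · exact absurd (by rw [← h']; exact inf_le_right) h2
    have hqp : q ⊓ p = ⊥ := by
      rw [inf_comm]; exact stmt12_atom_inf hp hq hpq
    have e1 : (q ⊔ m) ⊔ p = p ⊔ m :=
      le_antisymm (sup_le (sup_le hqm le_sup_right) le_sup_left)
        (sup_le le_sup_right (le_sup_right.trans le_sup_left))
    have e2 : (q ⊔ m) ⊔ a = p ⊔ m :=
      le_antisymm (sup_le (sup_le hqm le_sup_right) h)
        (sup_le (h1.trans (sup_le le_sup_right (le_sup_left.trans le_sup_left)))
          (le_sup_right.trans le_sup_left))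
    have e3 := hSD (q ⊔ m) p a (e1.trans e2.symm)
    rw [hpa, sup_bot_eq] at e3
    have e4 : q ⊔ m = p ⊔ m := e3.symm.trans e1
    have e5 := hSD m q p (by rw [sup_comm m q, sup_comm m p]; exact e4)
    rw [hqp, sup_bot_eq] at e5
    have hpm : p ≤ m := by
      have hh : p ≤ q ⊔ m := by rw [e4]; exact le_sup_left
      rwa [sup_comm q m, e5] at hh
    exact h.trans (sup_le hpm le_rfl)
  · rwa [hf1 m hqm] at h

lemma stmt12_crux (hSD : JoinSemidistributive L)
    (hf1 : ∀ x : L, ¬ q ≤ p ⊔ x → f x = x)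
    (hf2 : ∀ x : L, q ≤ p ⊔ x → f x = p ⊔ x)
    {x y z : L} (h : f (x ⊔ y) = f (x ⊔ z)) : f (x ⊔ (y ⊓ z)) = f (x ⊔ y) := by
  by_cases hy : q ≤ p ⊔ (x ⊔ y) <;> by_cases hz : q ≤ p ⊔ (x ⊔ z)
  · rw [hf2 _ hy, hf2 _ hz] at h
    have h' : (p ⊔ x) ⊔ y = (p ⊔ x) ⊔ z := by
      rw [sup_assoc, sup_assoc]; exact h
    have h2' := hSD (p ⊔ x) y z h'
    have hm : p ⊔ (x ⊔ (y ⊓ z)) = p ⊔ (x ⊔ y) := by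
      rw [← sup_assoc, ← h2', sup_assoc]
    have hq' : q ≤ p ⊔ (x ⊔ (y ⊓ z)) := by rw [hm]; exact hy
    rw [hf2 _ hq', hf2 _ hy, hm]
  · exfalso
    rw [hf2 _ hy, hf1 _ hz] at h
    have hh : q ≤ x ⊔ z := by rw [← h]; exact hy
    exact hz (hh.trans le_sup_right)
  · exfalso
    rw [hf1 _ hy, hf2 _ hz] at h
    have hh : q ≤ x ⊔ y := by rw [h]; exact hz
    exact hy (hh.trans le_sup_right)
  · rw [hf1 _ hy, hf1 _ hz] at h
    rw [← hSD x y z h]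

end StmtAux

/-- in the setting of Lemma `OneBB`, the one-atom extension
`L(a; range f)` (presented as a lattice `K` order-isomorphic to the subposet
`LaMSet L a (Set.range f)` of `L × 2`, with `j` the canonical embedding of
`L`) is join-semidistributive, and its new atom `p* = (⊥,1)` satisfies
`p < p* ⊔ q` and `p* < a`. -/
theorem stmt_12 (L : Type) [Lattice L] [Fintype L] [BoundedOrder L]
    (hA : AtomisticLat L) (hSD : JoinSemidistributive L)
    (p q a : L) (hp : IsAtom p) (hq : IsAtom q) (hpq : p ≠ q)
    (ha0 : a ≠ ⊥) (haAt : ¬ IsAtom a)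
    (h1 : p ≤ a ⊔ q) (h2 : ¬ p ≤ a)
    (h3 : ∀ x : L, x < a → ¬ p ≤ x ⊔ q)
    (f : L → L)
    (hf1 : ∀ x : L, ¬ q ≤ p ⊔ x → f x = x)
    (hf2 : ∀ x : L, q ≤ p ⊔ x → f x = p ⊔ x)
    (K : Type) [Lattice K] [BoundedOrder K] (e : K → L × Bool)
    (hrange : Set.range e = LaMSet L a (Set.range f))
    (hmono : ∀ x y : K, x ≤ y ↔ e x ≤ e y)
    (j : L → K)
    (hj : ∀ x : L, IsLeast {z : K | ((x, false) : L × Bool) ≤ e z} (j x)) :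
    JoinSemidistributive K ∧
    ∃ pstar : K, e pstar = ((⊥ : L), true) ∧ IsAtom pstar ∧
      j p < pstar ⊔ j q ∧ pstar < j a := by
  classical
  have bff : ∀ b : Bool, ¬ b = true → b = false := by
    intro b hb; cases b
    · rfl
    · exact absurd rfl hb
  have einj : Function.Injective e := fun x y hxy =>
    le_antisymm ((hmono x y).mpr (le_of_eq hxy)) ((hmono y x).mpr (le_of_eq hxy.symm))
  have emem : ∀ k : K,
      ((e k).2 = false ∧ ¬ a ≤ (e k).1) ∨ ((e k).2 = true ∧ (e k).1 ∈ Set.range f) := by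
    intro k
    have hh : e k ∈ LaMSet L a (Set.range f) := by rw [← hrange]; exact ⟨k, rfl⟩
    exact hh
  have esurj : ∀ t : L × Bool,
      ((t.2 = false ∧ ¬ a ≤ t.1) ∨ (t.2 = true ∧ t.1 ∈ Set.range f)) →
      ∃ k : K, e k = t := by
    intro t ht
    have hh : t ∈ LaMSet L a (Set.range f) := ht
    rw [← hrange] at hh
    exact hh
  -- characterization of sups in K
  have sup_char : ∀ (X Y : K) (t : L × Bool),
      ((t.2 = false ∧ ¬ a ≤ t.1) ∨ (t.2 = true ∧ t.1 ∈ Set.range f)) →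
      e X ≤ t → e Y ≤ t →
      (∀ s : L × Bool,
        ((s.2 = false ∧ ¬ a ≤ s.1) ∨ (s.2 = true ∧ s.1 ∈ Set.range f)) →
        e X ≤ s → e Y ≤ s → t ≤ s) →
      e (X ⊔ Y) = t := by
    intro X Y t ht hXt hYt hleast
    obtain ⟨Z, hZ⟩ := esurj t ht
    have hXZ : X ≤ Z := (hmono X Z).mpr (by rw [hZ]; exact hXt)
    have hYZ : Y ≤ Z := (hmono Y Z).mpr (by rw [hZ]; exact hYt)
    have hle : e (X ⊔ Y) ≤ t := by
      rw [← hZ]; exact (hmono _ _).mp (sup_le hXZ hYZ)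
    have hge : t ≤ e (X ⊔ Y) :=
      hleast _ (emem _) ((hmono _ _).mp le_sup_left) ((hmono _ _).mp le_sup_right)
    exact le_antisymm hle hge
  -- characterization of infs in K
  have inf_char : ∀ (X Y : K) (t : L × Bool),
      ((t.2 = false ∧ ¬ a ≤ t.1) ∨ (t.2 = true ∧ t.1 ∈ Set.range f)) →
      t ≤ e X → t ≤ e Y →
      (∀ s : L × Bool,
        ((s.2 = false ∧ ¬ a ≤ s.1) ∨ (s.2 = true ∧ s.1 ∈ Set.range f)) →
        s ≤ e X → s ≤ e Y → s ≤ t) →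
      e (X ⊓ Y) = t := by
    intro X Y t ht hXt hYt hgreat
    obtain ⟨Z, hZ⟩ := esurj t ht
    have hXZ : Z ≤ X := (hmono Z X).mpr (by rw [hZ]; exact hXt)
    have hYZ : Z ≤ Y := (hmono Z Y).mpr (by rw [hZ]; exact hYt)
    have hge : t ≤ e (X ⊓ Y) := by
      rw [← hZ]; exact (hmono _ _).mp (le_inf hXZ hYZ)
    have hle : e (X ⊓ Y) ≤ t :=
      hgreat _ (emem _) ((hmono _ _).mp inf_le_left) ((hmono _ _).mp inf_le_right)
    exact le_antisymm hle hge
  -- computation of infs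
  have inf_eq : ∀ X Y : K,
      e (X ⊓ Y) = ((e X).1 ⊓ (e Y).1, ((e X).2 && (e Y).2)) := by
    intro X Y
    apply inf_char
    · rcases emem X with ⟨hX2, hXa⟩ | ⟨hX2, hXm⟩
      · left
        refine ⟨?_, fun hle => hXa (hle.trans inf_le_left)⟩
        show ((e X).2 && (e Y).2) = false
        rw [hX2]; rfl
      · rcases emem Y with ⟨hY2, hYa⟩ | ⟨hY2, hYm⟩
        · left
          refine ⟨?_, fun hle => hYa (hle.trans inf_le_right)⟩
          show ((e X).2 && (e Y).2) = false
          rw [hY2, Bool.and_false]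
        · right
          refine ⟨?_, stmt12_inf_closed hf1 hf2 hXm hYm⟩
          show ((e X).2 && (e Y).2) = true
          rw [hX2, hY2]; rfl
    · rw [Prod.le_def]
      exact ⟨inf_le_left, Bool.and_le_left _ _⟩
    · rw [Prod.le_def]
      exact ⟨inf_le_right, Bool.and_le_right _ _⟩
    · intro s hs hsX hsY
      rw [Prod.le_def] at hsX hsY ⊢
      refine ⟨le_inf hsX.1 hsY.1, ?_⟩
      rcases hs with ⟨h2', _⟩ | ⟨h2', _⟩
      · rw [h2']; exact Bool.false_le _
      · rw [h2']
        have hx2 : (e X).2 = true := le_antisymm (Bool.le_true _) (by rw [← h2']; exact hsX.2)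
        have hy2 : (e Y).2 = true := le_antisymm (Bool.le_true _) (by rw [← h2']; exact hsY.2)
        rw [hx2, hy2]
        exact le_rfl
  -- computation of sups, "true" case
  have supT : ∀ X Y : K,
      ((e X).2 = true ∨ (e Y).2 = true ∨ a ≤ (e X).1 ⊔ (e Y).1) →
      e (X ⊔ Y) = (f ((e X).1 ⊔ (e Y).1), true) := by
    intro X Y hcond
    apply sup_char
    · right; exact ⟨rfl, ⟨_, rfl⟩⟩
    · rw [Prod.le_def]
      exact ⟨le_sup_left.trans (stmt12_f_le hf1 hf2 _), Bool.le_true _⟩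
    · rw [Prod.le_def]
      exact ⟨le_sup_right.trans (stmt12_f_le hf1 hf2 _), Bool.le_true _⟩
    · intro s hs hXs hYs
      rw [Prod.le_def] at hXs hYs ⊢
      have hs2 : s.2 = true := by
        rcases hcond with h | h | h
        · exact le_antisymm (Bool.le_true _) (by rw [← h]; exact hXs.2)
        · exact le_antisymm (Bool.le_true _) (by rw [← h]; exact hYs.2)
        · rcases hs with ⟨_, hna⟩ | ⟨h2', _⟩
          · exact absurd (h.trans (sup_le hXs.1 hYs.1)) hna
          · exact h2'
      rcases hs with ⟨h2', _⟩ | ⟨_, hm⟩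
      · rw [h2'] at hs2; exact absurd hs2 (by decide)
      · exact ⟨stmt12_f_min hf1 hf2 hm (sup_le hXs.1 hYs.1), by rw [hs2]⟩
  -- computation of sups, "false" case
  have supF : ∀ X Y : K, (e X).2 = false → (e Y).2 = false →
      ¬ a ≤ (e X).1 ⊔ (e Y).1 →
      e (X ⊔ Y) = ((e X).1 ⊔ (e Y).1, false) := by
    intro X Y hX2 hY2 hna
    apply sup_char
    · left; exact ⟨rfl, hna⟩
    · rw [Prod.le_def]; exact ⟨le_sup_left, hX2.le⟩
    · rw [Prod.le_def]; exact ⟨le_sup_right, hY2.le⟩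
    · intro s _ hXs hYs
      rw [Prod.le_def] at hXs hYs ⊢
      exact ⟨sup_le hXs.1 hYs.1, Bool.false_le _⟩
  -- basic facts about f and a
  have hqnp : ¬ q ≤ p := by
    intro h
    rcases hp.le_iff.mp h with h' | h'
    · exact hq.1 h'
    · exact hpq h'.symm
  have fbot : f (⊥ : L) = ⊥ := hf1 ⊥ (by rw [sup_bot_eq]; exact hqnp)
  have fq : f q = p ⊔ q := hf2 q le_sup_right
  have fa : f a = a := by
    apply hf1
    intro hqa
    apply h2
    have e1 : a ⊔ p = a ⊔ q :=
      le_antisymm (sup_le le_sup_left h1)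
        (sup_le le_sup_left (hqa.trans (sup_le le_sup_right le_sup_left)))
    have e2 := hSD a p q e1
    rw [stmt12_atom_inf hp hq hpq, sup_bot_eq] at e2
    calc p ≤ a ⊔ p := le_sup_right
    _ = a := e2
  have hab : ¬ a ≤ (⊥ : L) := fun h => ha0 (le_bot_iff.mp h)
  have hap : ¬ a ≤ p := by
    intro h
    rcases hp.le_iff.mp h with h' | h'
    · exact ha0 h'
    · exact haAt (by rw [h']; exact hp)
  have haq : ¬ a ≤ q := by
    intro h
    rcases hq.le_iff.mp h with h' | h'
    · exact ha0 h'
    · exact haAt (by rw [h']; exact hq)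
  -- image of ⊥ and of j
  have ebot : e ⊥ = ((⊥ : L), false) := by
    obtain ⟨z, hz⟩ := esurj ((⊥ : L), false) (Or.inl ⟨rfl, hab⟩)
    refine le_antisymm ?_ ?_
    · rw [← hz]; exact (hmono _ _).mp bot_le
    · rw [Prod.le_def]; exact ⟨bot_le, Bool.false_le _⟩
  have ejf : ∀ x : L, ¬ a ≤ x → e (j x) = (x, false) := by
    intro x hax
    obtain ⟨z, hz⟩ := esurj (x, false) (Or.inl ⟨rfl, hax⟩)
    refine le_antisymm ?_ (hj x).1
    rw [← hz]
    exact (hmono _ _).mp ((hj x).2 (show ((x, false) : L × Bool) ≤ e z by rw [hz]))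
  have ejp : e (j p) = (p, false) := ejf p hap
  have ejq : e (j q) = (q, false) := ejf q haq
  have eja : e (j a) = (a, true) := by
    obtain ⟨z, hz⟩ := esurj (a, true) (Or.inr ⟨rfl, ⟨a, fa⟩⟩)
    have hle : e (j a) ≤ (a, true) := by
      rw [← hz]
      refine (hmono _ _).mp ((hj a).2 ?_)
      show ((a, false) : L × Bool) ≤ e z
      rw [hz, Prod.le_def]
      exact ⟨le_rfl, Bool.false_le _⟩
    have hge : ((a, false) : L × Bool) ≤ e (j a) := (hj a).1
    rw [Prod.le_def] at hle hge
    have h1' : (e (j a)).1 = a := le_antisymm hle.1 hge.1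
    have h2' : (e (j a)).2 = true := by
      rcases emem (j a) with ⟨_, hna⟩ | ⟨hb, _⟩
      · exact absurd h1'.ge hna
      · exact hb
    exact Prod.ext h1' h2'
  -- the new atom
  obtain ⟨pstar, hps⟩ := esurj ((⊥ : L), true) (Or.inr ⟨rfl, ⟨⊥, fbot⟩⟩)
  have hatom : IsAtom pstar := by
    constructor
    · intro h
      rw [h, ebot] at hps
      have hct : (false : Bool) = true := congrArg Prod.snd hps
      exact Bool.noConfusion hct
    · intro b hb
      have hble : e b ≤ ((⊥ : L), true) := by
        rw [← hps]; exact (hmono _ _).mp hb.le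
      have hbne : e b ≠ ((⊥ : L), true) := by
        rw [← hps]; exact fun hh => hb.ne (einj hh)
      rw [Prod.le_def] at hble
      have hb1 : (e b).1 = ⊥ := le_bot_iff.mp hble.1
      have hb2 : (e b).2 = false := by
        by_contra hcf
        have ht : (e b).2 = true := by
          cases hcc : (e b).2
          · exact absurd hcc hcf
          · rfl
        exact hbne (Prod.ext hb1 ht)
      apply einj
      rw [ebot]
      exact Prod.ext hb1 hb2
  have hsup : e (pstar ⊔ j q) = (p ⊔ q, true) := by
    have h' := supT pstar (j q) (Or.inl (by rw [hps]))
    rw [hps, ejq] at h'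
    simpa [bot_sup_eq, fq] using h'
  have hlt1 : j p < pstar ⊔ j q := by
    have hle : j p ≤ pstar ⊔ j q := (hmono _ _).mpr (by
      rw [ejp, hsup, Prod.le_def]
      exact ⟨le_sup_left, Bool.false_le _⟩)
    have hne : j p ≠ pstar ⊔ j q := by
      intro hh
      rw [hh, hsup] at ejp
      have hct : (true : Bool) = false := congrArg Prod.snd ejp
      exact Bool.noConfusion hct
    exact lt_of_le_of_ne hle hne
  have hlt2 : pstar < j a := by
    have hle : pstar ≤ j a := (hmono _ _).mpr (by
      rw [hps, eja, Prod.le_def]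
      exact ⟨bot_le, le_rfl⟩)
    have hne : pstar ≠ j a := by
      intro hh
      rw [hh, eja] at hps
      exact ha0 (congrArg Prod.fst hps)
    exact lt_of_le_of_ne hle hne
  -- join-semidistributivity of K
  have hJSD : JoinSemidistributive K := by
    intro X Y Z hXYZ
    apply einj
    have hinfYZ := inf_eq Y Z
    by_cases hc : (e X).2 = true ∨ (e Y).2 = true ∨ a ≤ (e X).1 ⊔ (e Y).1
    · have hXY := supT X Y hc
      have hc' : (e X).2 = true ∨ (e Z).2 = true ∨ a ≤ (e X).1 ⊔ (e Z).1 := by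
        by_contra hcc
        push_neg at hcc
        have hXZ := supF X Z (bff _ hcc.1) (bff _ hcc.2.1) hcc.2.2
        rw [hXYZ, hXZ] at hXY
        have hct : (false : Bool) = true := congrArg Prod.snd hXY
        exact Bool.noConfusion hct
      have hXZ := supT X Z hc'
      have h0 : ((f ((e X).1 ⊔ (e Y).1) : L), (true : Bool)) =
          (f ((e X).1 ⊔ (e Z).1), true) := by
        rw [← hXY, ← hXZ, hXYZ]
      have hff : f ((e X).1 ⊔ (e Y).1) = f ((e X).1 ⊔ (e Z).1) :=
        congrArg Prod.fst h0
      have hcrux := stmt12_crux hSD hf1 hf2 hff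
      have hcond : (e X).2 = true ∨ (e (Y ⊓ Z)).2 = true ∨
          a ≤ (e X).1 ⊔ (e (Y ⊓ Z)).1 := by
        rcases hc with h | h | h
        · exact Or.inl h
        · rcases hc' with h' | h' | h'
          · exact Or.inl h'
          · right; left
            rw [hinfYZ]
            show ((e Y).2 && (e Z).2) = true
            rw [h, h']; rfl
          · right; right
            have haf : a ≤ f ((e X).1 ⊔ ((e Y).1 ⊓ (e Z).1)) := by
              rw [hcrux, hff]
              exact h'.trans (stmt12_f_le hf1 hf2 _)
            have hkey := stmt12_key hSD hp hq hpq h1 h2 hf1 hf2 haf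
            rw [hinfYZ]
            exact hkey
        · right; right
          have haf : a ≤ f ((e X).1 ⊔ ((e Y).1 ⊓ (e Z).1)) := by
            rw [hcrux]
            exact h.trans (stmt12_f_le hf1 hf2 _)
          have hkey := stmt12_key hSD hp hq hpq h1 h2 hf1 hf2 haf
          rw [hinfYZ]
          exact hkey
      have hXm := supT X (Y ⊓ Z) hcond
      rw [hXY, hXm, hinfYZ]
      exact congrArg (fun w => ((w : L), (true : Bool))) hcrux.symm
    · push_neg at hc
      have hX2 := bff _ hc.1
      have hY2 := bff _ hc.2.1
      have hna := hc.2.2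
      have hXY := supF X Y hX2 hY2 hna
      have hno : ¬ ((e X).2 = true ∨ (e Z).2 = true ∨ a ≤ (e X).1 ⊔ (e Z).1) := by
        intro hcc
        have hXZ := supT X Z hcc
        rw [hXYZ, hXZ] at hXY
        have hct : (false : Bool) = true := (congrArg Prod.snd hXY).symm
        exact Bool.noConfusion hct
      push_neg at hno
      have hZ2 := bff _ hno.2.1
      have hnaz := hno.2.2
      have hXZ := supF X Z hX2 hZ2 hnaz
      have h0 : (((e X).1 ⊔ (e Y).1, (false : Bool)) : L × Bool) =
          ((e X).1 ⊔ (e Z).1, false) := by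
        rw [← hXY, ← hXZ, hXYZ]
      have hxy_eq : (e X).1 ⊔ (e Y).1 = (e X).1 ⊔ (e Z).1 :=
        congrArg Prod.fst h0
      have hsd := hSD _ _ _ hxy_eq
      have hinf2 : (e (Y ⊓ Z)).2 = false := by
        rw [hinfYZ]
        show ((e Y).2 && (e Z).2) = false
        rw [hY2]; rfl
      have hinf1 : (e (Y ⊓ Z)).1 = (e Y).1 ⊓ (e Z).1 := by rw [hinfYZ]
      have hXm := supF X (Y ⊓ Z) hX2 hinf2 (by rw [hinf1, ← hsd]; exact hna)
      rw [hXY, hXm, hinf1, ← hsd]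
  exact ⟨hJSD, pstar, hps, hatom, hlt1, hlt2⟩
end

section
/- In every finite, atomistic, join-semidistributive lattice L, every element a has a least (with respect to containment) set X of atoms with a = ⋁X; this minimal decomposition ∂(a) consists exactly of the atoms of L that are join-prime in the interval [0,a]. -/
section Aux
variable {L : Type} [Lattice L] [OrderBot L] [DecidableEq L]

lemma sd_gen (hSD : JoinSemidistributive L) (Z : Finset L) :
    ∀ x y : L, x ⊔ y = x ⊔ Z.sup id →
      x ⊔ y = x ⊔ Z.sup (fun z => y ⊓ z) := by
  induction Z using Finset.induction with
  | empty => intro x y h; simpa using h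
  | @insert z Z' hz ih =>
    intro x y h
    simp only [Finset.sup_insert, id_eq] at h
    have hle : Z'.sup id ≤ x ⊔ y := by
      rw [h]; exact le_sup_of_le_right le_sup_right
    have e1 : (x ⊔ Z'.sup id) ⊔ y = x ⊔ y := by
      rw [sup_right_comm]; exact sup_eq_left.mpr hle
    have e2 : (x ⊔ Z'.sup id) ⊔ z = x ⊔ y := by
      rw [h]; ac_rfl
    have h1 : (x ⊔ Z'.sup id) ⊔ y = (x ⊔ Z'.sup id) ⊔ z := by rw [e1, e2]
    have h2 := hSD _ _ _ h1
    have e3 : (x ⊔ (y ⊓ z)) ⊔ y = x ⊔ y := by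
      rw [sup_right_comm]
      exact sup_eq_left.mpr (le_sup_of_le_right inf_le_left)
    have e4 : (x ⊔ (y ⊓ z)) ⊔ Z'.sup id = x ⊔ y := by
      have : (x ⊔ (y ⊓ z)) ⊔ Z'.sup id = (x ⊔ Z'.sup id) ⊔ (y ⊓ z) := by ac_rfl
      rw [this, ← h2, e1]
    have h3 : (x ⊔ (y ⊓ z)) ⊔ y = (x ⊔ (y ⊓ z)) ⊔ Z'.sup id := by rw [e3, e4]
    have h4 := ih _ _ h3
    rw [e3] at h4
    simp only [Finset.sup_insert]
    rw [← sup_assoc]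
    exact h4

lemma atom_inf_eq_bot {y z : L} (hy : IsAtom y) (hz : IsAtom z) (hne : y ≠ z) :
    y ⊓ z = ⊥ := by
  rcases hy.le_iff.mp (inf_le_left : y ⊓ z ≤ y) with h | h
  · exact h
  · exfalso
    have hyz : y ≤ z := h ▸ inf_le_right
    rcases hz.le_iff.mp hyz with h' | h'
    · exact hy.1 h'
    · exact hne h'

lemma inter_decomp (hSD : JoinSemidistributive L) :
    ∀ n (Y Z : Finset L), Y.card = n → (∀ p ∈ Y, IsAtom p) → (∀ p ∈ Z, IsAtom p) →
      Y.sup id = Z.sup id → Y.sup id = (Y ∩ Z).sup id := by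
  intro n
  induction n with
  | zero =>
    intro Y Z hc _ _ _
    rw [Finset.card_eq_zero] at hc
    subst hc; simp
  | succ n ih =>
    intro Y Z hc hY hZ hsup
    by_cases hsub : Y ⊆ Z
    · rw [Finset.inter_eq_left.mpr hsub]
    · obtain ⟨y, hyY, hyZ⟩ := Finset.not_subset.mp hsub
      have hxy : Y.sup id = (Y.erase y).sup id ⊔ y := by
        conv_lhs => rw [← Finset.insert_erase hyY]
        simp only [Finset.sup_insert, id_eq]
        exact sup_comm _ _
      have hxle : (Y.erase y).sup id ≤ Y.sup id := Finset.sup_le fun q hq =>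
        Finset.le_sup (f := id) (Finset.mem_of_mem_erase hq)
      have h1 : (Y.erase y).sup id ⊔ y = (Y.erase y).sup id ⊔ Z.sup id := by
        rw [← hxy, ← hsup]
        exact (sup_eq_right.mpr hxle).symm
      have h2 := sd_gen hSD Z _ y h1
      have hbot : Z.sup (fun z => y ⊓ z) = ⊥ := by
        apply le_antisymm _ bot_le
        apply Finset.sup_le
        intro z hzZ
        exact (atom_inf_eq_bot (hY y hyY) (hZ z hzZ)
          (fun h => hyZ (h ▸ hzZ))).le
      rw [hbot, sup_bot_eq] at h2
      have hYx : Y.sup id = (Y.erase y).sup id := by rw [hxy, h2]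
      have hcard : (Y.erase y).card = n := by
        rw [Finset.card_erase_of_mem hyY, hc]; rfl
      have hres := ih (Y.erase y) Z hcard
        (fun p hp => hY p (Finset.mem_of_mem_erase hp)) hZ
        (by rw [← hYx, hsup])
      have hinter : (Y.erase y) ∩ Z = Y ∩ Z := by
        ext q
        simp only [Finset.mem_inter, Finset.mem_erase]
        constructor
        · rintro ⟨⟨_, h1⟩, h2⟩; exact ⟨h1, h2⟩
        · rintro ⟨h1, h2⟩
          exact ⟨⟨fun h => hyZ (h ▸ h2), h1⟩, h2⟩
      rw [hYx, hres, hinter]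

lemma prime_le_sup {a p : L} (hp : IsAtom p)
    (hprime : ∀ x y : L, x ≤ a → y ≤ a → p ≤ x ⊔ y → p ≤ x ∨ p ≤ y) :
    ∀ S : Finset L, (∀ s ∈ S, s ≤ a) → p ≤ S.sup id → ∃ s ∈ S, p ≤ s := by
  intro S
  induction S using Finset.induction with
  | empty =>
    intro _ h
    simp only [Finset.sup_empty, le_bot_iff] at h
    exact absurd h hp.1
  | @insert s S' hs ih =>
    intro hle h
    simp only [Finset.sup_insert, id_eq] at h
    rcases hprime s (S'.sup id) (hle s (Finset.mem_insert_self s S'))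
        (Finset.sup_le fun q hq => hle q (Finset.mem_insert_of_mem hq)) h with h' | h'
    · exact ⟨s, Finset.mem_insert_self s S', h'⟩
    · obtain ⟨q, hq, hq'⟩ := ih (fun q hq => hle q (Finset.mem_insert_of_mem hq)) h'
      exact ⟨q, Finset.mem_insert_of_mem hq, hq'⟩

end Aux

theorem stmt_15 (L : Type) [Lattice L] [Fintype L] [OrderBot L]
    [DecidableEq L]
    (hA : AtomisticLat L) (hSD : JoinSemidistributive L) (a : L) :
    ∃ X : Finset L, (∀ p ∈ X, IsAtom p) ∧ a = X.sup id ∧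
      (∀ Y : Finset L, (∀ p ∈ Y, IsAtom p) → a = Y.sup id → X ⊆ Y) ∧
      (∀ p : L, p ∈ X ↔ IsAtom p ∧ p ≤ a ∧
        ∀ x y : L, x ≤ a → y ≤ a → p ≤ x ⊔ y → p ≤ x ∨ p ≤ y) := by
  haveI : DecidableRel ((· ≤ ·) : L → L → Prop) :=
    fun a b => decidable_of_iff (a ⊓ b = a) inf_eq_left
  haveI : DecidableRel ((· < ·) : L → L → Prop) :=
    fun a b => decidable_of_iff (a ≤ b ∧ ¬ b ≤ a) lt_iff_le_not_ge.symm
  haveI : DecidablePred (IsAtom : L → Prop) :=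
    fun p => decidable_of_iff (p ≠ ⊥ ∧ ∀ b, b < p → b = ⊥) Iff.rfl
  have hdecomp : ∀ b : L, ∃ U : Finset L, (∀ p ∈ U, IsAtom p) ∧ b = U.sup id ∧
      ∀ p ∈ U, p ≤ b := by
    intro b
    obtain ⟨s, hs1, hs2⟩ := hA b
    refine ⟨(Set.toFinite s).toFinset, ?_, ?_, ?_⟩
    · intro p hp; exact hs1 p ((Set.Finite.mem_toFinset _).mp hp)
    · apply le_antisymm
      · exact hs2.2 fun p hp =>
          Finset.le_sup (f := id) ((Set.Finite.mem_toFinset _).mpr hp)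
      · exact Finset.sup_le fun p hp => hs2.1 ((Set.Finite.mem_toFinset _).mp hp)
    · intro p hp; exact hs2.1 ((Set.Finite.mem_toFinset _).mp hp)
  set Ds : Finset (Finset L) :=
    Finset.univ.filter (fun Y : Finset L => (∀ p ∈ Y, IsAtom p) ∧ a = Y.sup id) with hDs
  have hmemDs : ∀ Y : Finset L, Y ∈ Ds ↔ (∀ p ∈ Y, IsAtom p) ∧ a = Y.sup id := by
    intro Y; simp [hDs]
  have hne : Ds.Nonempty := by
    obtain ⟨U, hU1, hU2, _⟩ := hdecomp a
    exact ⟨U, (hmemDs U).mpr ⟨hU1, hU2⟩⟩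
  obtain ⟨D, hD, hmin⟩ := Finset.exists_min_image Ds Finset.card hne
  obtain ⟨hDatom, hDsup⟩ := (hmemDs D).mp hD
  have hsubset : ∀ Y : Finset L, (∀ p ∈ Y, IsAtom p) → a = Y.sup id → D ⊆ Y := by
    intro Y hY1 hY2
    have h := inter_decomp hSD D.card D Y rfl hDatom hY1 (by rw [← hDsup, ← hY2])
    have hDY : D ∩ Y ∈ Ds := (hmemDs _).mpr
      ⟨fun p hp => hDatom p (Finset.mem_of_mem_inter_left hp), by rw [hDsup, h]⟩
    have hcard := hmin _ hDY
    have heq : D ∩ Y = D :=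
      Finset.eq_of_subset_of_card_le Finset.inter_subset_left hcard
    intro p hp
    exact Finset.mem_of_mem_inter_right (heq.symm ▸ hp : p ∈ D ∩ Y)
  have hDle : ∀ q ∈ D, q ≤ a := fun q hq => hDsup ▸ Finset.le_sup (f := id) hq
  refine ⟨D, hDatom, hDsup, hsubset, ?_⟩
  intro p
  constructor
  · intro hpD
    refine ⟨hDatom p hpD, hDle p hpD, ?_⟩
    intro x y hxa hya hpxy
    obtain ⟨U, hU1, hU2, hU3⟩ := hdecomp x
    obtain ⟨V, hV1, hV2, hV3⟩ := hdecomp y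
    set Z : Finset L := (D.erase p) ∪ U ∪ V with hZ
    have hZatom : ∀ q ∈ Z, IsAtom q := by
      intro q hq
      simp only [hZ, Finset.mem_union] at hq
      rcases hq with (hq | hq) | hq
      · exact hDatom q (Finset.mem_of_mem_erase hq)
      · exact hU1 q hq
      · exact hV1 q hq
    have hZsup : a = Z.sup id := by
      apply le_antisymm
      · have hsplit : D.sup id = p ⊔ (D.erase p).sup id := by
          conv_lhs => rw [← Finset.insert_erase hpD]
          simp only [Finset.sup_insert, id_eq]
        have hstep : a ≤ (D.erase p).sup id ⊔ (x ⊔ y) := by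
          rw [hDsup, hsplit]
          exact sup_le (le_sup_of_le_right hpxy) le_sup_left
        refine le_trans hstep (sup_le ?_ (sup_le ?_ ?_))
        · exact Finset.sup_le fun q hq =>
            Finset.le_sup (f := id) (by simp [hZ, hq])
        · rw [hU2]
          exact Finset.sup_le fun q hq =>
            Finset.le_sup (f := id) (by simp [hZ, hq])
        · rw [hV2]
          exact Finset.sup_le fun q hq =>
            Finset.le_sup (f := id) (by simp [hZ, hq])
      · apply Finset.sup_le
        intro q hq
        simp only [hZ, Finset.mem_union] at hq
        rcases hq with (hq | hq) | hq
        · exact hDle q (Finset.mem_of_mem_erase hq)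
        · exact le_trans (hU3 q hq) hxa
        · exact le_trans (hV3 q hq) hya
    have hpZ : p ∈ Z := hsubset Z hZatom hZsup hpD
    simp only [hZ, Finset.mem_union, Finset.mem_erase] at hpZ
    rcases hpZ with (⟨hne, _⟩ | hq) | hq
    · exact absurd rfl hne
    · exact Or.inl (hU3 p hq)
    · exact Or.inr (hV3 p hq)
  · rintro ⟨hp, hpa, hprime⟩
    obtain ⟨q, hqD, hpq⟩ := prime_le_sup hp hprime D hDle (hDsup ▸ hpa)
    rcases (hDatom q hqD).le_iff.mp hpq with h | h
    · exact absurd h hp.1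
    · exact h ▸ hqD
end

section
/- There exists a finite, atomistic, join-semidistributive lattice that cannot be embedded into any finite atomistic biatomic join-semidistributive lattice. Specifically, the lattice L of all intersections with E = {a,b,c,u,v} of convex subsets of ℚ², where a = (0,3), b = (-2,0), c = (2,0), u = (-1,1), v = (1,1), is finite, atomistic, join-semidistributive, and fails the quasi-identity θ (taking the indicated five elements as singletons witnesses the failure with u ≰ a), hence admits no such embedding. -/
/-- The five points of the configuration. -/
def Pa : ℚ × ℚ := (0, 3)
def Pb : ℚ × ℚ := (-2, 0)
def Pc : ℚ × ℚ := (2, 0)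
def Pu : ℚ × ℚ := (-1, 1)
def Pv : ℚ × ℚ := (1, 1)

def Efive : Set (ℚ × ℚ) := {Pa, Pb, Pc, Pu, Pv}

def pt : Fin 5 → ℚ × ℚ
  | 0 => Pa | 1 => Pb | 2 => Pc | 3 => Pu | 4 => Pv

def Cl (X : Finset (Fin 5)) : Prop :=
  (0 ∈ X → 1 ∈ X → 4 ∈ X → 3 ∈ X) ∧
  (0 ∈ X → 2 ∈ X → 3 ∈ X → 4 ∈ X) ∧
  (0 ∈ X → 1 ∈ X → 2 ∈ X → 3 ∈ X ∧ 4 ∈ X)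

instance : DecidablePred Cl := fun X => by unfold Cl; exact instDecidableAnd

def clf (Z : Finset (Fin 5)) : Finset (Fin 5) :=
  (if 0 ∈ Z ∧ 1 ∈ Z ∧ (4 ∈ Z ∨ 2 ∈ Z) then {3} else ∅) ∪
  (if 0 ∈ Z ∧ 2 ∈ Z ∧ (3 ∈ Z ∨ 1 ∈ Z) then {4} else ∅) ∪ Z

lemma clf_closed : ∀ Z, Cl (clf Z) := by decide
lemma subset_clf : ∀ Z, Z ⊆ clf Z := by decide
lemma clf_min : ∀ Z W, Cl W → Z ⊆ W → clf Z ⊆ W := by decide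
lemma Cl_inter : ∀ X Y, Cl X → Cl Y → Cl (X ∩ Y) := by decide
lemma Cl_empty : Cl ∅ := by decide

def CoL5 : Type := {X : Finset (Fin 5) // Cl X}

instance : DecidableEq CoL5 := Subtype.instDecidableEq
instance : Fintype CoL5 := Subtype.fintype _

instance : Lattice CoL5 where
  le X Y := X.1 ⊆ Y.1
  le_refl X := Finset.Subset.refl _
  le_trans X Y Z := Finset.Subset.trans
  le_antisymm X Y h h' := Subtype.ext (Finset.Subset.antisymm h h')
  sup X Y := ⟨clf (X.1 ∪ Y.1), clf_closed _⟩
  le_sup_left X Y := (Finset.subset_union_left).trans (subset_clf _)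
  le_sup_right X Y := (Finset.subset_union_right).trans (subset_clf _)
  sup_le X Y Z h h' := clf_min _ _ Z.2 (Finset.union_subset h h')
  inf X Y := ⟨X.1 ∩ Y.1, Cl_inter _ _ X.2 Y.2⟩
  inf_le_left X Y := Finset.inter_subset_left
  inf_le_right X Y := Finset.inter_subset_right
  le_inf X Y Z h h' := Finset.subset_inter h h'

instance : OrderBot CoL5 where
  bot := ⟨∅, Cl_empty⟩
  bot_le X := Finset.empty_subset _

instance : DecidableRel ((· ≤ ·) : CoL5 → CoL5 → Prop) :=
  fun X Y => decidable_of_iff (X.1 ⊆ Y.1) Iff.rfl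

instance : DecidableRel ((· < ·) : CoL5 → CoL5 → Prop) :=
  fun X Y => decidable_of_iff (X ≤ Y ∧ ¬ Y ≤ X) lt_iff_le_not_ge.symm

lemma Cl_single : ∀ i : Fin 5, Cl {i} := by decide

def atomOf (i : Fin 5) : CoL5 := ⟨{i}, Cl_single i⟩

instance (a : CoL5) : Decidable (IsAtom a) :=
  decidable_of_iff (a ≠ ⊥ ∧ ∀ b, b < a → b = ⊥) Iff.rfl

lemma isAtom_atomOf : ∀ i, IsAtom (atomOf i) := by decide

def exF (W : Finset (Fin 5)) : Finset (Fin 5) :=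
  W.filter (fun p => p ∉ clf (W.erase p))

lemma clf_of_closed : ∀ W, Cl W → clf W = W := by decide

lemma not_extreme : ∀ A : Finset (Fin 5), ∀ p ∈ clf A, p ∉ A →
    p ∈ clf ((clf A).erase p) := by decide

lemma clf_exF : ∀ W : Finset (Fin 5), clf (exF W) = clf W := by decide

lemma clf_mono {A B : Finset (Fin 5)} (h : A ⊆ B) : clf A ⊆ clf B :=
  clf_min _ _ (clf_closed B) (h.trans (subset_clf B))

lemma jsd5 : JoinSemidistributive CoL5 := by
  intro x y z h
  have hval : clf (x.1 ∪ y.1) = clf (x.1 ∪ z.1) := congrArg Subtype.val h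
  apply Subtype.ext
  show clf (x.1 ∪ y.1) = clf (x.1 ∪ (y.1 ∩ z.1))
  set W := clf (x.1 ∪ y.1) with hW
  have hWc : Cl W := clf_closed _
  have hE : exF W ⊆ x.1 ∪ (y.1 ∩ z.1) := by
    rw [Finset.union_inter_distrib_left]
    intro p hp
    rw [Finset.mem_inter]
    have hpW : p ∈ W := Finset.mem_of_mem_filter _ hp
    have hpx : p ∉ clf (W.erase p) := (Finset.mem_filter.mp hp).2
    constructor
    · by_contra hpxy
      exact hpx (not_extreme (x.1 ∪ y.1) p (hW ▸ hpW) hpxy)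
    · by_contra hpxz
      have : p ∈ clf ((clf (x.1 ∪ z.1)).erase p) :=
        not_extreme (x.1 ∪ z.1) p (by rw [← hval]; exact hpW) hpxz
      rw [← hval] at this
      exact hpx this
  apply Finset.Subset.antisymm
  · calc W = clf W := (clf_of_closed _ hWc).symm
      _ = clf (exF W) := (clf_exF W).symm
      _ ⊆ clf (x.1 ∪ (y.1 ∩ z.1)) := clf_mono hE
  · exact clf_mono (Finset.union_subset_union_right Finset.inter_subset_left)

lemma theta_facts :
    atomOf 3 ≤ atomOf 0 ⊔ atomOf 1 ⊔ atomOf 4 ∧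
    atomOf 4 ≤ atomOf 0 ⊔ atomOf 2 ⊔ atomOf 3 ∧
    (atomOf 0 ⊔ atomOf 3) ⊓ (atomOf 1 ⊔ atomOf 2) ≤ atomOf 0 ∧
    (atomOf 0 ⊔ atomOf 1) ⊓ (atomOf 0 ⊔ atomOf 3) = atomOf 0 ∧
    (atomOf 0 ⊔ atomOf 2) ⊓ (atomOf 0 ⊔ atomOf 4) = atomOf 0 ∧
    (atomOf 0 ⊔ atomOf 3) ⊓ (atomOf 0 ⊔ atomOf 4) = atomOf 0 ∧
    ¬ atomOf 3 ≤ atomOf 0 := by decide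

lemma pt_inj : Function.Injective pt := by decide

lemma sep_hull {S : Set (ℚ × ℚ)} (c1 c2 r : ℚ)
    (hS : ∀ p ∈ S, c1 * p.1 + c2 * p.2 ≤ r)
    {q : ℚ × ℚ} (hq : r < c1 * q.1 + c2 * q.2) : q ∉ convexHull ℚ S := by
  intro hmem
  have hlin : IsLinearMap ℚ (fun p : ℚ × ℚ => c1 * p.1 + c2 * p.2) := by
    constructor
    · intro p q; simp only [Prod.fst_add, Prod.snd_add]; ring
    · intro c p; simp only [Prod.smul_fst, Prod.smul_snd, smul_eq_mul]; ring
  have hconv : Convex ℚ {p : ℚ × ℚ | c1 * p.1 + c2 * p.2 ≤ r} :=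
    convex_halfSpace_le hlin r
  have h2 : convexHull ℚ S ⊆ {p : ℚ × ℚ | c1 * p.1 + c2 * p.2 ≤ r} :=
    convexHull_min (fun p hp => hS p hp) hconv
  exact absurd (h2 hmem) (not_le.mpr hq)

lemma comb3 {C : Set (ℚ × ℚ)} (hC : Convex ℚ C) {p q r w : ℚ × ℚ}
    (hp : p ∈ C) (hq : q ∈ C) (hr : r ∈ C) (α β γ : ℚ)
    (hα : 0 ≤ α) (hβ : 0 ≤ β) (hγ : 0 < γ)
    (hsum : α + β + γ = 1) (hw : w = α • p + β • q + γ • r) : w ∈ C := by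
  have hβγ : 0 < β + γ := by linarith
  have h1 : (β / (β + γ)) • q + (γ / (β + γ)) • r ∈ C :=
    hC hq hr (by positivity) (by positivity) (by field_simp)
  have h2 : α • p + (β + γ) • ((β / (β + γ)) • q + (γ / (β + γ)) • r) ∈ C :=
    hC hp h1 hα (by linarith) (by linarith)
  have : w = α • p + (β + γ) • ((β / (β + γ)) • q + (γ / (β + γ)) • r) := by
    rw [hw, smul_add, smul_smul, smul_smul]
    rw [mul_div_cancel₀ _ (ne_of_gt hβγ), mul_div_cancel₀ _ (ne_of_gt hβγ), add_assoc]
  rwa [this]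

lemma mem_u_abv {C : Set (ℚ × ℚ)} (hC : Convex ℚ C)
    (ha : Pa ∈ C) (hb : Pb ∈ C) (hv : Pv ∈ C) : Pu ∈ C :=
  comb3 hC ha hb hv (2/7) (4/7) (1/7) (by norm_num) (by norm_num) (by norm_num)
    (by norm_num)
    (by simp only [Pa, Pb, Pv, Pu, Prod.smul_mk, Prod.mk_add_mk, smul_eq_mul]; norm_num)

lemma mem_v_acu {C : Set (ℚ × ℚ)} (hC : Convex ℚ C)
    (ha : Pa ∈ C) (hc : Pc ∈ C) (hu : Pu ∈ C) : Pv ∈ C :=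
  comb3 hC ha hc hu (2/7) (4/7) (1/7) (by norm_num) (by norm_num) (by norm_num)
    (by norm_num)
    (by simp only [Pa, Pc, Pu, Pv, Prod.smul_mk, Prod.mk_add_mk, smul_eq_mul]; norm_num)

lemma mem_u_abc {C : Set (ℚ × ℚ)} (hC : Convex ℚ C)
    (ha : Pa ∈ C) (hb : Pb ∈ C) (hc : Pc ∈ C) : Pu ∈ C :=
  comb3 hC ha hb hc (1/3) (7/12) (1/12) (by norm_num) (by norm_num) (by norm_num)
    (by norm_num)
    (by simp only [Pa, Pb, Pc, Pu, Prod.smul_mk, Prod.mk_add_mk, smul_eq_mul]; norm_num)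

lemma mem_v_abc {C : Set (ℚ × ℚ)} (hC : Convex ℚ C)
    (ha : Pa ∈ C) (hb : Pb ∈ C) (hc : Pc ∈ C) : Pv ∈ C :=
  comb3 hC ha hb hc (1/3) (1/12) (7/12) (by norm_num) (by norm_num) (by norm_num)
    (by norm_num)
    (by simp only [Pa, Pb, Pc, Pv, Prod.smul_mk, Prod.mk_add_mk, smul_eq_mul]; norm_num)

lemma mem_Efive_iff {p : ℚ × ℚ} : p ∈ Efive ↔ ∃ j : Fin 5, pt j = p := by
  constructor
  · intro hp
    rcases hp with h | h | h | h | h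
    exacts [⟨0, h.symm⟩, ⟨1, h.symm⟩, ⟨2, h.symm⟩, ⟨3, h.symm⟩, ⟨4, h ▸ rfl⟩]
  · rintro ⟨j, rfl⟩
    fin_cases j <;> simp [Efive, pt]


def eF (X : CoL5) : Set (ℚ × ℚ) := ↑(X.1.image pt)

lemma mem_eF {X : CoL5} {q : ℚ × ℚ} : q ∈ eF X ↔ ∃ i ∈ X.1, pt i = q := by
  simp [eF]

lemma eF_subset_E (X : CoL5) : eF X ⊆ Efive := by
  intro q hq
  obtain ⟨i, _, rfl⟩ := mem_eF.mp hq
  exact mem_Efive_iff.mpr ⟨i, rfl⟩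

lemma ptv : (pt 0 = Pa ∧ pt 1 = Pb ∧ pt 2 = Pc ∧ pt 3 = Pu ∧ pt 4 = Pv) :=
  ⟨rfl, rfl, rfl, rfl, rfl⟩

lemma hull_trace (X : CoL5) : convexHull ℚ (eF X) ∩ Efive = eF X := by
  apply Set.Subset.antisymm
  · rintro p ⟨hp, hpE⟩
    obtain ⟨j, rfl⟩ := mem_Efive_iff.mp hpE
    by_contra hj'
    have hj : j ∉ X.1 := fun h => hj' (mem_eF.mpr ⟨j, h, rfl⟩)
    have bound : ∀ (c1 c2 r : ℚ), (∀ i ∈ X.1, c1 * (pt i).1 + c2 * (pt i).2 ≤ r) →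
        (r < c1 * (pt j).1 + c2 * (pt j).2) → False := by
      intro c1 c2 r hb hr
      refine sep_hull c1 c2 r ?_ hr hp
      intro q hq
      obtain ⟨i, hi, rfl⟩ := mem_eF.mp hq
      exact hb i hi
    have hX := X.2
    fin_cases j
    · -- j = 0 : a
      refine bound 0 1 1 ?_ (by norm_num [pt, Pa])
      intro i hi
      fin_cases i
      · exact absurd hi hj
      all_goals norm_num [pt, Pa, Pb, Pc, Pu, Pv]
    · -- j = 1 : b
      refine bound (-1) 0 1 ?_ (by norm_num [pt, Pb])
      intro i hi
      fin_cases i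
      · norm_num [pt, Pa]
      · exact absurd hi hj
      all_goals norm_num [pt, Pa, Pb, Pc, Pu, Pv]
    · -- j = 2 : c
      refine bound 1 0 1 ?_ (by norm_num [pt, Pc])
      intro i hi
      fin_cases i
      · norm_num [pt, Pa]
      · norm_num [pt, Pb]
      · exact absurd hi hj
      all_goals norm_num [pt, Pa, Pb, Pc, Pu, Pv]
    · -- j = 3 : u
      by_cases h0 : (0 : Fin 5) ∈ X.1
      · by_cases h1 : (1 : Fin 5) ∈ X.1
        · -- X ⊆ {0,1}
          have h4 : (4 : Fin 5) ∉ X.1 := fun h => hj (hX.1 h0 h1 h)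
          have h2 : (2 : Fin 5) ∉ X.1 := fun h => hj ((hX.2.2 h0 h1 h).1)
          refine bound 3 (-2) (-6) ?_ (by norm_num [pt, Pu])
          intro i hi
          fin_cases i
          · norm_num [pt, Pa]
          · norm_num [pt, Pb]
          · exact absurd hi h2
          · exact absurd hi hj
          · exact absurd hi h4
        · -- 1 ∉ X : X ⊆ {0,2,4}
          refine bound (-1) 0 0 ?_ (by norm_num [pt, Pu])
          intro i hi
          fin_cases i
          · norm_num [pt, Pa]
          · exact absurd hi h1
          · norm_num [pt, Pc]
          · exact absurd hi hj
          · norm_num [pt, Pv]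
      · -- 0 ∉ X : X ⊆ {1,2,4}
        refine bound (-1) 3 2 ?_ (by norm_num [pt, Pu])
        intro i hi
        fin_cases i
        · exact absurd hi h0
        · norm_num [pt, Pb]
        · norm_num [pt, Pc]
        · exact absurd hi hj
        · norm_num [pt, Pv]
    · -- j = 4 : v
      by_cases h0 : (0 : Fin 5) ∈ X.1
      · by_cases h2 : (2 : Fin 5) ∈ X.1
        · -- X ⊆ {0,2}
          have h3m : (3 : Fin 5) ∉ X.1 := fun h => hj (hX.2.1 h0 h2 h)
          have h1m : (1 : Fin 5) ∉ X.1 := fun h => hj ((hX.2.2 h0 h h2).2)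
          refine bound (-3) (-2) (-6) ?_ (by norm_num [pt, Pv])
          intro i hi
          fin_cases i
          · norm_num [pt, Pa]
          · exact absurd hi h1m
          · norm_num [pt, Pc]
          · exact absurd hi h3m
          · exact absurd hi hj
        · -- 2 ∉ X : X ⊆ {0,1,3}
          refine bound 1 0 0 ?_ (by norm_num [pt, Pv])
          intro i hi
          fin_cases i
          · norm_num [pt, Pa]
          · norm_num [pt, Pb]
          · exact absurd hi h2
          · norm_num [pt, Pu]
          · exact absurd hi hj
      · -- 0 ∉ X : X ⊆ {1,2,3}
        refine bound 1 3 2 ?_ (by norm_num [pt, Pv])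
        intro i hi
        fin_cases i
        · exact absurd hi h0
        · norm_num [pt, Pb]
        · norm_num [pt, Pc]
        · norm_num [pt, Pu]
        · exact absurd hi hj
  · intro p hp
    exact ⟨subset_convexHull ℚ _ hp, eF_subset_E X hp⟩

lemma eF_inj : Function.Injective eF := by
  intro X Y h
  exact Subtype.ext (Finset.image_injective pt_inj (Finset.coe_injective h))

lemma le_iff_eF (X Y : CoL5) : X ≤ Y ↔ eF X ⊆ eF Y := by
  constructor
  · intro h
    exact Finset.coe_subset.mpr (Finset.image_subset_image h)
  · intro h
    exact (Finset.image_subset_image_iff pt_inj).mp (Finset.coe_subset.mp h)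

lemma range_eF : Set.range eF = {S | ∃ C : Set (ℚ × ℚ), Convex ℚ C ∧ S = C ∩ Efive} := by
  ext S
  constructor
  · rintro ⟨X, rfl⟩
    exact ⟨convexHull ℚ (eF X), convex_convexHull ℚ _, (hull_trace X).symm⟩
  · rintro ⟨C, hC, rfl⟩
    classical
    set Xf : Finset (Fin 5) := Finset.univ.filter (fun i => pt i ∈ C) with hXf
    have hm : ∀ i : Fin 5, i ∈ Xf ↔ pt i ∈ C := by
      intro i; simp [hXf]
    have hCl : Cl Xf := by
      refine ⟨?_, ?_, ?_⟩
      · intro h0 h1 h4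
        exact (hm 3).mpr (mem_u_abv hC ((hm 0).mp h0) ((hm 1).mp h1) ((hm 4).mp h4))
      · intro h0 h2 h3
        exact (hm 4).mpr (mem_v_acu hC ((hm 0).mp h0) ((hm 2).mp h2) ((hm 3).mp h3))
      · intro h0 h1 h2
        exact ⟨(hm 3).mpr (mem_u_abc hC ((hm 0).mp h0) ((hm 1).mp h1) ((hm 2).mp h2)),
               (hm 4).mpr (mem_v_abc hC ((hm 0).mp h0) ((hm 1).mp h1) ((hm 2).mp h2))⟩
    refine ⟨⟨Xf, hCl⟩, ?_⟩
    ext p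
    constructor
    · intro hp
      obtain ⟨i, hi, rfl⟩ := mem_eF.mp hp
      exact ⟨(hm i).mp hi, mem_Efive_iff.mpr ⟨i, rfl⟩⟩
    · rintro ⟨hpC, hpE⟩
      obtain ⟨j, rfl⟩ := mem_Efive_iff.mp hpE
      exact mem_eF.mpr ⟨j, (hm j).mpr hpC, rfl⟩

lemma atomistic5 : ∀ x : CoL5, ∃ s : Set CoL5, (∀ p ∈ s, IsAtom p) ∧ IsLUB s x := by
  intro x
  refine ⟨{p | ∃ i ∈ x.1, p = atomOf i}, ?_, ?_, ?_⟩
  · rintro p ⟨i, _, rfl⟩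
    exact isAtom_atomOf i
  · rintro p ⟨i, hi, rfl⟩
    exact Finset.singleton_subset_iff.mpr hi
  · intro y hy
    intro i hi
    exact Finset.singleton_subset_iff.mp (hy ⟨i, hi, rfl⟩)

lemma eF_atomOf : eF (atomOf 0) = {Pa} ∧ eF (atomOf 1) = {Pb} ∧ eF (atomOf 2) = {Pc} ∧
    eF (atomOf 3) = {Pu} ∧ eF (atomOf 4) = {Pv} := by
  refine ⟨?_, ?_, ?_, ?_, ?_⟩ <;> simp [eF, atomOf, pt]

theorem theta_holds {M : Type} [Lattice M] [OrderBot M] [Fintype M]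
    (hA : AtomisticLat M) (hB : IsBiatomicLat M) (hJ : JoinSemidistributive M)
    (a b c u v : M) (h1 : u ≤ a ⊔ b ⊔ v) (h2 : v ≤ a ⊔ c ⊔ u)
    (h3 : (a ⊔ u) ⊓ (b ⊔ c) ≤ a) (h4 : (a ⊔ b) ⊓ (a ⊔ u) = a)
    (h5 : (a ⊔ c) ⊓ (a ⊔ v) = a) (h6 : (a ⊔ u) ⊓ (a ⊔ v) = a) : u ≤ a := by
  by_contra hua
  classical
  -- u is not ⊥
  have hu_ne : u ≠ ⊥ := fun h => hua (h ▸ bot_le)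
  set U : M → Prop := fun p => IsAtom p ∧ p ≤ a ⊔ u ∧ ¬ p ≤ a with hU
  set V : M → Prop := fun p => IsAtom p ∧ p ≤ a ⊔ v ∧ ¬ p ≤ a with hV
  -- an initial bad atom under u
  have hp0 : ∃ p, U p := by
    obtain ⟨s, hs_at, hs_lub⟩ := hA u
    have : ∃ p ∈ s, ¬ p ≤ a := by
      by_contra h
      push_neg at h
      exact hua (hs_lub.2 h)
    obtain ⟨p, hps, hpa⟩ := this
    exact ⟨p, hs_at p hps, (hs_lub.1 hps).trans le_sup_right, hpa⟩
  -- disjointness of U and V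
  have hUV : ∀ p, U p → V p → False := by
    rintro p ⟨hat, hpu, hpa⟩ ⟨-, hpv, -⟩
    exact hpa (h6 ▸ le_inf hpu hpv)
  -- step from U to V
  have stepU : ∀ p, U p → ∃ q, V q ∧ p ≤ (b ⊔ c) ⊔ q := by
    rintro p ⟨hat, hpu, hpa⟩
    have hb : b ≠ ⊥ := by
      rintro rfl
      have huav : u ≤ a ⊔ v := by simpa using h1
      exact hpa (h6 ▸ le_inf hpu (hpu.trans (sup_le le_sup_left (huav.trans
        (sup_le le_sup_left le_sup_right)))))
    have hav : a ⊔ v ≠ ⊥ := by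
      intro h
      have ha : a = ⊥ := le_bot_iff.mp (h ▸ le_sup_left (b := v))
      have hv : v = ⊥ := le_bot_iff.mp (h ▸ le_sup_right (a := a))
      have hub : u ≤ b := by
        have := h1; rw [ha, hv] at this; simpa using this
      refine hpa ((le_inf hpu (hpu.trans (sup_le (ha ▸ bot_le) (hub.trans le_sup_left)))).trans h3)
    have hple : p ≤ b ⊔ (a ⊔ v) := by
      refine hpu.trans (sup_le ?_ (h1.trans ?_))
      · exact le_sup_of_le_right le_sup_left
      · exact sup_le (sup_le (le_sup_of_le_right le_sup_left) le_sup_left)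
          (le_sup_of_le_right le_sup_right)
    obtain ⟨x, y, hxat, hxb, hyat, hyav, hpxy⟩ := hB.2 p b (a ⊔ v) hat hb hav hple
    by_cases hya : y ≤ a
    · exfalso
      have hpab : p ≤ a ⊔ b := hpxy.trans (sup_le (hxb.trans le_sup_right) (hya.trans le_sup_left))
      exact hpa (h4 ▸ le_inf hpab hpu)
    · exact ⟨y, ⟨hyat, hyav, hya⟩,
        hpxy.trans (sup_le ((hxb.trans le_sup_left).trans le_sup_left) le_sup_right)⟩
  -- step from V to U
  have stepV : ∀ q, V q → ∃ p, U p ∧ q ≤ (b ⊔ c) ⊔ p := by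
    rintro q ⟨hat, hqv, hqa⟩
    have hc : c ≠ ⊥ := by
      rintro rfl
      have hvau : v ≤ a ⊔ u := by simpa using h2
      exact hqa (h6 ▸ le_inf (hqv.trans (sup_le le_sup_left (hvau.trans
        (sup_le le_sup_left le_sup_right)))) hqv)
    have hau : a ⊔ u ≠ ⊥ := by
      intro h
      exact hu_ne (le_bot_iff.mp (h ▸ le_sup_right (a := a)))
    have hqle : q ≤ c ⊔ (a ⊔ u) := by
      refine hqv.trans (sup_le ?_ (h2.trans ?_))
      · exact le_sup_of_le_right le_sup_left
      · exact sup_le (sup_le (le_sup_of_le_right le_sup_left) le_sup_left)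
          (le_sup_of_le_right le_sup_right)
    obtain ⟨x, w, hxat, hxc, hwat, hwau, hqxw⟩ := hB.2 q c (a ⊔ u) hat hc hau hqle
    by_cases hwa : w ≤ a
    · exfalso
      have hqac : q ≤ a ⊔ c := hqxw.trans (sup_le (hxc.trans le_sup_right) (hwa.trans le_sup_left))
      exact hqa (h5 ▸ le_inf hqac hqv)
    · exact ⟨w, ⟨hwat, hwau, hwa⟩,
        hqxw.trans (sup_le ((hxc.trans le_sup_right).trans le_sup_left) le_sup_right)⟩
  -- combined step
  have step : ∀ x, U x ∨ V x → ∃ y, (U y ∨ V y) ∧ x ≤ (b ⊔ c) ⊔ y ∧ x ≠ y ∧ (U x ∨ U y) := by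
    rintro x (hx | hx)
    · obtain ⟨q, hq, hle⟩ := stepU x hx
      refine ⟨q, Or.inr hq, hle, ?_, Or.inl hx⟩
      rintro rfl; exact hUV x hx hq
    · obtain ⟨p, hp, hle⟩ := stepV x hx
      refine ⟨p, Or.inl hp, hle, ?_, Or.inr hp⟩
      rintro rfl; exact hUV x hp hx
  -- build the sequence
  obtain ⟨p0, hp0U⟩ := hp0
  let T := {x : M // U x ∨ V x}
  let f : T → T := fun x => ⟨Classical.choose (step x.1 x.2), (Classical.choose_spec (step x.1 x.2)).1⟩
  let seq : ℕ → T := fun n => f^[n] ⟨p0, Or.inl hp0U⟩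
  have hseq_succ : ∀ n, seq (n + 1) = f (seq n) := by
    intro n
    simp only [seq, Function.iterate_succ_apply']
  have hrel : ∀ n, (seq n).1 ≤ (b ⊔ c) ⊔ (seq (n+1)).1 ∧ (seq n).1 ≠ (seq (n+1)).1 ∧
      (U (seq n).1 ∨ U (seq (n+1)).1) := by
    intro n
    rw [hseq_succ n]
    exact (Classical.choose_spec (step (seq n).1 (seq n).2)).2
  -- the monotone chain
  let g : ℕ → M := fun n => (b ⊔ c) ⊔ (seq n).1
  have hg_mono : Monotone g := by
    apply monotone_nat_of_le_succ
    intro n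
    exact sup_le le_sup_left (hrel n).1
  have hstab : ∃ n, g n = g (n + 1) := by
    have : ¬ Function.Injective g := by
      intro hinj
      exact (Finite.of_injective g hinj).false
    rw [Function.not_injective_iff] at this
    obtain ⟨i, j, hij, hne⟩ := this
    rcases lt_trichotomy i j with h | h | h
    · exact ⟨i, le_antisymm (hg_mono (Nat.le_succ i))
        ((hij ▸ hg_mono (Nat.succ_le_of_lt h) : g (i+1) ≤ g i))⟩
    · exact absurd h hne
    · exact ⟨j, le_antisymm (hg_mono (Nat.le_succ j))
        ((hij.symm ▸ hg_mono (Nat.succ_le_of_lt h) : g (j+1) ≤ g j))⟩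
  obtain ⟨n, hn⟩ := hstab
  -- apply join-semidistributivity
  have hxy : (seq n).1 ⊓ (seq (n+1)).1 = ⊥ := by
    have hne := (hrel n).2.1
    have hat : IsAtom (seq n).1 := by
      rcases (seq n).2 with h | h
      exacts [h.1, h.1]
    have hat' : IsAtom (seq (n+1)).1 := by
      rcases (seq (n+1)).2 with h | h
      exacts [h.1, h.1]
    by_cases hle : (seq n).1 ≤ (seq (n+1)).1
    · exact absurd (hat'.2 _ (lt_of_le_of_ne hle hne)) hat.1
    · have hlt : (seq n).1 ⊓ (seq (n+1)).1 < (seq n).1 :=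
        lt_of_le_of_ne inf_le_left (fun h => hle (h ▸ inf_le_right))
      exact hat.2 _ hlt
  have hkey : (b ⊔ c) ⊔ (seq n).1 = b ⊔ c := by
    have := hJ (b ⊔ c) (seq n).1 (seq (n+1)).1 hn
    rwa [hxy, sup_bot_eq] at this
  have hsn : (seq n).1 ≤ b ⊔ c := sup_eq_left.mp hkey
  have hsn' : (seq (n+1)).1 ≤ b ⊔ c := by
    have : (b ⊔ c) ⊔ (seq (n+1)).1 = b ⊔ c := by
      have := hn.symm.trans hkey
      exact this
    exact sup_eq_left.mp this
  rcases (hrel n).2.2 with hUx | hUy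
  · exact hUx.2.2 ((le_inf hUx.2.1 hsn).trans h3)
  · exact hUy.2.2 ((le_inf hUy.2.1 hsn').trans h3)


/-- the lattice `Co(ℚ², {a,b,c,u,v})` of traces on the
five-point set `Efive` of convex subsets of `ℚ²` (presented as a lattice
`CoL` order-isomorphic, via `e`, to the inclusion-ordered family of such
traces) is a finite atomistic join-semidistributive lattice, the singletons
of the five points witness the failure of the quasi-identity `θ` (with
`u ≰ a`), and consequently `CoL` admits no lattice embedding into any
finite atomistic biatomic join-semidistributive lattice. -/
theorem stmt_16 :
    ∃ (CoL : Type) (_ : Lattice CoL) (_ : Fintype CoL) (_ : OrderBot CoL)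
      (e : CoL → Set (ℚ × ℚ)),
      Function.Injective e ∧
      Set.range e = {X | ∃ C : Set (ℚ × ℚ), Convex ℚ C ∧ X = C ∩ Efive} ∧
      (∀ X Y : CoL, X ≤ Y ↔ e X ⊆ e Y) ∧
      AtomisticLat CoL ∧ JoinSemidistributive CoL ∧
      (∃ a b c u v : CoL,
        e a = {Pa} ∧ e b = {Pb} ∧ e c = {Pc} ∧ e u = {Pu} ∧ e v = {Pv} ∧
        u ≤ a ⊔ b ⊔ v ∧ v ≤ a ⊔ c ⊔ u ∧
        (a ⊔ u) ⊓ (b ⊔ c) ≤ a ∧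
        (a ⊔ b) ⊓ (a ⊔ u) = a ∧ (a ⊔ c) ⊓ (a ⊔ v) = a ∧
        (a ⊔ u) ⊓ (a ⊔ v) = a ∧
        ¬ u ≤ a) ∧
      ∀ (M : Type) (_ : Lattice M) (_ : Fintype M) (_ : OrderBot M),
        AtomisticLat M → IsBiatomicLat M → JoinSemidistributive M →
        ¬ ∃ g : CoL → M, Function.Injective g ∧
            (∀ x y : CoL, g (x ⊔ y) = g x ⊔ g y) ∧
            (∀ x y : CoL, g (x ⊓ y) = g x ⊓ g y) := by
  obtain ⟨f1, f2, f3, f4, f5, f6, f7⟩ := theta_facts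
  refine ⟨CoL5, inferInstance, inferInstance, inferInstance, eF, eF_inj, range_eF,
    le_iff_eF, atomistic5, jsd5,
    ⟨atomOf 0, atomOf 1, atomOf 2, atomOf 3, atomOf 4,
      eF_atomOf.1, eF_atomOf.2.1, eF_atomOf.2.2.1, eF_atomOf.2.2.2.1, eF_atomOf.2.2.2.2,
      f1, f2, f3, f4, f5, f6, f7⟩, ?_⟩
  intro M iL iF iB hAt hBi hJ hex
  obtain ⟨g, hginj, hgsup, hginf⟩ := hex
  have hmono : ∀ x y : CoL5, x ≤ y ↔ g x ≤ g y := by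
    intro x y
    constructor
    · intro h
      have : g x ⊔ g y = g y := by rw [← hgsup, sup_eq_right.mpr h]
      exact sup_eq_right.mp this
    · intro h
      have : g (x ⊓ y) = g x := by rw [hginf, inf_eq_left.mpr h]
      exact inf_eq_left.mp (hginj this)
  have h1' : g (atomOf 3) ≤ g (atomOf 0) ⊔ g (atomOf 1) ⊔ g (atomOf 4) := by
    rw [← hgsup, ← hgsup]
    exact (hmono _ _).mp f1
  have h2' : g (atomOf 4) ≤ g (atomOf 0) ⊔ g (atomOf 2) ⊔ g (atomOf 3) := by
    rw [← hgsup, ← hgsup]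
    exact (hmono _ _).mp f2
  have h3' : (g (atomOf 0) ⊔ g (atomOf 3)) ⊓ (g (atomOf 1) ⊔ g (atomOf 2)) ≤ g (atomOf 0) := by
    rw [← hgsup, ← hgsup, ← hginf]
    exact (hmono _ _).mp f3
  have h4' : (g (atomOf 0) ⊔ g (atomOf 1)) ⊓ (g (atomOf 0) ⊔ g (atomOf 3)) = g (atomOf 0) := by
    rw [← hgsup, ← hgsup, ← hginf]
    exact congrArg g f4
  have h5' : (g (atomOf 0) ⊔ g (atomOf 2)) ⊓ (g (atomOf 0) ⊔ g (atomOf 4)) = g (atomOf 0) := by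
    rw [← hgsup, ← hgsup, ← hginf]
    exact congrArg g f5
  have h6' : (g (atomOf 0) ⊔ g (atomOf 3)) ⊓ (g (atomOf 0) ⊔ g (atomOf 4)) = g (atomOf 0) := by
    rw [← hgsup, ← hgsup, ← hginf]
    exact congrArg g f6
  have := theta_holds hAt hBi hJ (g (atomOf 0)) (g (atomOf 1)) (g (atomOf 2))
    (g (atomOf 3)) (g (atomOf 4)) h1' h2' h3' h4' h5' h6'
  exact f7 ((hmono _ _).mpr this)
end

section
/- Let M be a noetherian, atomistic, biatomic, join-semidistributive lattice with zero, and let a, b, c, u, v ∈ M satisfy the premise of θ with u ≰ a and v ≰ a. Let S be the set of atoms of M not below a. Then there exist finite joins u₀, v₀ of elements of S such that u₀ ≤ u, v₀ ≤ v, u₀ ≤ a ∨ b ∨ v₀, and v₀ ≤ a ∨ c ∨ u₀. -/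
theorem stmt_17 (M : Type) [Lattice M] [OrderBot M]
    (hN : NoetherianOrd M) (hA : AtomisticLat M) (hB : IsBiatomicLat M)
    (hSD : JoinSemidistributive M)
    (a b c u v : M)
    (h1 : u ≤ a ⊔ b ⊔ v) (h2 : v ≤ a ⊔ c ⊔ u)
    (h3 : (a ⊔ u) ⊓ (b ⊔ c) ≤ a)
    (h4 : (a ⊔ b) ⊓ (a ⊔ u) = a)
    (h5 : (a ⊔ c) ⊓ (a ⊔ v) = a)
    (h6 : (a ⊔ u) ⊓ (a ⊔ v) = a)
    (hu : ¬ u ≤ a) (hv : ¬ v ≤ a) :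
    ∃ U V : Finset M, U.Nonempty ∧ V.Nonempty ∧
      (∀ p ∈ U, IsAtom p ∧ ¬ p ≤ a) ∧ (∀ p ∈ V, IsAtom p ∧ ¬ p ≤ a) ∧
      U.sup id ≤ u ∧ V.sup id ≤ v ∧
      U.sup id ≤ a ⊔ b ⊔ V.sup id ∧ V.sup id ≤ a ⊔ c ⊔ U.sup id := by
  classical
  obtain ⟨hAtEx, hBi⟩ := hB
  -- an atom below w not below a exists whenever ¬ w ≤ a
  have atom_ex : ∀ w : M, ¬ w ≤ a → ∃ p, IsAtom p ∧ p ≤ w ∧ ¬ p ≤ a := by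
    intro w hw
    obtain ⟨s, hs1, hs2⟩ := hA w
    by_contra h
    push_neg at h
    refine hw (hs2.2 ?_)
    intro p hp
    by_contra hpa
    exact hpa (h p (hs1 p hp) (hs2.1 hp))
  -- closure: maximal finite join of atoms below w not below a
  have closure : ∀ w : M, ¬ w ≤ a → ∃ W : Finset M, W.Nonempty ∧
      (∀ p ∈ W, IsAtom p ∧ p ≤ w ∧ ¬ p ≤ a) ∧
      (∀ p, IsAtom p → p ≤ w → ¬ p ≤ a → p ≤ W.sup id) := by
    intro w hw
    obtain ⟨p0, hp0, hp0w, hp0a⟩ := atom_ex w hw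
    set s : Set M := { m | ∃ W : Finset M, W.Nonempty ∧
      (∀ p ∈ W, IsAtom p ∧ p ≤ w ∧ ¬ p ≤ a) ∧ W.sup id = m } with hs
    have hne : s.Nonempty := by
      refine ⟨p0, {p0}, ⟨p0, Finset.mem_singleton_self p0⟩, ?_, by simp⟩
      intro p hp
      rw [Finset.mem_singleton] at hp
      subst hp
      exact ⟨hp0, hp0w, hp0a⟩
    obtain ⟨m, ⟨W, hWne, hWmem, hWsup⟩, hmax⟩ := hN s hne
    refine ⟨W, hWne, hWmem, ?_⟩
    intro p hp hpw hpa
    have hin : (insert p W).sup id ∈ s := by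
      refine ⟨insert p W, ⟨p, Finset.mem_insert_self p W⟩, ?_, rfl⟩
      intro q hq
      rcases Finset.mem_insert.mp hq with h | h
      · subst h; exact ⟨hp, hpw, hpa⟩
      · exact hWmem q h
    have hle : m ≤ (insert p W).sup id := by
      rw [Finset.sup_insert, ← hWsup]; exact le_sup_right
    have heq : m = (insert p W).sup id :=
      (hle.lt_or_eq).resolve_left (hmax _ hin)
    have hpm : p ≤ (insert p W).sup id := Finset.le_sup (f := id) (Finset.mem_insert_self p W)
    rw [hWsup, heq]
    exact hpm
  obtain ⟨U, hUne, hUmem, hUcl⟩ := closure u hu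
  obtain ⟨V, hVne, hVmem, hVcl⟩ := closure v hv
  have hvne : v ≠ ⊥ := fun h => hv (h ▸ bot_le)
  have hune : u ≠ ⊥ := fun h => hu (h ▸ bot_le)
  refine ⟨U, V, hUne, hVne, fun p hp => ⟨(hUmem p hp).1, (hUmem p hp).2.2⟩,
    fun p hp => ⟨(hVmem p hp).1, (hVmem p hp).2.2⟩,
    Finset.sup_le fun p hp => (hUmem p hp).2.1,
    Finset.sup_le fun p hp => (hVmem p hp).2.1, ?_, ?_⟩
  · refine Finset.sup_le ?_
    intro p hp
    obtain ⟨hpAt, hpu, hpa⟩ := hUmem p hp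
    have habne : a ⊔ b ≠ ⊥ := by
      intro h
      have hpv : p ≤ v := by
        have := hpu.trans h1
        rwa [h, bot_sup_eq] at this
      exact hpa (h6 ▸ le_inf (hpu.trans le_sup_right) (hpv.trans le_sup_right))
    obtain ⟨x, y, _, hxab, hyAt, hyv, hpxy⟩ :=
      hBi p (a ⊔ b) v hpAt habne hvne (hpu.trans h1)
    have hya : ¬ y ≤ a := by
      intro hya
      have hpab : p ≤ a ⊔ b := hpxy.trans (sup_le hxab (hya.trans le_sup_left))
      exact hpa (h4 ▸ le_inf hpab (hpu.trans le_sup_right))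
    have hyV : y ≤ V.sup id := hVcl y hyAt hyv hya
    exact hpxy.trans (sup_le (hxab.trans le_sup_left) (hyV.trans le_sup_right))
  · refine Finset.sup_le ?_
    intro q hq
    obtain ⟨hqAt, hqv, hqa⟩ := hVmem q hq
    have hacne : a ⊔ c ≠ ⊥ := by
      intro h
      have hqu : q ≤ u := by
        have := hqv.trans h2
        rwa [h, bot_sup_eq] at this
      exact hqa (h6 ▸ le_inf (hqu.trans le_sup_right) (hqv.trans le_sup_right))
    obtain ⟨x, y, _, hxac, hyAt, hyu, hqxy⟩ :=
      hBi q (a ⊔ c) u hqAt hacne hune (hqv.trans h2)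
    have hya : ¬ y ≤ a := by
      intro hya
      have hqac : q ≤ a ⊔ c := hqxy.trans (sup_le hxac (hya.trans le_sup_left))
      exact hqa (h5 ▸ le_inf hqac (hqv.trans le_sup_right))
    have hyU : y ≤ U.sup id := hUcl y hyAt hyu hya
    exact hqxy.trans (sup_le (hxac.trans le_sup_left) (hyU.trans le_sup_right))
end

section
/- Let L be a finite atomistic lattice, (a;M) an extension pair with closure operator f, and suppose L(a;M) is constructed with new atom p*. For all x, y ∈ L: p* ≤ x holds in L(a;M) if and only if a ≤ x, and x ≤ p* ∨ y holds in L(a;M) if and only if x ≤ f(y). -/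
/-- in `L(a;M)` (presented as a lattice `K` order-isomorphic to
the subposet `LaMSet L a M` of `L × 2`, with canonical embedding `j` and new
atom `p*`), for all `x, y ∈ L`: `p* ≤ x` iff `a ≤ x`, and `x ≤ p* ⊔ y` iff
`x ≤ f y`, where `f` is the closure operator associated with `M`. -/
theorem stmt_19 (L : Type) [Lattice L] [Fintype L] [BoundedOrder L]
    (hA : AtomisticLat L) (a : L) (M : Set L) (h : ExtensionPair L a M)
    (f : L → L) (hf : ∀ x : L, IsLeast {y : L | y ∈ M ∧ x ≤ y} (f x))
    (K : Type) [Lattice K] (e : K → L × Bool)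
    (hrange : Set.range e = LaMSet L a M)
    (hmono : ∀ x y : K, x ≤ y ↔ e x ≤ e y)
    (j : L → K)
    (hj : ∀ x : L, IsLeast {z : K | ((x, false) : L × Bool) ≤ e z} (j x))
    (pstar : K) (hpstar : e pstar = ((⊥ : L), true)) :
    ∀ x y : L, (pstar ≤ j x ↔ a ≤ x) ∧ (j x ≤ pstar ⊔ j y ↔ x ≤ f y) := by
  obtain ⟨ha0, hana, hM, hbotM, hup⟩ := h
  -- compute e (j x)
  have hje1 : ∀ x : L, a ≤ x → e (j x) = (x, true) := by
    intro x hax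
    have h3 := (hj x).1
    have hmem : e (j x) ∈ LaMSet L a M := by rw [← hrange]; exact ⟨j x, rfl⟩
    have hxM : x ∈ M := hup x hax
    have hxm : ((x, true) : L × Bool) ∈ LaMSet L a M := Or.inr ⟨rfl, hxM⟩
    rw [← hrange] at hxm
    obtain ⟨z, hz⟩ := hxm
    have h1 : ((x, false) : L × Bool) ≤ e z := by
      rw [hz]; exact ⟨le_refl x, Bool.false_le _⟩
    have h4 : e (j x) ≤ (x, true) := hz ▸ (hmono _ _).1 ((hj x).2 h1)
    have hfst : (e (j x)).1 = x := le_antisymm h4.1 h3.1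
    have hsnd : (e (j x)).2 = true := by
      rcases hmem with ⟨_, h6⟩ | ⟨h5, _⟩
      · exact absurd (hfst.symm ▸ hax) h6
      · exact h5
    exact Prod.ext hfst hsnd
  have hje2 : ∀ x : L, ¬ a ≤ x → e (j x) = (x, false) := by
    intro x hax
    have h3 := (hj x).1
    have hxm : ((x, false) : L × Bool) ∈ LaMSet L a M := Or.inl ⟨rfl, hax⟩
    rw [← hrange] at hxm
    obtain ⟨z, hz⟩ := hxm
    have h4 : e (j x) ≤ (x, false) := hz ▸ (hmono _ _).1 ((hj x).2 (le_of_eq hz.symm))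
    exact le_antisymm h4 h3
  have hjfst : ∀ x : L, (e (j x)).1 = x := by
    intro x
    by_cases hax : a ≤ x
    · rw [hje1 x hax]
    · rw [hje2 x hax]
  -- compute e (pstar ⊔ j y)
  have hsup : ∀ y : L, e (pstar ⊔ j y) = (f y, true) := by
    intro y
    obtain ⟨⟨hfyM, hyfy⟩, hfleast⟩ := hf y
    have hfm : ((f y, true) : L × Bool) ∈ LaMSet L a M := Or.inr ⟨rfl, hfyM⟩
    rw [← hrange] at hfm
    obtain ⟨w, hw⟩ := hfm
    have h1 : pstar ≤ w := (hmono _ _).2 (by rw [hpstar, hw]; exact ⟨bot_le, le_refl _⟩)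
    have h2 : j y ≤ w := (hmono _ _).2 (by
      rw [hw]
      exact ⟨(hjfst y).symm ▸ hyfy, Bool.le_true _⟩)
    have h3 : e (pstar ⊔ j y) ≤ (f y, true) := hw ▸ (hmono _ _).1 (sup_le h1 h2)
    have h4 : e pstar ≤ e (pstar ⊔ j y) := (hmono _ _).1 le_sup_left
    have h5 : e (j y) ≤ e (pstar ⊔ j y) := (hmono _ _).1 le_sup_right
    rw [hpstar] at h4
    have hmem : e (pstar ⊔ j y) ∈ LaMSet L a M := by rw [← hrange]; exact ⟨_, rfl⟩
    have hsnd : (e (pstar ⊔ j y)).2 = true := by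
      rcases hmem with ⟨h6, _⟩ | ⟨h6, _⟩
      · have := h4.2; rw [h6] at this; exact absurd this (by simp)
      · exact h6
    have hMmem : (e (pstar ⊔ j y)).1 ∈ M := by
      rcases hmem with ⟨h6, _⟩ | ⟨_, h6⟩
      · rw [h6] at hsnd; exact absurd hsnd (by simp)
      · exact h6
    have hge : ((f y, true) : L × Bool) ≤ e (pstar ⊔ j y) :=
      ⟨hfleast ⟨hMmem, le_trans (le_of_eq (hjfst y).symm) h5.1⟩, le_of_eq hsnd.symm⟩
    exact le_antisymm h3 hge
  intro x y
  constructor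
  · constructor
    · intro hle
      have hle2 := (hmono _ _).1 hle
      by_contra hax
      rw [hpstar, hje2 x hax] at hle2
      exact absurd hle2.2 (by simp)
    · intro hax
      refine (hmono _ _).2 ?_
      rw [hpstar, hje1 x hax]
      exact ⟨bot_le, le_refl _⟩
  · constructor
    · intro hle
      have hle2 := (hmono _ _).1 hle
      rw [hsup] at hle2
      exact (hjfst x) ▸ hle2.1
    · intro hxfy
      refine (hmono _ _).2 ?_
      rw [hsup]
      exact ⟨(hjfst x).symm ▸ hxfy, Bool.le_true _⟩
end
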